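/- arXiv:1502.07777 — 5 statements merged into one kernel-verified Lean document; each statement's English description precedes it below -/
import Mathlib

section
/- Let H, τ, σ, T > 0 and let (Ω, F, P) be a probability space. Let X = (X(t))_{t∈ℝ} be a jointly measurable real-valued process with continuous sample paths and X(0) = 0 a.s., such that: (i) the processes X⁺ = (X(t))_{t≥0} and X⁻ = (X(−t))_{t≥0} are independent and have the same finite-dimensional distributions; (ii) each of X⁺, X⁻ is self-similar of index H, i.e. for every a > 0 the finite-dimensional distributions of (X(a t))_{t≥0} coincide with those of (a^H X(t))_{t≥0}; (iii) there are constants 0 < c₂ ≤ c₁ and ε₀ > 0 such that exp(−c₁ ε^{−τ}) ≤ P( sup_{0≤t≤1} |X(t)| ≤ ε ) ≤ exp(−c₂ ε^{−τ}) for all ε ∈ (0, ε₀]. Let E = (E(t))_{0≤t≤T} be a jointly measurable real-valued process with continuous sample paths and E(0) = 0, independent of X, such that there exist constants 0 < k₁ ≤ k₂ and ε₁ > 0 with k₁ ε^σ ≤ P( sup_{0≤t≤T} |E(t)| ≤ ε ) ≤ k₂ ε^σ for all ε ∈ (0, ε₁]. Then there exist constants 0 < K₁ ≤ K₂ and ε₂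 > 0 such that K₁ ε^{σ/H} ≤ P( sup_{0≤t≤T} |X(E(t))| ≤ ε ) ≤ K₂ ε^{σ/H} for all ε ∈ (0, ε₂]. -/
open MeasureTheory ProbabilityTheory Filter Topology

lemma aux_quad {x : ℝ} (hx : 0 ≤ x) : x^2/4 ≤ Real.exp x := by
  have h1 := Real.add_one_le_exp (x/2)
  have h2 : Real.exp (x/2) * Real.exp (x/2) = Real.exp x := by
    rw [← Real.exp_add]; ring_nf
  nlinarith [Real.exp_pos (x/2)]

lemma aux_dense_seq : ∃ e : ℕ → ℝ, (∀ n, e n ∈ Set.Icc (0:ℝ) 1) ∧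
    Set.Icc (0:ℝ) 1 ⊆ closure (Set.range e) := by
  have hD : (Set.Icc (0:ℝ) 1 ∩ Set.range ((↑) : ℚ → ℝ)).Countable :=
    (Set.countable_range _).mono Set.inter_subset_right
  have hne : (Set.Icc (0:ℝ) 1 ∩ Set.range ((↑) : ℚ → ℝ)).Nonempty :=
    ⟨1, by simp, ⟨1, by norm_num⟩⟩
  obtain ⟨e, he⟩ := hD.exists_eq_range hne
  refine ⟨e, fun n => ?_, fun t ht => ?_⟩
  · have : e n ∈ Set.range e := ⟨n, rfl⟩
    rw [← he] at this; exact this.1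
  · rw [← he]
    rw [mem_closure_iff_seq_limit]
    have := Rat.denseRange_cast (𝕜 := ℝ)
    obtain ⟨x, hx, hlim⟩ := mem_closure_iff_seq_limit.mp (this t)
    set f : ℝ → ℝ := fun z => max 0 (min 1 z) with hf
    refine ⟨fun n => f (x n), fun n => ?_, ?_⟩
    · constructor
      · constructor
        · exact le_max_left _ _
        · simp only [hf]; rcases le_total 1 (x n) with h | h <;> simp [min_def, max_def] <;> split_ifs <;> linarith
      · obtain ⟨q, hq⟩ := hx n
        exact ⟨max 0 (min 1 q), by push_cast [← hq]; rfl⟩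
    · have hfc : Continuous f := continuous_const.max (continuous_const.min continuous_id)
      have : f t = t := by
        simp only [hf]; rw [min_eq_right ht.2, max_eq_right ht.1]
      simpa [this, Function.comp_def] using (hfc.tendsto t).comp hlim

lemma aux_dense_abs_le {f : ℝ → ℝ} {a ε : ℝ} (ha : 0 < a)
    (hf : ContinuousOn f (Set.Icc 0 a)) {e : ℕ → ℝ}
    (he : ∀ n, e n ∈ Set.Icc (0:ℝ) 1)
    (hd : Set.Icc (0:ℝ) 1 ⊆ closure (Set.range e))
    (h : ∀ n, |f (a * e n)| ≤ ε) : ∀ t ∈ Set.Icc 0 a, |f t| ≤ ε := by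
  intro t ht
  have hta : t / a ∈ Set.Icc (0:ℝ) 1 := by
    constructor
    · exact div_nonneg ht.1 ha.le
    · rw [div_le_one ha]; exact ht.2
  obtain ⟨x, hx, hlim⟩ := mem_closure_iff_seq_limit.mp (hd hta)
  -- a * x n → t, with a * x n ∈ Icc 0 a and in range of (a * e ·)
  have hax : Tendsto (fun n => a * x n) atTop (𝓝 t) := by
    have h2 := (hlim.const_mul a)
    simpa [mul_div_cancel₀ _ ha.ne'] using h2
  have hmem : ∀ n, a * x n ∈ Set.Icc (0:ℝ) a := by
    intro n
    obtain ⟨m, hm⟩ := hx n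
    constructor
    · exact mul_nonneg ha.le (hm ▸ (he m).1)
    · calc a * x n ≤ a * 1 := by
            apply mul_le_mul_of_nonneg_left (hm ▸ (he m).2) ha.le
        _ = a := mul_one a
  have habs : ∀ n, |f (a * x n)| ≤ ε := by
    intro n; obtain ⟨m, hm⟩ := hx n; rw [← hm]; exact h m
  have hcw : ContinuousWithinAt f (Set.Icc 0 a) t := hf t ht
  have htend : Tendsto (fun n => f (a * x n)) atTop (𝓝 (f t)) := by
    apply hcw.tendsto.comp
    exact tendsto_nhdsWithin_of_tendsto_nhds_of_eventually_within _ hax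
      (Eventually.of_forall hmem)
  have : Tendsto (fun n => |f (a * x n)|) atTop (𝓝 (|f t|)) :=
    (continuous_abs.tendsto _).comp htend
  exact le_of_tendsto this (Eventually.of_forall habs)

lemma aux_prob_iInter_eq {Ω : Type*} [MeasurableSpace Ω] (P : Measure Ω)
    [IsProbabilityMeasure P] (Y Z : ℕ → Ω → ℝ)
    (hY : ∀ n, Measurable (Y n)) (hZ : ∀ n, Measurable (Z n))
    (h : ∀ n : ℕ, Measure.map (fun ω (i : Fin n) => Y i ω) P =
      Measure.map (fun ω (i : Fin n) => Z i ω) P) (ε : ℝ) :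
    P (⋂ n, {ω | |Y n ω| ≤ ε}) = P (⋂ n, {ω | |Z n ω| ≤ ε}) := by
  have key : ∀ (W : ℕ → Ω → ℝ), (∀ n, Measurable (W n)) →
      P (⋂ n, {ω | |W n ω| ≤ ε}) = ⨅ n, P (⋂ i : Fin n, {ω | |W i.val ω| ≤ ε}) := by
    intro W hW
    have hset : ∀ (i : ℕ), {ω | |W i ω| ≤ ε} = (W i) ⁻¹' (Set.Icc (-ε) ε) := by
      intro i; ext ω; simp [abs_le]
    have hmeas : ∀ n : ℕ, MeasurableSet (⋂ i : Fin n, {ω | |W i.val ω| ≤ ε}) := by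
      intro n
      exact MeasurableSet.iInter fun i => by
        rw [hset]; exact (hW i.val) measurableSet_Icc
    have hanti : Antitone (fun n => ⋂ i : Fin n, {ω | |W i.val ω| ≤ ε}) := by
      intro n m hnm
      intro ω hω
      simp only [Set.mem_iInter] at hω ⊢
      intro i; exact hω ⟨i.val, lt_of_lt_of_le i.2 hnm⟩
    have hint : (⋂ n, ⋂ i : Fin n, {ω | |W i.val ω| ≤ ε}) = ⋂ n, {ω | |W n ω| ≤ ε} := by
      ext ω
      simp only [Set.mem_iInter, Set.mem_setOf_eq]
      constructor
      · intro hω n; exact hω (n+1) ⟨n, Nat.lt_succ_self n⟩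
      · intro hω n i; exact hω i.val
    rw [← hint]
    exact hanti.measure_iInter (fun n => (hmeas n).nullMeasurableSet)
      ⟨0, measure_ne_top _ _⟩
  rw [key Y hY, key Z hZ]
  congr 1
  ext n
  have hB : MeasurableSet (Set.univ.pi fun _ : Fin n => Set.Icc (-ε) ε) :=
    MeasurableSet.univ_pi fun _ => measurableSet_Icc
  have hmY : Measurable (fun ω (i : Fin n) => Y i.val ω) :=
    measurable_pi_lambda _ fun i => hY i.val
  have hmZ : Measurable (fun ω (i : Fin n) => Z i.val ω) :=
    measurable_pi_lambda _ fun i => hZ i.val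
  have hpre : ∀ (W : ℕ → Ω → ℝ),
      ((fun ω (i : Fin n) => W i.val ω) ⁻¹' (Set.univ.pi fun _ => Set.Icc (-ε) ε)) =
        ⋂ i : Fin n, {ω | |W i.val ω| ≤ ε} := by
    intro W; ext ω; simp [Set.mem_pi, abs_le, Pi.le_def, forall_and]
  calc P (⋂ i : Fin n, {ω | |Y i.val ω| ≤ ε})
      = Measure.map (fun ω (i : Fin n) => Y i.val ω) P
          (Set.univ.pi fun _ => Set.Icc (-ε) ε) := by
        rw [Measure.map_apply hmY hB, hpre]
    _ = Measure.map (fun ω (i : Fin n) => Z i.val ω) P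
          (Set.univ.pi fun _ => Set.Icc (-ε) ε) := by rw [h n]
    _ = P (⋂ i : Fin n, {ω | |Z i.val ω| ≤ ε}) := by
        rw [Measure.map_apply hmZ hB, hpre]


set_option maxHeartbeats 4000000 in
/-- **Weak small deviation order for a time-changed two-sided self-similar process.**
Let `X` be a two-sided process with continuous paths and `X(0) = 0` a.s., such that the
one-sided processes `X⁺ = (X(t))_{t≥0}` and `X⁻ = (X(−t))_{t≥0}` are independent with the
same finite-dimensional distributions, each self-similar of index `H`, and with
`−log P(sup_{0≤t≤1} |X(t)| ≤ ε) ≈ ε^{−τ}`. Let `E` be an independent continuous process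
on `[0,T]` with `E(0) = 0` and `P(sup_{0≤t≤T} |E(t)| ≤ ε) ≈ ε^σ`. Then
`P(sup_{0≤t≤T} |X(E(t))| ≤ ε) ≈ ε^{σ/H}` as `ε → 0+`. -/
theorem smallBall_timeChanged_selfSimilar {Ω : Type*} [MeasurableSpace Ω]
    (P : Measure Ω) [IsProbabilityMeasure P] (H τ σ T : ℝ)
    (hH : 0 < H) (hτ : 0 < τ) (hσ : 0 < σ) (hT : 0 < T)
    (X : ℝ → Ω → ℝ)
    (hXmeas : Measurable (Function.uncurry X))
    (hXcont : ∀ ω, Continuous (fun t => X t ω))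
    (hX0 : ∀ᵐ ω ∂P, X 0 ω = 0)
    -- (i) the two one-sided processes are independent with the same
    -- finite-dimensional distributions
    (hXindep : Indep
      (⨆ (t : ℝ) (_ : 0 ≤ t), MeasurableSpace.comap (X t) inferInstance)
      (⨆ (t : ℝ) (_ : 0 ≤ t), MeasurableSpace.comap (X (-t)) inferInstance) P)
    (hXsymm : ∀ (n : ℕ) (t : Fin n → ℝ), (∀ i, 0 ≤ t i) →
      Measure.map (fun ω (i : Fin n) => X (t i) ω) P =
        Measure.map (fun ω (i : Fin n) => X (-(t i)) ω) P)
    -- (ii) self-similarity of index `H` of each one-sided process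
    (hXss_pos : ∀ a : ℝ, 0 < a → ∀ (n : ℕ) (t : Fin n → ℝ), (∀ i, 0 ≤ t i) →
      Measure.map (fun ω (i : Fin n) => X (a * t i) ω) P =
        Measure.map (fun ω (i : Fin n) => a ^ H * X (t i) ω) P)
    (hXss_neg : ∀ a : ℝ, 0 < a → ∀ (n : ℕ) (t : Fin n → ℝ), (∀ i, 0 ≤ t i) →
      Measure.map (fun ω (i : Fin n) => X (-(a * t i)) ω) P =
        Measure.map (fun ω (i : Fin n) => a ^ H * X (-(t i)) ω) P)
    -- (iii) the small deviation bounds for `X`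
    (c₁ c₂ ε₀ : ℝ) (hc₂ : 0 < c₂) (hc : c₂ ≤ c₁) (hε₀ : 0 < ε₀)
    (hXsmall : ∀ ε ∈ Set.Ioc (0 : ℝ) ε₀,
      Real.exp (-c₁ * ε ^ (-τ)) ≤
          (P {ω | ∀ t ∈ Set.Icc (0 : ℝ) 1, |X t ω| ≤ ε}).toReal ∧
        (P {ω | ∀ t ∈ Set.Icc (0 : ℝ) 1, |X t ω| ≤ ε}).toReal ≤
          Real.exp (-c₂ * ε ^ (-τ)))
    -- the time change `E`
    (E : ℝ → Ω → ℝ)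
    (hEmeas : Measurable (Function.uncurry E))
    (hEcont : ∀ ω, ContinuousOn (fun t => E t ω) (Set.Icc 0 T))
    (hE0 : ∀ ω, E 0 ω = 0)
    (hindep : Indep
      (⨆ t : ℝ, MeasurableSpace.comap (X t) inferInstance)
      (⨆ (t : ℝ) (_ : t ∈ Set.Icc (0 : ℝ) T),
        MeasurableSpace.comap (E t) inferInstance) P)
    (k₁ k₂ ε₁ : ℝ) (hk₁ : 0 < k₁) (hk : k₁ ≤ k₂) (hε₁ : 0 < ε₁)
    (hEsmall : ∀ ε ∈ Set.Ioc (0 : ℝ) ε₁,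
      k₁ * ε ^ σ ≤ (P {ω | ∀ t ∈ Set.Icc (0 : ℝ) T, |E t ω| ≤ ε}).toReal ∧
        (P {ω | ∀ t ∈ Set.Icc (0 : ℝ) T, |E t ω| ≤ ε}).toReal ≤ k₂ * ε ^ σ) :
    ∃ K₁ K₂ ε₂ : ℝ, 0 < K₁ ∧ K₁ ≤ K₂ ∧ 0 < ε₂ ∧
      ∀ ε ∈ Set.Ioc (0 : ℝ) ε₂,
        K₁ * ε ^ (σ / H) ≤
            (P {ω | ∀ t ∈ Set.Icc (0 : ℝ) T, |X (E t ω) ω| ≤ ε}).toReal ∧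
          (P {ω | ∀ t ∈ Set.Icc (0 : ℝ) T, |X (E t ω) ω| ≤ ε}).toReal ≤
            K₂ * ε ^ (σ / H) := by
  classical
  obtain ⟨e, he01, hed⟩ := aux_dense_seq
  have hXt : ∀ t : ℝ, Measurable (X t) := fun t => hXmeas.comp measurable_prodMk_left
  have hEt : ∀ t : ℝ, Measurable (E t) := fun t => hEmeas.comp measurable_prodMk_left
  have hc₁ : 0 < c₁ := lt_of_lt_of_le hc₂ hc
  set Sp : ℝ → ℝ → Set Ω := fun a u => {ω | ∀ t ∈ Set.Icc (0:ℝ) a, |X t ω| ≤ u} with hSpdef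
  set Sn : ℝ → ℝ → Set Ω := fun a u => {ω | ∀ t ∈ Set.Icc (0:ℝ) a, |X (-t) ω| ≤ u} with hSndef
  set Gs : ℝ → Set Ω := fun u => {ω | ∀ t ∈ Set.Icc (0:ℝ) T, |E t ω| ≤ u} with hGdef
  -- countable representations
  have hSp_eq : ∀ a : ℝ, 0 < a → ∀ u : ℝ, Sp a u = ⋂ n, {ω | |X (a * e n) ω| ≤ u} := by
    intro a ha u
    ext ω
    simp only [hSpdef, Set.mem_setOf_eq, Set.mem_iInter]
    constructor
    · intro h n
      refine h (a * e n) ⟨mul_nonneg ha.le (he01 n).1, ?_⟩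
      calc a * e n ≤ a * 1 := mul_le_mul_of_nonneg_left (he01 n).2 ha.le
        _ = a := mul_one a
    · intro h
      exact aux_dense_abs_le ha (hXcont ω).continuousOn he01 hed h
  have hSn_eq : ∀ a : ℝ, 0 < a → ∀ u : ℝ, Sn a u = ⋂ n, {ω | |X (-(a * e n)) ω| ≤ u} := by
    intro a ha u
    ext ω
    simp only [hSndef, Set.mem_setOf_eq, Set.mem_iInter]
    constructor
    · intro h n
      refine h (a * e n) ⟨mul_nonneg ha.le (he01 n).1, ?_⟩
      calc a * e n ≤ a * 1 := mul_le_mul_of_nonneg_left (he01 n).2 ha.le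
        _ = a := mul_one a
    · intro h
      exact aux_dense_abs_le ha ((hXcont ω).comp continuous_neg).continuousOn he01 hed h
  have hG_eq : ∀ u : ℝ, Gs u = ⋂ n, {ω | |E (T * e n) ω| ≤ u} := by
    intro u
    ext ω
    simp only [hGdef, Set.mem_setOf_eq, Set.mem_iInter]
    constructor
    · intro h n
      refine h (T * e n) ⟨mul_nonneg hT.le (he01 n).1, ?_⟩
      calc T * e n ≤ T * 1 := mul_le_mul_of_nonneg_left (he01 n).2 hT.le
        _ = T := mul_one T
    · intro h
      exact aux_dense_abs_le hT (hEcont ω) he01 hed h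
  -- scaling and symmetry
  have hscale : ∀ a : ℝ, 0 < a → ∀ u : ℝ, P (Sp a u) = P (Sp 1 (u / a ^ H)) := by
    intro a ha u
    have haH : (0:ℝ) < a ^ H := Real.rpow_pos_of_pos ha H
    rw [hSp_eq a ha u, hSp_eq 1 one_pos (u / a ^ H)]
    have h1 : P (⋂ n, {ω | |X (a * e n) ω| ≤ u}) =
        P (⋂ n, {ω | |a ^ H * X (e n) ω| ≤ u}) := by
      refine aux_prob_iInter_eq P _ _ (fun n => hXt _) (fun n => (hXt _).const_mul _)
        (fun n => ?_) u
      exact hXss_pos a ha n (fun i => e i.val) (fun i => (he01 i.val).1)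
    rw [h1]
    congr 1
    refine Set.iInter_congr fun n => ?_
    ext ω
    simp only [Set.mem_setOf_eq, one_mul, abs_mul, abs_of_pos haH]
    exact (le_div_iff₀' haH).symm
  have hsymmP : ∀ a : ℝ, 0 < a → ∀ u : ℝ, P (Sn a u) = P (Sp a u) := by
    intro a ha u
    rw [hSp_eq a ha u, hSn_eq a ha u]
    refine aux_prob_iInter_eq P _ _ (fun n => hXt _) (fun n => hXt _) (fun n => ?_) u
    exact (hXsymm n (fun i => a * e i.val) (fun i => mul_nonneg ha.le (he01 i.val).1)).symm
  -- sub-σ-algebra memberships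
  have habs : ∀ (W : Ω → ℝ) (u : ℝ),
      MeasurableSet[MeasurableSpace.comap W inferInstance] {ω | |W ω| ≤ u} :=
    fun W u => ⟨Set.Icc (-u) u, measurableSet_Icc, by ext ω; simp [abs_le]⟩
  have hSp_mXp : ∀ a : ℝ, 0 < a → ∀ u : ℝ,
      MeasurableSet[⨆ (t : ℝ) (_ : 0 ≤ t), MeasurableSpace.comap (X t) inferInstance]
        (Sp a u) := by
    intro a ha u
    rw [hSp_eq a ha u]
    refine MeasurableSet.iInter fun n => ?_
    have hle : MeasurableSpace.comap (X (a * e n)) inferInstance ≤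
        ⨆ (t : ℝ) (_ : 0 ≤ t), MeasurableSpace.comap (X t) inferInstance :=
      le_iSup₂ (f := fun (t : ℝ) (_ : 0 ≤ t) => MeasurableSpace.comap (X t) inferInstance)
        (a * e n) (mul_nonneg ha.le (he01 n).1)
    exact hle _ (habs _ u)
  have hSn_mXn : ∀ a : ℝ, 0 < a → ∀ u : ℝ,
      MeasurableSet[⨆ (t : ℝ) (_ : 0 ≤ t), MeasurableSpace.comap (X (-t)) inferInstance]
        (Sn a u) := by
    intro a ha u
    rw [hSn_eq a ha u]
    refine MeasurableSet.iInter fun n => ?_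
    have hle : MeasurableSpace.comap (X (-(a * e n))) inferInstance ≤
        ⨆ (t : ℝ) (_ : 0 ≤ t), MeasurableSpace.comap (X (-t)) inferInstance :=
      le_iSup₂ (f := fun (t : ℝ) (_ : 0 ≤ t) => MeasurableSpace.comap (X (-t)) inferInstance)
        (a * e n) (mul_nonneg ha.le (he01 n).1)
    exact hle _ (habs _ u)
  have hSp_mX : ∀ a : ℝ, 0 < a → ∀ u : ℝ,
      MeasurableSet[⨆ t : ℝ, MeasurableSpace.comap (X t) inferInstance] (Sp a u) := by
    intro a ha u
    rw [hSp_eq a ha u]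
    refine MeasurableSet.iInter fun n => ?_
    exact le_iSup (fun t : ℝ => MeasurableSpace.comap (X t) inferInstance) (a * e n) _
      (habs _ u)
  have hSn_mX : ∀ a : ℝ, 0 < a → ∀ u : ℝ,
      MeasurableSet[⨆ t : ℝ, MeasurableSpace.comap (X t) inferInstance] (Sn a u) := by
    intro a ha u
    rw [hSn_eq a ha u]
    refine MeasurableSet.iInter fun n => ?_
    exact le_iSup (fun t : ℝ => MeasurableSpace.comap (X t) inferInstance) (-(a * e n)) _
      (habs _ u)
  have hG_mE : ∀ u : ℝ,
      MeasurableSet[⨆ (t : ℝ) (_ : t ∈ Set.Icc (0:ℝ) T),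
        MeasurableSpace.comap (E t) inferInstance] (Gs u) := by
    intro u
    rw [hG_eq u]
    refine MeasurableSet.iInter fun n => ?_
    have hmem : T * e n ∈ Set.Icc (0:ℝ) T := by
      refine ⟨mul_nonneg hT.le (he01 n).1, ?_⟩
      calc T * e n ≤ T * 1 := mul_le_mul_of_nonneg_left (he01 n).2 hT.le
        _ = T := mul_one T
    have hle : MeasurableSpace.comap (E (T * e n)) inferInstance ≤
        ⨆ (t : ℝ) (_ : t ∈ Set.Icc (0:ℝ) T), MeasurableSpace.comap (E t) inferInstance :=
      le_iSup₂ (f := fun (t : ℝ) (_ : t ∈ Set.Icc (0:ℝ) T) =>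
        MeasurableSpace.comap (E t) inferInstance) (T * e n) hmem
    exact hle _ (habs _ u)
  have hXXmul := (ProbabilityTheory.Indep_iff _ _ P).mp hXindep
  have hXEmul := (ProbabilityTheory.Indep_iff _ _ P).mp hindep
    -- lower bound constant ρ
  have hmin_pos : (0:ℝ) < min 1 ε₀ := lt_min one_pos hε₀
  set ρ := Real.exp (-c₁ * (min 1 ε₀) ^ (-τ)) with hρdef
  have hρpos : 0 < ρ := Real.exp_pos _
  have hρ1 : ρ ≤ 1 := by
    rw [hρdef, Real.exp_le_one_iff]
    have h1 : (0:ℝ) < (min 1 ε₀) ^ (-τ) := Real.rpow_pos_of_pos hmin_pos _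
    nlinarith
  have hρSp : ρ ≤ (P (Sp 1 1)).toReal := by
    have h1 := (hXsmall (min 1 ε₀) ⟨hmin_pos, min_le_right _ _⟩).1
    have hsub : Sp 1 (min 1 ε₀) ⊆ Sp 1 1 := by
      intro ω hω t ht
      exact le_trans (hω t ht) (min_le_left _ _)
    have h2 : (P (Sp 1 (min 1 ε₀))).toReal ≤ (P (Sp 1 1)).toReal :=
      ENNReal.toReal_mono (measure_ne_top _ _) (measure_mono hsub)
    exact le_trans h1 h2
  -- geometric decay constants
  set L := Real.log 2 with hLdef
  have hLpos : 0 < L := Real.log_pos one_lt_two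
  set w := (2:ℝ) ^ (-(σ+1)) with hwdef
  have hwpos : 0 < w := Real.rpow_pos_of_pos two_pos _
  have hw1 : w < 1 := Real.rpow_lt_one_of_one_lt_of_neg one_lt_two (by linarith)
  set r := (2:ℝ) ^ (-H) with hrdef
  have hrpos : 0 < r := Real.rpow_pos_of_pos two_pos _
  have hr1 : r < 1 := Real.rpow_lt_one_of_one_lt_of_neg one_lt_two (by linarith)
  have hrj : ∀ j : ℕ, (2:ℝ) ^ (-((j:ℝ) * H)) = r ^ j := by
    intro j
    rw [hrdef, ← Real.rpow_natCast ((2:ℝ) ^ (-H)) j,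
      ← Real.rpow_mul (by norm_num : (0:ℝ) ≤ 2)]
    congr 1; ring
  obtain ⟨J₁, hJ₁⟩ := exists_pow_lt_of_lt_one hε₀ hr1
  have hineqJ : ∀ j : ℕ, (⌈4*(σ+1)/(c₂*L*(H*τ)^2)⌉₊ ≤ j) →
      4*(σ+1) ≤ (j:ℝ) * (c₂*L*(H*τ)^2) := by
    intro j hj
    have h1 : 4*(σ+1)/(c₂*L*(H*τ)^2) ≤ (j:ℝ) :=
      le_trans (Nat.le_ceil _) (by exact_mod_cast hj)
    rwa [div_le_iff₀ (by positivity)] at h1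
  set J := max J₁ ⌈4*(σ+1)/(c₂*L*(H*τ)^2)⌉₊ with hJdef
  set B := (w ^ J)⁻¹ with hBdef
  have hwJ1 : w ^ J ≤ 1 := pow_le_one₀ hwpos.le hw1.le
  have hwJpos : 0 < w ^ J := pow_pos hwpos J
  have hB1 : 1 ≤ B := by
    rw [hBdef]
    nlinarith [mul_inv_cancel₀ hwJpos.ne', inv_pos.mpr hwJpos]
  have hBpos : 0 < B := lt_of_lt_of_le one_pos hB1
  -- key decay estimate
  have hpj : ∀ j : ℕ, (P (Sp 1 (r ^ j))).toReal ≤ B * w ^ j := by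
    intro j
    by_cases hj : J ≤ j
    · have hrj_pos : 0 < r ^ j := pow_pos hrpos j
      have hrjε₀ : r ^ j ≤ ε₀ := by
        have h1 : r ^ j ≤ r ^ J₁ :=
          pow_le_pow_of_le_one hrpos.le hr1.le (le_trans (le_max_left _ _) hj)
        linarith
      have h2 := (hXsmall (r ^ j) ⟨hrj_pos, hrjε₀⟩).2
      have hpow : (r ^ j) ^ (-τ) = Real.exp (L * ((j:ℝ) * H * τ)) := by
        rw [← hrj j, ← Real.rpow_mul (by norm_num : (0:ℝ) ≤ 2),
          Real.rpow_def_of_pos two_pos]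
        congr 1; ring
      have hwj' : w ^ j = Real.exp (L * (-((σ+1) * (j:ℝ)))) := by
        rw [hwdef, ← Real.rpow_natCast ((2:ℝ) ^ (-(σ+1))) j,
          ← Real.rpow_mul (by norm_num : (0:ℝ) ≤ 2), Real.rpow_def_of_pos two_pos]
        congr 1; ring
      have hkey : Real.exp (-c₂ * (r ^ j) ^ (-τ)) ≤ w ^ j := by
        rw [hpow, hwj']
        apply Real.exp_le_exp.mpr
        have hq : (L * ((j:ℝ)*H*τ))^2/4 ≤ Real.exp (L * ((j:ℝ)*H*τ)) :=
          aux_quad (by positivity)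
        have hjineq : 4*(σ+1) ≤ (j:ℝ) * (c₂*L*(H*τ)^2) :=
          hineqJ j (le_trans (le_max_right _ _) hj)
        nlinarith [mul_le_mul_of_nonneg_left hq hc₂.le,
          mul_le_mul_of_nonneg_left hjineq
            (show (0:ℝ) ≤ L*(j:ℝ)/4 by positivity)]
      calc (P (Sp 1 (r ^ j))).toReal ≤ Real.exp (-c₂ * (r ^ j) ^ (-τ)) := h2
        _ ≤ w ^ j := hkey
        _ ≤ B * w ^ j := le_mul_of_one_le_left (pow_pos hwpos j).le hB1
    · push_neg at hj
      have h1 : (P (Sp 1 (r ^ j))).toReal ≤ 1 :=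
        ENNReal.toReal_mono ENNReal.one_ne_top prob_le_one
      have h3 : w ^ J ≤ w ^ j := pow_le_pow_of_le_one hwpos.le hw1.le hj.le
      have h2 : 1 ≤ B * w ^ j := by
        rw [hBdef, inv_mul_eq_div, le_div_iff₀ hwJpos]
        linarith
      linarith
  -- upper bound for G at all levels
  set k₂' := max k₂ (ε₁ ^ (-σ)) with hk₂'def
  have hk₂pos : 0 < k₂ := lt_of_lt_of_le hk₁ hk
  have hk₂'pos : 0 < k₂' := lt_of_lt_of_le hk₂pos (le_max_left _ _)
  have hGlevel : ∀ v : ℝ, 0 < v → (P (Gs v)).toReal ≤ k₂' * v ^ σ := by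
    intro v hv
    by_cases hvε : v ≤ ε₁
    · have h1 := (hEsmall v ⟨hv, hvε⟩).2
      have h2 : k₂ * v ^ σ ≤ k₂' * v ^ σ :=
        mul_le_mul_of_nonneg_right (le_max_left _ _) (Real.rpow_nonneg hv.le σ)
      exact le_trans h1 h2
    · push_neg at hvε
      have h1 : (P (Gs v)).toReal ≤ 1 :=
        ENNReal.toReal_mono ENNReal.one_ne_top prob_le_one
      have hεσ : ε₁ ^ σ ≤ v ^ σ := Real.rpow_le_rpow hε₁.le hvε.le hσ.le
      have hprod : ε₁ ^ (-σ) * ε₁ ^ σ = 1 := by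
        rw [← Real.rpow_add hε₁]; simp
      have h3 : ε₁ ^ (-σ) ≤ k₂' := le_max_right _ _
      have h4 : (0:ℝ) < ε₁ ^ (-σ) := Real.rpow_pos_of_pos hε₁ _
      have h5 : (0:ℝ) < ε₁ ^ σ := Real.rpow_pos_of_pos hε₁ _
      nlinarith
  set g := (2:ℝ) ^ σ with hgdef
  have hgpos : 0 < g := Real.rpow_pos_of_pos two_pos _
  have hwg : w * g = 1/2 := by
    rw [hwdef, hgdef, ← Real.rpow_add two_pos]
    have h1 : -(σ+1)+σ = (-1:ℝ) := by ring
    rw [h1]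
    rw [Real.rpow_neg_one]
    norm_num
    -- conclusion
  refine ⟨ρ^2 * k₁, k₂ + 4*B*k₂'*g, ε₁ ^ H, by positivity, ?_, Real.rpow_pos_of_pos hε₁ H, ?_⟩
  · have h1 : ρ^2 ≤ 1 := by nlinarith
    calc ρ^2 * k₁ ≤ 1 * k₁ := mul_le_mul_of_nonneg_right h1 hk₁.le
      _ = k₁ := one_mul _
      _ ≤ k₂ := hk
      _ ≤ k₂ + 4*B*k₂'*g := le_add_of_nonneg_right (by positivity)
  intro ε hε
  obtain ⟨hε0, hεε₂⟩ := hε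
  set δ := ε ^ (1/H) with hδdef
  have hδpos : 0 < δ := Real.rpow_pos_of_pos hε0 _
  have hδH : δ ^ H = ε := by
    rw [hδdef, ← Real.rpow_mul hε0.le, one_div_mul_cancel hH.ne', Real.rpow_one]
  have hδσ : δ ^ σ = ε ^ (σ/H) := by
    rw [hδdef, ← Real.rpow_mul hε0.le]
    congr 1; ring
  have hδε₁ : δ ≤ ε₁ := by
    have h1 := Real.rpow_le_rpow hε0.le hεε₂ (one_div_nonneg.mpr hH.le)
    rwa [← Real.rpow_mul hε₁.le, mul_one_div_cancel hH.ne', Real.rpow_one] at h1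
  have hδσpos : (0:ℝ) < δ ^ σ := Real.rpow_pos_of_pos hδpos σ
  -- lower bound
  have hSpδ : P (Sp δ ε) = P (Sp 1 1) := by
    rw [hscale δ hδpos ε, hδH, div_self hε0.ne']
  have hSnδ : P (Sn δ ε) = P (Sp 1 1) := by rw [hsymmP δ hδpos ε, hSpδ]
  have hlow : Sp δ ε ∩ Sn δ ε ∩ Gs δ ⊆
      {ω | ∀ t ∈ Set.Icc (0:ℝ) T, |X (E t ω) ω| ≤ ε} := by
    rintro ω ⟨⟨h1, h2⟩, h3⟩ t ht
    have hEb := h3 t ht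
    rcases le_total 0 (E t ω) with hcase | hcase
    · exact h1 (E t ω) ⟨hcase, (abs_le.mp hEb).2⟩
    · have h4 := h2 (-(E t ω)) ⟨neg_nonneg.mpr hcase, by linarith [(abs_le.mp hEb).1]⟩
      rwa [neg_neg] at h4
  have hPint : P (Sp δ ε ∩ Sn δ ε ∩ Gs δ) = P (Sp δ ε) * P (Sn δ ε) * P (Gs δ) := by
    rw [hXEmul _ _ ((hSp_mX δ hδpos ε).inter (hSn_mX δ hδpos ε)) (hG_mE δ),
      hXXmul _ _ (hSp_mXp δ hδpos ε) (hSn_mXn δ hδpos ε)]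
  have hEδ := hEsmall δ ⟨hδpos, hδε₁⟩
  constructor
  · have h1 : (P (Sp δ ε ∩ Sn δ ε ∩ Gs δ)).toReal ≤
        (P {ω | ∀ t ∈ Set.Icc (0:ℝ) T, |X (E t ω) ω| ≤ ε}).toReal :=
      ENNReal.toReal_mono (measure_ne_top _ _) (measure_mono hlow)
    have h2 : (P (Sp δ ε ∩ Sn δ ε ∩ Gs δ)).toReal =
        (P (Sp 1 1)).toReal^2 * (P (Gs δ)).toReal := by
      rw [hPint, hSpδ, hSnδ, ENNReal.toReal_mul, ENNReal.toReal_mul]; ring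
    have h3 : ρ^2 * k₁ * (ε ^ (σ/H)) ≤ (P (Sp 1 1)).toReal^2 * (P (Gs δ)).toReal := by
      rw [← hδσ]
      have e1 : ρ^2 ≤ (P (Sp 1 1)).toReal^2 := pow_le_pow_left₀ hρpos.le hρSp 2
      calc ρ^2 * k₁ * δ^σ = ρ^2 * (k₁ * δ^σ) := by ring
        _ ≤ (P (Sp 1 1)).toReal^2 * (P (Gs δ)).toReal :=
            mul_le_mul e1 hEδ.1 (by positivity) (by positivity)
    linarith
  -- upper bound
  set ms : ℕ → ℝ := fun j => δ * 2^j with hmsdef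
  have hmpos : ∀ j : ℕ, 0 < ms j := fun j => mul_pos hδpos (pow_pos two_pos j)
  have hcover : {ω | ∀ t ∈ Set.Icc (0:ℝ) T, |X (E t ω) ω| ≤ ε} ⊆
      Gs δ ∪ ⋃ j : ℕ, ((Sp (ms j) ε ∪ Sn (ms j) ε) ∩ Gs (ms (j+1))) := by
    intro ω hω
    by_cases h0 : ω ∈ Gs δ
    · exact Set.mem_union_left _ h0
    right
    have hbdd : ∃ j : ℕ, ω ∈ Gs (ms j) := by
      obtain ⟨C, hC⟩ := (isCompact_Icc :
        IsCompact (Set.Icc (0:ℝ) T)).exists_bound_of_continuousOn (hEcont ω)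
      obtain ⟨n, hn⟩ := pow_unbounded_of_one_lt (C / δ) (by norm_num : (1:ℝ) < 2)
      refine ⟨n, fun t ht => ?_⟩
      have h1 : |E t ω| ≤ C := by simpa [Real.norm_eq_abs] using hC t ht
      have h2 : C ≤ ms n := by
        have h3 := (div_lt_iff₀ hδpos).mp hn
        rw [hmsdef]
        simp only
        calc C ≤ 2^n * δ := h3.le
          _ = δ * 2^n := mul_comm _ _
      linarith
    have hspec : ω ∈ Gs (ms (Nat.find hbdd)) := Nat.find_spec hbdd
    have hj₀pos : Nat.find hbdd ≠ 0 := by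
      intro hzero
      apply h0
      rw [hzero] at hspec
      have : ms 0 = δ := by rw [hmsdef]; simp
      rwa [this] at hspec
    obtain ⟨j, hj⟩ : ∃ j, Nat.find hbdd = j + 1 :=
      ⟨Nat.find hbdd - 1, (Nat.succ_pred_eq_of_pos (Nat.pos_of_ne_zero hj₀pos)).symm⟩
    have hnot : ω ∉ Gs (ms j) := Nat.find_min hbdd (by omega)
    refine Set.mem_iUnion.mpr ⟨j, ?_, by rw [← hj]; exact hspec⟩
    have hex : ∃ t₀ ∈ Set.Icc (0:ℝ) T, ms j < |E t₀ ω| := by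
      by_contra hcon
      push_neg at hcon
      exact hnot fun t ht => hcon t ht
    obtain ⟨t₀, ht₀, hgt⟩ := hex
    have hcont₀ : ContinuousOn (fun t => E t ω) (Set.Icc 0 t₀) :=
      (hEcont ω).mono (Set.Icc_subset_Icc_right ht₀.2)
    rcases lt_or_ge (ms j) (E t₀ ω) with hcase | hcase
    · left
      intro s hs
      have hsmem : s ∈ Set.Icc ((fun t => E t ω) 0) ((fun t => E t ω) t₀) := by
        simp only [hE0]
        exact ⟨hs.1, le_of_lt (lt_of_le_of_lt hs.2 hcase)⟩
      obtain ⟨u, hu, hEu⟩ := intermediate_value_Icc ht₀.1 hcont₀ hsmem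
      have h5 := hω u ⟨hu.1, le_trans hu.2 ht₀.2⟩
      rw [← hEu]
      exact h5
    · right
      intro s hs
      have hneg' : E t₀ ω < -(ms j) := by
        rcases le_or_gt 0 (E t₀ ω) with h6 | h6
        · rw [abs_of_nonneg h6] at hgt; linarith
        · rw [abs_of_neg h6] at hgt; linarith
      have hsmem : -s ∈ Set.Icc ((fun t => E t ω) t₀) ((fun t => E t ω) 0) := by
        simp only [hE0]
        exact ⟨by linarith [hs.2], by linarith [hs.1]⟩
      obtain ⟨u, hu, hEu⟩ := intermediate_value_Icc' ht₀.1 hcont₀ hsmem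
      have h5 := hω u ⟨hu.1, le_trans hu.2 ht₀.2⟩
      rw [← hEu]
      exact h5
  have hterm : ∀ j : ℕ, P ((Sp (ms j) ε ∪ Sn (ms j) ε) ∩ Gs (ms (j+1))) ≤
      ENNReal.ofReal ((2*B*k₂'*g*(δ^σ)) * (1/2)^j) := by
    intro j
    rw [hXEmul _ _ ((hSp_mX _ (hmpos j) ε).union (hSn_mX _ (hmpos j) ε)) (hG_mE _)]
    have harg : ε / (ms j) ^ H = r ^ j := by
      have hh2 : ((2:ℝ)^j) ^ H = (2:ℝ) ^ ((j:ℝ)*H) := by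
        rw [← Real.rpow_natCast 2 j, ← Real.rpow_mul (by norm_num : (0:ℝ) ≤ 2)]
      have hh : (ms j) ^ H = ε * ((2:ℝ)^((j:ℝ)*H)) := by
        rw [hmsdef]
        simp only
        rw [Real.mul_rpow hδpos.le (pow_pos two_pos j).le, hδH, hh2]
      rw [hh, ← hrj j, Real.rpow_neg (by norm_num : (0:ℝ) ≤ 2),
        div_mul_eq_div_div, div_self hε0.ne', one_div]
    have h1 : P (Sp (ms j) ε) = P (Sp 1 (r ^ j)) := by
      rw [hscale _ (hmpos j) ε, harg]
    have hu : P (Sp (ms j) ε ∪ Sn (ms j) ε) ≤ 2 * P (Sp 1 (r ^ j)) := by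
      calc P (Sp (ms j) ε ∪ Sn (ms j) ε) ≤ P (Sp (ms j) ε) + P (Sn (ms j) ε) :=
            measure_union_le _ _
        _ = 2 * P (Sp 1 (r ^ j)) := by
            rw [hsymmP _ (hmpos j) ε, h1, two_mul]
    have hSpb : P (Sp 1 (r ^ j)) ≤ ENNReal.ofReal (B * w ^ j) :=
      (ENNReal.le_ofReal_iff_toReal_le (measure_ne_top _ _) (by positivity)).mpr (hpj j)
    have hGb : P (Gs (ms (j+1))) ≤ ENNReal.ofReal (k₂' * (δ^σ * g^(j+1))) := by
      apply (ENNReal.le_ofReal_iff_toReal_le (measure_ne_top _ _) (by positivity)).mpr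
      have h1' := hGlevel (ms (j+1)) (hmpos (j+1))
      have h2' : (ms (j+1)) ^ σ = δ^σ * g^(j+1) := by
        rw [hmsdef]
        simp only
        rw [Real.mul_rpow hδpos.le (pow_pos two_pos (j+1)).le]
        congr 1
        rw [hgdef, ← Real.rpow_natCast (2:ℝ) (j+1),
          ← Real.rpow_mul (by norm_num : (0:ℝ) ≤ 2),
          ← Real.rpow_natCast ((2:ℝ)^σ) (j+1),
          ← Real.rpow_mul (by norm_num : (0:ℝ) ≤ 2)]
        congr 1; ring
      rw [h2'] at h1'
      exact h1'
    calc P (Sp (ms j) ε ∪ Sn (ms j) ε) * P (Gs (ms (j+1)))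
        ≤ (2 * ENNReal.ofReal (B * w ^ j)) * ENNReal.ofReal (k₂' * (δ^σ * g^(j+1))) :=
          mul_le_mul' (le_trans hu (mul_le_mul' le_rfl hSpb)) hGb
      _ = ENNReal.ofReal (2 * (B * w ^ j) * (k₂' * (δ^σ * g^(j+1)))) := by
          have h2'' : ENNReal.ofReal 2 = 2 := by norm_num
          rw [show (2:ℝ) * (B * w ^ j) * (k₂' * (δ^σ * g^(j+1))) =
              2 * ((B * w ^ j) * (k₂' * (δ^σ * g^(j+1)))) from by ring,
            ENNReal.ofReal_mul (by norm_num : (0:ℝ) ≤ 2),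
            ENNReal.ofReal_mul (by positivity : (0:ℝ) ≤ B * w ^ j), h2'']
          ring
      _ = ENNReal.ofReal ((2*B*k₂'*g*(δ^σ)) * (1/2)^j) := by
          congr 1
          have hid : 2 * (B * w ^ j) * (k₂' * (δ^σ * g^(j+1))) =
              (2*B*k₂'*g*(δ^σ)) * (w*g)^j := by
            rw [mul_pow, pow_succ]; ring
          rw [hid, hwg]
  have hsum : ∑' j : ℕ, P ((Sp (ms j) ε ∪ Sn (ms j) ε) ∩ Gs (ms (j+1))) ≤
      ENNReal.ofReal ((2*B*k₂'*g*(δ^σ)) * 2) := by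
    calc ∑' j : ℕ, P ((Sp (ms j) ε ∪ Sn (ms j) ε) ∩ Gs (ms (j+1)))
        ≤ ∑' j : ℕ, ENNReal.ofReal ((2*B*k₂'*g*(δ^σ)) * (1/2)^j) :=
          ENNReal.tsum_le_tsum hterm
      _ = ENNReal.ofReal (∑' j : ℕ, (2*B*k₂'*g*(δ^σ)) * (1/2)^j) :=
          (ENNReal.ofReal_tsum_of_nonneg (fun j => by positivity)
            ((summable_geometric_of_lt_one (by norm_num) (by norm_num)).mul_left _)).symm
      _ = ENNReal.ofReal ((2*B*k₂'*g*(δ^σ)) * 2) := by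
          rw [tsum_mul_left, tsum_geometric_two]
  have hPA : P {ω | ∀ t ∈ Set.Icc (0:ℝ) T, |X (E t ω) ω| ≤ ε} ≤
      ENNReal.ofReal ((k₂ + 4*B*k₂'*g) * (ε ^ (σ/H))) := by
    calc P {ω | ∀ t ∈ Set.Icc (0:ℝ) T, |X (E t ω) ω| ≤ ε}
        ≤ P (Gs δ ∪ ⋃ j : ℕ, ((Sp (ms j) ε ∪ Sn (ms j) ε) ∩ Gs (ms (j+1)))) :=
          measure_mono hcover
      _ ≤ P (Gs δ) + P (⋃ j : ℕ, ((Sp (ms j) ε ∪ Sn (ms j) ε) ∩ Gs (ms (j+1)))) :=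
          measure_union_le _ _
      _ ≤ ENNReal.ofReal (k₂ * δ^σ) +
          ∑' j : ℕ, P ((Sp (ms j) ε ∪ Sn (ms j) ε) ∩ Gs (ms (j+1))) := by
          refine add_le_add ?_ (measure_iUnion_le _)
          exact (ENNReal.le_ofReal_iff_toReal_le (measure_ne_top _ _)
            (by positivity)).mpr hEδ.2
      _ ≤ ENNReal.ofReal (k₂ * δ^σ) + ENNReal.ofReal ((2*B*k₂'*g*(δ^σ)) * 2) :=
          add_le_add le_rfl hsum
      _ = ENNReal.ofReal (k₂ * δ^σ + (2*B*k₂'*g*(δ^σ)) * 2) :=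
          (ENNReal.ofReal_add (by positivity) (by positivity)).symm
      _ = ENNReal.ofReal ((k₂ + 4*B*k₂'*g) * (ε ^ (σ/H))) := by
          rw [← hδσ]; congr 1; ring
  exact ENNReal.toReal_le_of_le_ofReal (by positivity) hPA
end

section
/- Let V be a nonnegative random variable on a probability space (Ω, F, P) and let A > 0 and θ > 0. Then lim_{a→∞} a^θ E[e^{−a V}] = A if and only if lim_{ε→0+} ε^{−θ} P(V ≤ ε) = A/Γ(θ+1), where Γ is Euler's Gamma function. -/
set_option linter.unusedSectionVars false
set_option linter.unusedVariables false
set_option maxHeartbeats 1000000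

open MeasureTheory Filter Topology Set Polynomial Real
open scoped ENNReal

namespace TaubProof

variable {μ : Measure ℝ} [IsProbabilityMeasure μ] {θ A : ℝ}


variable {μ : Measure ℝ} [IsProbabilityMeasure μ] {θ A : ℝ}

lemma integrable_exp_neg_mul (hμ0 : ∀ᵐ x ∂μ, 0 ≤ x) {c : ℝ} (hc : 0 ≤ c) :
    Integrable (fun x => rexp (-(c * x))) μ := by
  refine (integrable_const (1:ℝ)).mono' ?_ ?_
  · exact (Real.continuous_exp.comp (continuous_const.mul continuous_id).neg).aestronglyMeasurable
  · filter_upwards [hμ0] with x hx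
    rw [norm_eq_abs, abs_exp]
    exact exp_le_one_iff.mpr (by nlinarith)

/-- rescaling of the Laplace transform limit -/
lemma tendsto_rescale (hθ : 0 < θ)
    (hH : Tendsto (fun a : ℝ => a ^ θ * ∫ x, rexp (-(a * x)) ∂μ) atTop (𝓝 A))
    {c : ℝ} (hc : 0 < c) :
    Tendsto (fun a : ℝ => a ^ θ * ∫ x, rexp (-((c * a) * x)) ∂μ) atTop (𝓝 (A / c ^ θ)) := by
  have hca : Tendsto (fun a : ℝ => c * a) atTop atTop :=
    Tendsto.const_mul_atTop hc tendsto_id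
  have h1 : Tendsto (fun a : ℝ => (c * a) ^ θ * ∫ x, rexp (-((c * a) * x)) ∂μ) atTop (𝓝 A) :=
    hH.comp hca
  have h2 := h1.div_const (c ^ θ)
  refine h2.congr' ?_
  filter_upwards [eventually_ge_atTop (0:ℝ)] with a ha
  rw [Real.mul_rpow hc.le ha]
  have : (c:ℝ) ^ θ ≠ 0 := (Real.rpow_pos_of_pos hc _).ne'
  field_simp

/-- the coefficient functional -/
noncomputable def Lam (θ : ℝ) (p : ℝ[X]) : ℝ :=
  ∑ k ∈ Finset.range (p.natDegree + 1), p.coeff k / ((k : ℝ) + 1) ^ θ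

lemma exp_pow_eq (a x : ℝ) (k : ℕ) :
    rexp (-(a * x)) * rexp (-(a * x)) ^ k = rexp (-((((k : ℝ) + 1) * a) * x)) := by
  rw [← Real.exp_nat_mul, ← Real.exp_add]
  congr 1
  ring

lemma integral_poly (hμ0 : ∀ᵐ x ∂μ, 0 ≤ x) {a : ℝ} (ha : 0 < a) (p : ℝ[X]) :
    ∫ x, rexp (-(a * x)) * p.eval (rexp (-(a * x))) ∂μ
      = ∑ k ∈ Finset.range (p.natDegree + 1),
          p.coeff k * ∫ x, rexp (-((((k : ℝ) + 1) * a) * x)) ∂μ := by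
  have key : ∀ x : ℝ, rexp (-(a * x)) * p.eval (rexp (-(a * x)))
      = ∑ k ∈ Finset.range (p.natDegree + 1),
          p.coeff k * rexp (-((((k : ℝ) + 1) * a) * x)) := by
    intro x
    rw [Polynomial.eval_eq_sum_range, Finset.mul_sum]
    refine Finset.sum_congr rfl fun k _ => ?_
    rw [← exp_pow_eq a x k]
    ring
  simp_rw [key]
  rw [integral_finset_sum]
  · simp_rw [integral_const_mul]
  · intro k _
    exact (integrable_exp_neg_mul hμ0
      (by positivity : (0:ℝ) ≤ ((k : ℝ) + 1) * a)).const_mul _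

lemma tendsto_poly (hθ : 0 < θ) (hμ0 : ∀ᵐ x ∂μ, 0 ≤ x)
    (hH : Tendsto (fun a : ℝ => a ^ θ * ∫ x, rexp (-(a * x)) ∂μ) atTop (𝓝 A)) (p : ℝ[X]) :
    Tendsto (fun a : ℝ => a ^ θ * ∫ x, rexp (-(a * x)) * p.eval (rexp (-(a * x))) ∂μ)
      atTop (𝓝 (A * Lam θ p)) := by
  have h1 : Tendsto (fun a : ℝ => ∑ k ∈ Finset.range (p.natDegree + 1),
      p.coeff k * (a ^ θ * ∫ x, rexp (-((((k : ℝ) + 1) * a) * x)) ∂μ)) atTop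
      (𝓝 (∑ k ∈ Finset.range (p.natDegree + 1), p.coeff k * (A / ((k : ℝ) + 1) ^ θ))) := by
    refine tendsto_finset_sum _ fun k _ => ?_
    exact (tendsto_rescale hθ hH (by positivity : (0:ℝ) < (k : ℝ) + 1)).const_mul _
  have h2 : (∑ k ∈ Finset.range (p.natDegree + 1), p.coeff k * (A / ((k : ℝ) + 1) ^ θ))
      = A * Lam θ p := by
    rw [Lam, Finset.mul_sum]
    exact Finset.sum_congr rfl fun k _ => by ring
  rw [← h2]
  refine h1.congr' ?_
  filter_upwards [eventually_gt_atTop (0:ℝ)] with a ha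
  rw [integral_poly hμ0 ha, Finset.mul_sum]
  exact Finset.sum_congr rfl fun k _ => by ring




lemma integral_exp_mul_rpow (hθ : 0 < θ) {c : ℝ} (hc : 0 < c) :
    ∫ u in Ioi (0:ℝ), rexp (-(c * u)) * u ^ (θ - 1) = Real.Gamma θ / c ^ θ := by
  have h := Real.integral_rpow_mul_exp_neg_mul_Ioi hθ hc
  calc ∫ u in Ioi (0:ℝ), rexp (-(c * u)) * u ^ (θ - 1)
      = ∫ u in Ioi (0:ℝ), u ^ (θ - 1) * rexp (-(c * u)) := by
        refine setIntegral_congr_fun measurableSet_Ioi fun u _ => mul_comm _ _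
    _ = (1 / c) ^ θ * Real.Gamma θ := h
    _ = Real.Gamma θ / c ^ θ := by
        rw [one_div, Real.inv_rpow hc.le, inv_mul_eq_div]

lemma integrableOn_exp_mul_rpow (hθ : 0 < θ) {c : ℝ} (hc : 0 < c) :
    IntegrableOn (fun u => rexp (-(c * u)) * u ^ (θ - 1)) (Ioi (0:ℝ)) := by
  have base : IntegrableOn (fun x : ℝ => rexp (-x) * x ^ (θ - 1)) (Ioi (0:ℝ)) :=
    Real.GammaIntegral_convergent hθ
  have h1 : IntegrableOn (fun u : ℝ => rexp (-(c * u)) * (c * u) ^ (θ - 1)) (Ioi (0:ℝ)) := by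
    have := (integrableOn_Ioi_comp_mul_left_iff
      (fun x : ℝ => rexp (-x) * x ^ (θ - 1)) 0 hc).mpr (by simpa using base)
    simpa using this
  have h2 := h1.const_mul ((c : ℝ) ^ (θ - 1))⁻¹
  refine (integrableOn_congr_fun (fun u hu => ?_) measurableSet_Ioi).mp h2
  rw [Real.mul_rpow hc.le (le_of_lt hu)]
  have hcne : (c : ℝ) ^ (θ - 1) ≠ 0 := (Real.rpow_pos_of_pos hc _).ne'
  field_simp

lemma exp_pow_eq' (u : ℝ) (k : ℕ) :
    rexp (-u) * rexp (-u) ^ k = rexp (-(((k : ℝ) + 1) * u)) := by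
  rw [← Real.exp_nat_mul, ← Real.exp_add]
  congr 1
  ring

/-- integral representation of the coefficient functional -/
lemma Lam_eq (hθ : 0 < θ) (p : ℝ[X]) :
    Real.Gamma θ * Lam θ p
      = ∫ u in Ioi (0:ℝ), (rexp (-u) * p.eval (rexp (-u))) * u ^ (θ - 1) := by
  have key : ∀ u : ℝ, (rexp (-u) * p.eval (rexp (-u))) * u ^ (θ - 1)
      = ∑ k ∈ Finset.range (p.natDegree + 1),
          p.coeff k * (rexp (-(((k : ℝ) + 1) * u)) * u ^ (θ - 1)) := by
    intro u
    rw [Polynomial.eval_eq_sum_range, Finset.mul_sum, Finset.sum_mul]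
    refine Finset.sum_congr rfl fun k _ => ?_
    rw [← exp_pow_eq' u k]
    ring
  simp_rw [key]
  rw [integral_finset_sum]
  · simp_rw [integral_const_mul]
    rw [Lam, Finset.mul_sum]
    refine Finset.sum_congr rfl fun k _ => ?_
    rw [integral_exp_mul_rpow hθ (by positivity : (0:ℝ) < (k : ℝ) + 1)]
    ring
  · intro k _
    exact ((integrableOn_exp_mul_rpow hθ
      (by positivity : (0:ℝ) < (k : ℝ) + 1))).const_mul _

/-- integral of the indicator of `Iic c` against `u ^ (θ - 1)` -/
lemma integral_ind_rpow (hθ : 0 < θ) {c : ℝ} (hc : 0 < c) :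
    ∫ u in Ioi (0:ℝ), (if u ≤ c then u ^ (θ - 1) else 0) = c ^ θ / θ := by
  have h1 : ∀ u : ℝ, (if u ≤ c then u ^ (θ - 1) else 0)
      = (Iic c).indicator (fun u : ℝ => u ^ (θ - 1)) u := by
    intro u; rw [Set.indicator_apply]; simp [Set.mem_Iic]
  simp_rw [h1]
  rw [setIntegral_indicator measurableSet_Iic]
  have h2 : Ioi (0:ℝ) ∩ Iic c = Ioc 0 c := Set.Ioi_inter_Iic
  rw [h2, ← intervalIntegral.integral_of_le hc.le, integral_rpow (Or.inl (by linarith)),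
    sub_add_cancel, Real.zero_rpow hθ.ne', sub_zero]

lemma integrableOn_ind_rpow (hθ : 0 < θ) (c : ℝ) :
    IntegrableOn (fun u : ℝ => if u ≤ c then u ^ (θ - 1) else 0) (Ioi (0:ℝ)) := by
  have h1 : ∀ u : ℝ, (if u ≤ c then u ^ (θ - 1) else 0)
      = (Iic c).indicator (fun u : ℝ => u ^ (θ - 1)) u := by
    intro u; rw [Set.indicator_apply]; simp [Set.mem_Iic]
  simp_rw [h1]
  rw [IntegrableOn, integrable_indicator_iff measurableSet_Iic, IntegrableOn,
    Measure.restrict_restrict measurableSet_Iic]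
  rcases le_or_gt c 0 with h | h
  · refine Integrable.mono_measure (integrable_zero_measure) ?_
    have : Iic c ∩ Ioi 0 = ∅ := by
      ext u; simp only [Set.mem_inter_iff, Set.mem_Iic, Set.mem_Ioi, Set.mem_empty_iff_false]
      constructor
      · rintro ⟨h1, h2⟩; linarith
      · exact False.elim
    rw [this]
    simp
  · have : Iic c ∩ Ioi 0 = Ioc 0 c := by rw [Set.inter_comm]; exact Set.Ioi_inter_Iic
    rw [this]
    have := (intervalIntegral.intervalIntegrable_rpow' (r := θ - 1) (a := 0) (b := c)
      (by linarith))
    rw [intervalIntegrable_iff_integrableOn_Ioc_of_le h.le] at this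
    exact this

lemma integrableOn_poly_rpow (hθ : 0 < θ) (p : ℝ[X]) :
    IntegrableOn (fun u => (rexp (-u) * p.eval (rexp (-u))) * u ^ (θ - 1)) (Ioi (0:ℝ)) := by
  obtain ⟨M, hM⟩ := isCompact_Icc.exists_bound_of_continuousOn
    (f := fun y : ℝ => p.eval y) (s := Icc (0:ℝ) 1) p.continuous.continuousOn
  refine ((integrableOn_exp_mul_rpow hθ one_pos).const_mul M).mono' ?_ ?_
  · refine Measurable.aestronglyMeasurable ?_
    have h1 : Measurable fun u : ℝ => rexp (-u) * p.eval (rexp (-u)) :=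
      ((Real.continuous_exp.comp continuous_neg).mul
        (p.continuous.comp (Real.continuous_exp.comp continuous_neg))).measurable
    exact h1.mul (by fun_prop : Measurable fun u : ℝ => u ^ (θ - 1))
  · filter_upwards [ae_restrict_mem measurableSet_Ioi] with u (hu : 0 < u)
    have he : rexp (-u) ∈ Icc (0:ℝ) 1 :=
      ⟨(exp_pos _).le, exp_le_one_iff.mpr (by linarith)⟩
    have hMe := hM _ he
    have hru : (0:ℝ) ≤ u ^ (θ - 1) := Real.rpow_nonneg hu.le _
    rw [norm_eq_abs, abs_mul, abs_mul, abs_exp, abs_of_nonneg hru, one_mul]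
    have habs : |p.eval (rexp (-u))| ≤ M := hMe
    have hexp := (exp_pos (-u)).le
    nlinarith [mul_le_mul_of_nonneg_right (mul_le_mul_of_nonneg_left habs hexp) hru,
      abs_nonneg (p.eval (rexp (-u)))]

lemma Lam_le_of (hθ : 0 < θ) {q : ℝ[X]} {c δ : ℝ} (hc : 0 < c) (hδ : 0 ≤ δ)
    (hq : ∀ u : ℝ, 0 < u →
      rexp (-u) * q.eval (rexp (-u)) ≤ (if u ≤ c then 1 else 0) + 2 * δ * rexp (-u)) :
    Lam θ q ≤ c ^ θ / Real.Gamma (θ + 1) + 2 * δ := by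
  have hG : 0 < Real.Gamma θ := Real.Gamma_pos_of_pos hθ
  have key : Real.Gamma θ * Lam θ q ≤ c ^ θ / θ + 2 * δ * Real.Gamma θ := by
    rw [Lam_eq hθ q]
    have int2a := integrableOn_ind_rpow hθ c
    have int2b := (integrableOn_exp_mul_rpow hθ one_pos).const_mul (2 * δ)
    have hle : ∀ u ∈ Ioi (0:ℝ), (rexp (-u) * q.eval (rexp (-u))) * u ^ (θ - 1)
        ≤ (if u ≤ c then u ^ (θ - 1) else 0) + 2 * δ * (rexp (-(1 * u)) * u ^ (θ - 1)) := by
      intro u hu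
      have h2 := hq u hu
      have hru : (0:ℝ) ≤ u ^ (θ - 1) := Real.rpow_nonneg (le_of_lt hu) _
      have h3 := mul_le_mul_of_nonneg_right h2 hru
      rw [one_mul]
      calc (rexp (-u) * q.eval (rexp (-u))) * u ^ (θ - 1)
          ≤ ((if u ≤ c then 1 else 0) + 2 * δ * rexp (-u)) * u ^ (θ - 1) := h3
        _ = (if u ≤ c then u ^ (θ - 1) else 0) + 2 * δ * (rexp (-u) * u ^ (θ - 1)) := by
            split_ifs <;> ring
    have hmono := setIntegral_mono_on (integrableOn_poly_rpow hθ q)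
      (int2a.add int2b) measurableSet_Ioi hle
    simp only [Pi.add_apply] at hmono
    rw [integral_add int2a int2b, integral_ind_rpow hθ hc, integral_const_mul,
      integral_exp_mul_rpow hθ one_pos, Real.one_rpow, div_one] at hmono
    exact hmono
  have h4 : Lam θ q ≤ (c ^ θ / θ + 2 * δ * Real.Gamma θ) / Real.Gamma θ :=
    (le_div_iff₀ hG).mpr (by linarith [key])
  have h5 : (c ^ θ / θ + 2 * δ * Real.Gamma θ) / Real.Gamma θ
      = c ^ θ / (θ * Real.Gamma θ) + 2 * δ := by
    field_simp
  rw [Real.Gamma_add_one hθ.ne']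
  linarith [h4, h5.symm ▸ h4]

lemma Lam_ge_of (hθ : 0 < θ) {p : ℝ[X]} {c δ : ℝ} (hc : 0 < c) (hδ : 0 ≤ δ)
    (hp : ∀ u : ℝ, 0 < u →
      (if u ≤ c then (1:ℝ) else 0) - 2 * δ * rexp (-u) ≤ rexp (-u) * p.eval (rexp (-u))) :
    c ^ θ / Real.Gamma (θ + 1) - 2 * δ ≤ Lam θ p := by
  have hG : 0 < Real.Gamma θ := Real.Gamma_pos_of_pos hθ
  have key : c ^ θ / θ - 2 * δ * Real.Gamma θ ≤ Real.Gamma θ * Lam θ p := by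
    rw [Lam_eq hθ p]
    have int2a := integrableOn_ind_rpow hθ c
    have int2b := (integrableOn_exp_mul_rpow hθ one_pos).const_mul (2 * δ)
    have hle : ∀ u ∈ Ioi (0:ℝ),
        (if u ≤ c then u ^ (θ - 1) else 0) - 2 * δ * (rexp (-(1 * u)) * u ^ (θ - 1))
          ≤ (rexp (-u) * p.eval (rexp (-u))) * u ^ (θ - 1) := by
      intro u hu
      have h2 := hp u hu
      have hru : (0:ℝ) ≤ u ^ (θ - 1) := Real.rpow_nonneg (le_of_lt hu) _
      have h3 := mul_le_mul_of_nonneg_right h2 hru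
      rw [one_mul]
      calc (if u ≤ c then u ^ (θ - 1) else 0) - 2 * δ * (rexp (-u) * u ^ (θ - 1))
          = ((if u ≤ c then (1:ℝ) else 0) - 2 * δ * rexp (-u)) * u ^ (θ - 1) := by
            split_ifs <;> ring
        _ ≤ (rexp (-u) * p.eval (rexp (-u))) * u ^ (θ - 1) := h3
    have hmono := setIntegral_mono_on (int2a.sub int2b)
      (integrableOn_poly_rpow hθ p) measurableSet_Ioi hle
    simp only [Pi.sub_apply] at hmono
    rw [integral_sub int2a int2b, integral_ind_rpow hθ hc, integral_const_mul,
      integral_exp_mul_rpow hθ one_pos, Real.one_rpow, div_one] at hmono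
    exact hmono
  have h4 : (c ^ θ / θ - 2 * δ * Real.Gamma θ) / Real.Gamma θ ≤ Lam θ p :=
    (div_le_iff₀ hG).mpr (by linarith [key])
  have h5 : (c ^ θ / θ - 2 * δ * Real.Gamma θ) / Real.Gamma θ
      = c ^ θ / (θ * Real.Gamma θ) - 2 * δ := by
    field_simp
  rw [Real.Gamma_add_one hθ.ne']
  linarith [h4, h5 ▸ h4]



lemma exists_poly_sandwich {s δ : ℝ} (hs : 0 < s) (hs1 : s < 1) (hδ : 0 < δ) :
    ∃ p q : ℝ[X],
      (∀ x ∈ Ioc (0:ℝ) 1, x * p.eval x ≤ (if rexp (-1) ≤ x then 1 else 0)) ∧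
      (∀ x ∈ Ioc (0:ℝ) 1, (if rexp (-1) ≤ x then 1 else 0) ≤ x * q.eval x) ∧
      (∀ x ∈ Icc (0:ℝ) 1, (if rexp (-(1-s)) ≤ x then (1:ℝ) else 0) - 2*δ*x ≤ x * p.eval x) ∧
      (∀ x ∈ Icc (0:ℝ) 1, x * q.eval x ≤ (if rexp (-(1+s)) ≤ x then (1:ℝ) else 0) + 2*δ*x) := by
  set e1 := rexp (-1) with he1def
  set x₂ := rexp (-(1-s)) with hx2def
  set x₁ := rexp (-(1+s)) with hx1def
  have h12 : x₁ < e1 := exp_lt_exp.mpr (by linarith)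
  have h1e : e1 < x₂ := exp_lt_exp.mpr (by linarith)
  have hx1pos : 0 < x₁ := exp_pos _
  have he1pos : 0 < e1 := exp_pos _
  set m : ℝ → ℝ := fun x => max x e1 with hmdef
  have hmpos : ∀ x, 0 < m x := fun x => lt_of_lt_of_le he1pos (le_max_right _ _)
  set gm : ℝ → ℝ := fun x => min 1 (max 0 ((x - e1)/(x₂ - e1))) / m x with hgmdef
  set gp : ℝ → ℝ := fun x => min 1 (max 0 ((x - x₁)/(e1 - x₁))) / m x with hgpdef
  have hgm0 : ∀ x, 0 ≤ gm x := fun x =>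
    div_nonneg (le_min zero_le_one (le_max_left _ _)) (hmpos x).le
  have hgp0 : ∀ x, 0 ≤ gp x := fun x =>
    div_nonneg (le_min zero_le_one (le_max_left _ _)) (hmpos x).le
  -- key pointwise facts
  have hgm_ub : ∀ x, 0 ≤ x → x * gm x ≤ (if e1 ≤ x then 1 else 0) := by
    intro x hx
    split_ifs with h
    · have hx0 : x ≠ 0 := by intro h0; rw [h0] at h; linarith
      have hmx : m x = x := max_eq_left h
      rw [hgmdef]
      simp only
      rw [hmx, mul_div_assoc']
      rw [mul_comm, mul_div_assoc, div_self hx0, mul_one]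
      exact min_le_left _ _
    · push_neg at h
      have hr : (x - e1)/(x₂ - e1) ≤ 0 := div_nonpos_of_nonpos_of_nonneg (by linarith) (by linarith)
      have : gm x = 0 := by
        rw [hgmdef]
        simp only
        rw [max_eq_left hr, min_eq_right zero_le_one, zero_div]
      rw [this, mul_zero]
  have hgm_lb : ∀ x, 0 ≤ x → (if x₂ ≤ x then (1:ℝ) else 0) ≤ x * gm x := by
    intro x hx
    split_ifs with h
    · have hx0 : x ≠ 0 := by intro h0; rw [h0] at h; linarith
      have hmx : m x = x := max_eq_left (by linarith)
      have hr : (1:ℝ) ≤ (x - e1)/(x₂ - e1) := by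
        rw [le_div_iff₀ (by linarith)]
        linarith
      have hnum : min 1 (max 0 ((x - e1)/(x₂ - e1))) = 1 :=
        min_eq_left (le_trans hr (le_max_right _ _))
      rw [hgmdef]
      simp only
      rw [hnum, hmx, mul_one_div, div_self hx0]
    · exact mul_nonneg hx (hgm0 x)
  have hgp_lb : ∀ x, 0 < x → (if e1 ≤ x then (1:ℝ) else 0) ≤ x * gp x := by
    intro x hx
    split_ifs with h
    · have hx0 : x ≠ 0 := hx.ne'
      have hmx : m x = x := max_eq_left h
      have hr : (1:ℝ) ≤ (x - x₁)/(e1 - x₁) := by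
        rw [le_div_iff₀ (by linarith)]
        linarith
      have hnum : min 1 (max 0 ((x - x₁)/(e1 - x₁))) = 1 :=
        min_eq_left (le_trans hr (le_max_right _ _))
      rw [hgpdef]
      simp only
      rw [hnum, hmx, mul_one_div, div_self hx0]
    · exact mul_nonneg hx.le (hgp0 x)
  have hgp_ub : ∀ x, 0 ≤ x → x * gp x ≤ (if x₁ ≤ x then (1:ℝ) else 0) := by
    intro x hx
    split_ifs with h
    · have hnum : min 1 (max 0 ((x - x₁)/(e1 - x₁))) ≤ 1 := min_le_left _ _
      have hnum0 : 0 ≤ min 1 (max 0 ((x - x₁)/(e1 - x₁))) :=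
        le_min zero_le_one (le_max_left _ _)
      rw [hgpdef]
      simp only
      rw [mul_div_assoc', div_le_one (hmpos x)]
      calc x * min 1 (max 0 ((x - x₁)/(e1 - x₁))) ≤ x * 1 :=
            mul_le_mul_of_nonneg_left hnum hx
        _ = x := mul_one x
        _ ≤ m x := le_max_left _ _
    · push_neg at h
      have hr : (x - x₁)/(e1 - x₁) ≤ 0 := div_nonpos_of_nonpos_of_nonneg (by linarith) (by linarith)
      have : gp x = 0 := by
        rw [hgpdef]
        simp only
        rw [max_eq_left hr, min_eq_right zero_le_one, zero_div]
      rw [this, mul_zero]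
  -- continuity
  have hgmc : Continuous gm := by
    rw [hgmdef]
    refine Continuous.div ?_ ?_ fun x => (hmpos x).ne'
    · exact continuous_const.min (continuous_const.max ((continuous_id.sub continuous_const).div_const _))
    · exact continuous_id.max continuous_const
  have hgpc : Continuous gp := by
    rw [hgpdef]
    refine Continuous.div ?_ ?_ fun x => (hmpos x).ne'
    · exact continuous_const.min (continuous_const.max ((continuous_id.sub continuous_const).div_const _))
    · exact continuous_id.max continuous_const
  obtain ⟨p₀, hp₀⟩ := exists_polynomial_near_of_continuousOn 0 1 gm hgmc.continuousOn δ hδ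
  obtain ⟨q₀, hq₀⟩ := exists_polynomial_near_of_continuousOn 0 1 gp hgpc.continuousOn δ hδ
  refine ⟨p₀ - Polynomial.C δ, q₀ + Polynomial.C δ, ?_, ?_, ?_, ?_⟩
  · intro x hx
    have h1 := hp₀ x (Ioc_subset_Icc_self hx)
    rw [abs_lt] at h1
    have hpe : (p₀ - Polynomial.C δ).eval x = p₀.eval x - δ := by simp
    rw [hpe]
    calc x * (p₀.eval x - δ) ≤ x * gm x :=
          mul_le_mul_of_nonneg_left (by linarith [h1.2]) hx.1.le
      _ ≤ _ := hgm_ub x hx.1.le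
  · intro x hx
    have h1 := hq₀ x (Ioc_subset_Icc_self hx)
    rw [abs_lt] at h1
    have hqe : (q₀ + Polynomial.C δ).eval x = q₀.eval x + δ := by simp
    rw [hqe]
    calc (if e1 ≤ x then (1:ℝ) else 0) ≤ x * gp x := hgp_lb x hx.1
      _ ≤ x * (q₀.eval x + δ) :=
          mul_le_mul_of_nonneg_left (by linarith [h1.1]) hx.1.le
  · intro x hx
    have h1 := hp₀ x hx
    rw [abs_lt] at h1
    have hpe : (p₀ - Polynomial.C δ).eval x = p₀.eval x - δ := by simp
    rw [hpe]
    have step : x * (gm x - 2*δ) ≤ x * (p₀.eval x - δ) :=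
      mul_le_mul_of_nonneg_left (by linarith [h1.1]) hx.1
    have := hgm_lb x hx.1
    nlinarith [this, step]
  · intro x hx
    have h1 := hq₀ x hx
    rw [abs_lt] at h1
    have hqe : (q₀ + Polynomial.C δ).eval x = q₀.eval x + δ := by simp
    rw [hqe]
    have step : x * (q₀.eval x + δ) ≤ x * (gp x + 2*δ) :=
      mul_le_mul_of_nonneg_left (by linarith [h1.2]) hx.1
    have := hgp_ub x hx.1
    nlinarith [this, step]

lemma integrable_poly_weight (hμ0 : ∀ᵐ x ∂μ, 0 ≤ x) {a : ℝ} (ha : 0 ≤ a) (p : ℝ[X]) :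
    Integrable (fun x => rexp (-(a * x)) * p.eval (rexp (-(a * x)))) μ := by
  obtain ⟨M, hM⟩ := isCompact_Icc.exists_bound_of_continuousOn
    (f := fun y : ℝ => y * p.eval y) (s := Icc (0:ℝ) 1)
    (continuous_id.mul p.continuous).continuousOn
  have hc : Continuous fun x : ℝ => rexp (-(a * x)) :=
    Real.continuous_exp.comp (continuous_const.mul continuous_id).neg
  refine (integrable_const M).mono' (hc.mul (p.continuous.comp hc)).aestronglyMeasurable ?_
  filter_upwards [hμ0] with x hx
  have he : rexp (-(a * x)) ∈ Icc (0:ℝ) 1 :=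
    ⟨(exp_pos _).le, exp_le_one_iff.mpr (by nlinarith)⟩
  exact hM _ he

lemma sandwich_integrals (hμ0 : ∀ᵐ x ∂μ, 0 ≤ x) {a : ℝ} (ha : 0 < a) {p q : ℝ[X]}
    (hp : ∀ x ∈ Ioc (0:ℝ) 1, x * p.eval x ≤ (if rexp (-1) ≤ x then 1 else 0))
    (hq : ∀ x ∈ Ioc (0:ℝ) 1, (if rexp (-1) ≤ x then 1 else 0) ≤ x * q.eval x) :
    (∫ x, rexp (-(a * x)) * p.eval (rexp (-(a * x))) ∂μ ≤ (μ (Iic (1/a))).toReal)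
    ∧ ((μ (Iic (1/a))).toReal ≤ ∫ x, rexp (-(a * x)) * q.eval (rexp (-(a * x))) ∂μ) := by
  have hind : (μ (Iic (1/a))).toReal = ∫ x, (Iic (1/a)).indicator (fun _ => (1:ℝ)) x ∂μ := by
    rw [integral_indicator_const (1:ℝ) measurableSet_Iic]
    simp
    rfl
  have hintp := integrable_poly_weight hμ0 ha.le p
  have hintq := integrable_poly_weight hμ0 ha.le q
  have hindint : Integrable ((Iic (1/a)).indicator fun _ => (1:ℝ)) μ :=
    (integrable_const 1).indicator measurableSet_Iic
  have hiff : ∀ x : ℝ, x ∈ Iic (1/a) ↔ rexp (-1) ≤ rexp (-(a * x)) := by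
    intro x
    rw [Set.mem_Iic, exp_le_exp, neg_le_neg_iff, le_div_iff₀ ha, mul_comm]
  constructor
  · rw [hind]
    refine integral_mono_ae hintp hindint ?_
    filter_upwards [hμ0] with x hx
    have hmem : rexp (-(a * x)) ∈ Ioc (0:ℝ) 1 :=
      ⟨exp_pos _, exp_le_one_iff.mpr (by nlinarith)⟩
    have h2 := hp _ hmem
    rw [Set.indicator_apply]
    split_ifs with hmem2
    · rwa [if_pos ((hiff x).mp hmem2)] at h2
    · rwa [if_neg (fun hcon => hmem2 ((hiff x).mpr hcon))] at h2
  · rw [hind]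
    refine integral_mono_ae hindint hintq ?_
    filter_upwards [hμ0] with x hx
    have hmem : rexp (-(a * x)) ∈ Ioc (0:ℝ) 1 :=
      ⟨exp_pos _, exp_le_one_iff.mpr (by nlinarith)⟩
    have h2 := hq _ hmem
    rw [Set.indicator_apply]
    split_ifs with hmem2
    · rwa [if_pos ((hiff x).mp hmem2)] at h2
    · rwa [if_neg (fun hcon => hmem2 ((hiff x).mpr hcon))] at h2

lemma forward (hθ : 0 < θ) (hA : 0 < A) (hμ0 : ∀ᵐ x ∂μ, 0 ≤ x)
    (hH : Tendsto (fun a : ℝ => a ^ θ * ∫ x, rexp (-(a * x)) ∂μ) atTop (𝓝 A)) :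
    Tendsto (fun ε : ℝ => (μ (Iic ε)).toReal / ε ^ θ) (𝓝[>] 0)
      (𝓝 (A / Real.Gamma (θ + 1))) := by
  have hGpos : 0 < Real.Gamma (θ + 1) := Real.Gamma_pos_of_pos (by linarith)
  have hmain : Tendsto (fun a : ℝ => a ^ θ * (μ (Iic (1/a))).toReal) atTop
      (𝓝 (A / Real.Gamma (θ + 1))) := by
    rw [tendsto_order]
    constructor
    · intro c hc
      have hcont : Tendsto (fun s : ℝ => A * ((1-s) ^ θ / Real.Gamma (θ+1) - 2*s)) (𝓝 0)
          (𝓝 (A / Real.Gamma (θ+1))) := by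
        have hval : A * ((1-(0:ℝ)) ^ θ / Real.Gamma (θ+1) - 2*0) = A / Real.Gamma (θ+1) := by
          rw [sub_zero, Real.one_rpow]
          ring
        rw [← hval]
        refine (ContinuousAt.tendsto ?_)
        have h1 : ContinuousAt (fun s : ℝ => (1-s) ^ θ) 0 := by
          have hb : ContinuousAt (fun y : ℝ => y ^ θ) ((fun s : ℝ => 1 - s) 0) := by
            simp only [sub_zero]
            exact Real.continuousAt_rpow_const 1 θ (Or.inl one_ne_zero)
          exact hb.comp (by fun_prop)
        exact (continuousAt_const.mul ((h1.div_const _).sub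
          (continuous_const.mul continuous_id).continuousAt))
      obtain ⟨s, hs_pos, hs_lt, hs_gt⟩ :
          ∃ s : ℝ, 0 < s ∧ s < 1 ∧ c < A * ((1-s) ^ θ / Real.Gamma (θ+1) - 2*s) := by
        have h1 : ∀ᶠ s in 𝓝[>] (0:ℝ), c < A * ((1-s) ^ θ / Real.Gamma (θ+1) - 2*s) :=
          (hcont.mono_left nhdsWithin_le_nhds).eventually_const_lt hc
        have h2 : ∀ᶠ s in 𝓝[>] (0:ℝ), s < 1 :=
          eventually_nhdsWithin_of_eventually_nhds (eventually_lt_nhds one_pos)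
        have h3 : ∀ᶠ s in 𝓝[>] (0:ℝ), s ∈ Ioi (0:ℝ) := self_mem_nhdsWithin
        obtain ⟨s, hs1, hs2, hs3⟩ := (h1.and (h2.and h3)).exists
        exact ⟨s, hs3, hs2, hs1⟩
      obtain ⟨p, q, hp, hq, hp2, hq2⟩ := exists_poly_sandwich hs_pos hs_lt hs_pos
      have hLam : (1-s) ^ θ / Real.Gamma (θ+1) - 2*s ≤ Lam θ p := by
        refine Lam_ge_of hθ (by linarith : (0:ℝ) < 1 - s) hs_pos.le ?_
        intro u hu
        have hx : rexp (-u) ∈ Icc (0:ℝ) 1 :=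
          ⟨(exp_pos _).le, exp_le_one_iff.mpr (by linarith)⟩
        have h2 := hp2 _ hx
        have hiff : (rexp (-(1-s)) ≤ rexp (-u)) ↔ u ≤ 1 - s := by
          rw [exp_le_exp, neg_le_neg_iff]
        by_cases hcase : u ≤ 1 - s
        · rw [if_pos hcase]
          rw [if_pos (hiff.mpr hcase)] at h2
          linarith
        · rw [if_neg hcase]
          rw [if_neg (fun hcon => hcase (hiff.mp hcon))] at h2
          linarith
      have hlim := tendsto_poly hθ hμ0 hH p
      have hAc : c < A * Lam θ p :=
        lt_of_lt_of_le hs_gt (mul_le_mul_of_nonneg_left hLam hA.le)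
      have hev1 := hlim.eventually_const_lt hAc
      filter_upwards [hev1, eventually_gt_atTop (0:ℝ)] with a h1 h2
      have hsand := (sandwich_integrals hμ0 h2 hp hq).1
      have h3 : a ^ θ * (∫ x, rexp (-(a * x)) * p.eval (rexp (-(a * x))) ∂μ)
          ≤ a ^ θ * (μ (Iic (1/a))).toReal :=
        mul_le_mul_of_nonneg_left hsand (Real.rpow_nonneg h2.le θ)
      linarith
    · intro c hc
      have hcont : Tendsto (fun s : ℝ => A * ((1+s) ^ θ / Real.Gamma (θ+1) + 2*s)) (𝓝 0)
          (𝓝 (A / Real.Gamma (θ+1))) := by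
        have hval : A * ((1+(0:ℝ)) ^ θ / Real.Gamma (θ+1) + 2*0) = A / Real.Gamma (θ+1) := by
          rw [add_zero, Real.one_rpow]
          ring
        rw [← hval]
        refine (ContinuousAt.tendsto ?_)
        have h1 : ContinuousAt (fun s : ℝ => (1+s) ^ θ) 0 := by
          have hb : ContinuousAt (fun y : ℝ => y ^ θ) ((fun s : ℝ => 1 + s) 0) := by
            simp only [add_zero]
            exact Real.continuousAt_rpow_const 1 θ (Or.inl one_ne_zero)
          exact hb.comp (by fun_prop)
        exact (continuousAt_const.mul ((h1.div_const _).add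
          (continuous_const.mul continuous_id).continuousAt))
      obtain ⟨s, hs_pos, hs_lt, hs_gt⟩ :
          ∃ s : ℝ, 0 < s ∧ s < 1 ∧ A * ((1+s) ^ θ / Real.Gamma (θ+1) + 2*s) < c := by
        have h1 : ∀ᶠ s in 𝓝[>] (0:ℝ), A * ((1+s) ^ θ / Real.Gamma (θ+1) + 2*s) < c :=
          (hcont.mono_left nhdsWithin_le_nhds).eventually_lt_const hc
        have h2 : ∀ᶠ s in 𝓝[>] (0:ℝ), s < 1 :=
          eventually_nhdsWithin_of_eventually_nhds (eventually_lt_nhds one_pos)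
        have h3 : ∀ᶠ s in 𝓝[>] (0:ℝ), s ∈ Ioi (0:ℝ) := self_mem_nhdsWithin
        obtain ⟨s, hs1, hs2, hs3⟩ := (h1.and (h2.and h3)).exists
        exact ⟨s, hs3, hs2, hs1⟩
      obtain ⟨p, q, hp, hq, hp2, hq2⟩ := exists_poly_sandwich hs_pos hs_lt hs_pos
      have hLam : Lam θ q ≤ (1+s) ^ θ / Real.Gamma (θ+1) + 2*s := by
        refine Lam_le_of hθ (by linarith : (0:ℝ) < 1 + s) hs_pos.le ?_
        intro u hu
        have hx : rexp (-u) ∈ Icc (0:ℝ) 1 :=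
          ⟨(exp_pos _).le, exp_le_one_iff.mpr (by linarith)⟩
        have h2 := hq2 _ hx
        have hiff : (rexp (-(1+s)) ≤ rexp (-u)) ↔ u ≤ 1 + s := by
          rw [exp_le_exp, neg_le_neg_iff]
        by_cases hcase : u ≤ 1 + s
        · rw [if_pos hcase]
          rw [if_pos (hiff.mpr hcase)] at h2
          linarith
        · rw [if_neg hcase]
          rw [if_neg (fun hcon => hcase (hiff.mp hcon))] at h2
          linarith
      have hlim := tendsto_poly hθ hμ0 hH q
      have hAc : A * Lam θ q < c :=
        lt_of_le_of_lt (mul_le_mul_of_nonneg_left hLam hA.le) hs_gt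
      have hev1 := hlim.eventually_lt_const hAc
      filter_upwards [hev1, eventually_gt_atTop (0:ℝ)] with a h1 h2
      have hsand := (sandwich_integrals hμ0 h2 hp hq).2
      have h3 : a ^ θ * (μ (Iic (1/a))).toReal
          ≤ a ^ θ * (∫ x, rexp (-(a * x)) * q.eval (rexp (-(a * x))) ∂μ) :=
        mul_le_mul_of_nonneg_left hsand (Real.rpow_nonneg h2.le θ)
      linarith
  have hinv : Tendsto (fun ε : ℝ => ε⁻¹) (𝓝[>] (0:ℝ)) atTop := tendsto_inv_nhdsGT_zero
  refine (hmain.comp hinv).congr' ?_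
  filter_upwards [self_mem_nhdsWithin] with ε (hε : ε ∈ Ioi (0:ℝ))
  simp only [Function.comp_apply]
  rw [one_div, inv_inv, Real.inv_rpow (le_of_lt hε), inv_mul_eq_div]




lemma F_measurable : Measurable (fun t : ℝ => (μ (Iic t)).toReal) :=
  Monotone.measurable (fun s t hst => ENNReal.toReal_mono (measure_ne_top μ _)
    (measure_mono (Iic_subset_Iic.mpr hst)))

lemma integral_tail {a x : ℝ} (ha : 0 < a) :
    ∫ t in Ioi x, a * rexp (-(a * t)) = rexp (-(a * x)) := by
  have h0 : ∫ t in Ioi x, rexp (-(a * t)) = a⁻¹ * rexp (-(a * x)) := by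
    have := integral_comp_mul_left_Ioi (fun y : ℝ => rexp (-y)) x ha
    simp only [smul_eq_mul] at this
    rw [this, integral_exp_neg_Ioi]
  rw [MeasureTheory.integral_const_mul, h0, ← mul_assoc, mul_inv_cancel₀ ha.ne', one_mul]

lemma laplace_eq (hμ0 : ∀ᵐ x ∂μ, 0 ≤ x) {a : ℝ} (ha : 0 < a) :
    ∫ x, rexp (-(a * x)) ∂μ
      = ∫ t in Ioi (0:ℝ), a * rexp (-(a * t)) * (μ (Iic t)).toReal := by
  set H : ℝ × ℝ → ℝ≥0∞ := fun p =>
    {q : ℝ × ℝ | q.1 ≤ q.2}.indicator (fun q => ENNReal.ofReal (a * rexp (-(a * q.2)))) p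
    with hHdef
  have hHm : Measurable H := by
    refine Measurable.indicator ?_ (measurableSet_le measurable_fst measurable_snd)
    exact ENNReal.measurable_ofReal.comp
      ((continuous_const.mul (Real.continuous_exp.comp
        ((continuous_const.mul continuous_snd).neg))).measurable)
  -- inner identity for x ≥ 0
  have hinner : ∀ x : ℝ, 0 ≤ x →
      ∫⁻ t in Ioi (0:ℝ), H (x, t) = ENNReal.ofReal (rexp (-(a * x))) := by
    intro x hx
    have hfun : ∀ t : ℝ, H (x, t)
        = (Ici x).indicator (fun t => ENNReal.ofReal (a * rexp (-(a * t)))) t := by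
      intro t
      rw [hHdef]
      simp only [Set.indicator_apply, Set.mem_setOf_eq, Set.mem_Ici]
    simp_rw [hfun]
    rw [lintegral_indicator measurableSet_Ici, Measure.restrict_restrict measurableSet_Ici]
    have hset : (Ici x ∩ Ioi 0 : Set ℝ) =ᶠ[ae volume] (Ioi x : Set ℝ) := by
      rw [ae_eq_set]
      constructor
      · refine measure_mono_null (fun t ht => ?_) (volume_singleton (a := x))
        simp only [Set.mem_diff, Set.mem_inter_iff, Set.mem_Ici, Set.mem_Ioi,
          Set.mem_singleton_iff] at ht ⊢
        rcases ht with ⟨⟨h1, h2⟩, h3⟩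
        exact le_antisymm (not_lt.mp h3) h1
      · refine measure_mono_null (fun t ht => ?_) (measure_empty (μ := volume))
        simp only [Set.mem_diff, Set.mem_inter_iff, Set.mem_Ici, Set.mem_Ioi] at ht
        exact absurd ⟨le_of_lt ht.1, lt_of_le_of_lt hx ht.1⟩ ht.2
    rw [setLIntegral_congr hset]
    have hInt : IntegrableOn (fun t => a * rexp (-(a * t))) (Ioi x) := by
      have h5 := (exp_neg_integrableOn_Ioi x ha).const_mul a
      refine (integrableOn_congr_fun (fun t _ => ?_) measurableSet_Ioi).mp h5
      rw [neg_mul]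
    rw [← ofReal_integral_eq_lintegral_ofReal hInt
      (ae_of_all _ fun t => by positivity), integral_tail ha]
  -- swap
  have hswap : ∫⁻ x, (∫⁻ t in Ioi (0:ℝ), H (x, t)) ∂μ
      = ∫⁻ t in Ioi (0:ℝ), (∫⁻ x, H (x, t) ∂μ) := by
    exact lintegral_lintegral_swap (hHm.aemeasurable)
  -- inner after swap
  have hinner2 : ∀ t : ℝ, (∫⁻ x, H (x, t) ∂μ)
      = ENNReal.ofReal (a * rexp (-(a * t))) * μ (Iic t) := by
    intro t
    have hfun : ∀ x : ℝ, H (x, t)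
        = (Iic t).indicator (fun _ => ENNReal.ofReal (a * rexp (-(a * t)))) x := by
      intro x
      rw [hHdef]
      simp only [Set.indicator_apply, Set.mem_setOf_eq, Set.mem_Iic]
    simp_rw [hfun]
    rw [lintegral_indicator measurableSet_Iic, setLIntegral_const]
  -- put together in ℝ≥0∞
  have hENN : ∫⁻ x, ENNReal.ofReal (rexp (-(a * x))) ∂μ
      = ∫⁻ t in Ioi (0:ℝ), ENNReal.ofReal (a * rexp (-(a * t))) * μ (Iic t) := by
    have e1 : ∫⁻ x, ENNReal.ofReal (rexp (-(a * x))) ∂μ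
        = ∫⁻ x, (∫⁻ t in Ioi (0:ℝ), H (x, t)) ∂μ := by
      refine lintegral_congr_ae ?_
      filter_upwards [hμ0] with x hx
      exact (hinner x hx).symm
    rw [e1, hswap]
    exact lintegral_congr fun t => hinner2 t
  -- convert both sides
  have hL : ∫ x, rexp (-(a * x)) ∂μ
      = (∫⁻ x, ENNReal.ofReal (rexp (-(a * x))) ∂μ).toReal := by
    refine integral_eq_lintegral_of_nonneg_ae (ae_of_all _ fun x => (exp_pos _).le) ?_
    exact (Real.continuous_exp.comp (continuous_const.mul continuous_id).neg).aestronglyMeasurable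
  have hR : ∫ t in Ioi (0:ℝ), a * rexp (-(a * t)) * (μ (Iic t)).toReal
      = (∫⁻ t in Ioi (0:ℝ), ENNReal.ofReal (a * rexp (-(a * t))) * μ (Iic t)).toReal := by
    rw [integral_eq_lintegral_of_nonneg_ae (ae_of_all _ fun t => by positivity) ?_]
    · congr 1
      refine lintegral_congr fun t => ?_
      rw [ENNReal.ofReal_mul (by positivity), ENNReal.ofReal_toReal (measure_ne_top μ _)]
    · refine Measurable.aestronglyMeasurable ?_
      exact ((continuous_const.mul (Real.continuous_exp.comp
        ((continuous_const.mul continuous_id).neg))).measurable).mul F_measurable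
  rw [hL, hR, hENN]

lemma laplace_scaled (hμ0 : ∀ᵐ x ∂μ, 0 ≤ x) {a : ℝ} (ha : 0 < a) :
    a ^ θ * ∫ x, rexp (-(a * x)) ∂μ
      = ∫ s in Ioi (0:ℝ), a ^ θ * rexp (-s) * (μ (Iic (s / a))).toReal := by
  rw [laplace_eq hμ0 ha, ← MeasureTheory.integral_const_mul]
  have hcv := integral_comp_mul_left_Ioi
    (fun s : ℝ => a ^ θ * rexp (-s) * (μ (Iic (s / a))).toReal) 0 ha
  simp only [smul_eq_mul, mul_zero] at hcv
  have hInv : ∫ s in Ioi (0:ℝ), a ^ θ * rexp (-s) * (μ (Iic (s / a))).toReal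
      = a * ∫ t in Ioi (0:ℝ), a ^ θ * rexp (-(a * t)) * (μ (Iic ((a * t) / a))).toReal := by
    rw [hcv, ← mul_assoc, mul_inv_cancel₀ ha.ne', one_mul]
  rw [hInv, ← MeasureTheory.integral_const_mul]
  refine setIntegral_congr_fun measurableSet_Ioi fun t _ => ?_
  rw [mul_div_cancel_left₀ _ ha.ne']
  ring

lemma reverse (hθ : 0 < θ) (hA : 0 < A) (hμ0 : ∀ᵐ x ∂μ, 0 ≤ x)
    (h2 : Tendsto (fun ε : ℝ => (μ (Iic ε)).toReal / ε ^ θ) (𝓝[>] 0)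
      (𝓝 (A / Real.Gamma (θ + 1)))) :
    Tendsto (fun a : ℝ => a ^ θ * ∫ x, rexp (-(a * x)) ∂μ) atTop (𝓝 A) := by
  have hGpos : 0 < Real.Gamma (θ + 1) := Real.Gamma_pos_of_pos (by linarith)
  set C := A / Real.Gamma (θ + 1) with hCdef
  have hCpos : 0 < C := div_pos hA hGpos
  obtain ⟨δ, hδpos, hδ⟩ : ∃ δ > 0, ∀ ε : ℝ, 0 < ε → ε < δ →
      (μ (Iic ε)).toReal ≤ (C + 1) * ε ^ θ := by
    have h3 : ∀ᶠ ε in 𝓝[>] (0:ℝ), (μ (Iic ε)).toReal / ε ^ θ < C + 1 :=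
      h2.eventually_lt_const (by linarith)
    rw [eventually_nhdsWithin_iff, Metric.eventually_nhds_iff] at h3
    obtain ⟨δ, hδpos, hδ⟩ := h3
    refine ⟨δ, hδpos, fun ε hε1 hε2 => ?_⟩
    have hd : dist ε 0 < δ := by rwa [Real.dist_eq, sub_zero, abs_of_pos hε1]
    have h4 := hδ hd hε1
    have hεθ : 0 < ε ^ θ := Real.rpow_pos_of_pos hε1 θ
    rw [div_lt_iff₀ hεθ] at h4
    linarith
  have hval : ∫ s in Ioi (0:ℝ), rexp (-s) * s ^ θ * C = A := by
    have hg : ∫ s in Ioi (0:ℝ), rexp (-s) * s ^ θ = Real.Gamma (θ + 1) := by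
      rw [Real.Gamma_eq_integral (by linarith : (0:ℝ) < θ + 1)]
      refine setIntegral_congr_fun measurableSet_Ioi fun s _ => ?_
      rw [add_sub_cancel_right]
    rw [integral_mul_const, hg, hCdef]
    field_simp
  have hDCT : Tendsto (fun a : ℝ => ∫ s in Ioi (0:ℝ),
      a ^ θ * rexp (-s) * (μ (Iic (s / a))).toReal) atTop (𝓝 A) := by
    rw [← hval]
    refine tendsto_integral_filter_of_dominated_convergence
      (fun s => rexp (-s) * s ^ θ * ((C + 1) + δ ^ (-θ))) ?_ ?_ ?_ ?_
    · refine Eventually.of_forall fun a => Measurable.aestronglyMeasurable ?_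
      exact ((measurable_const.mul
        ((Real.continuous_exp.comp continuous_neg).measurable)).mul
        ((F_measurable (μ := μ)).comp (measurable_id.div_const a)))
    · filter_upwards [eventually_ge_atTop (1:ℝ)] with a ha
      filter_upwards [ae_restrict_mem measurableSet_Ioi] with s hs
      have ha0 : (0:ℝ) < a := lt_of_lt_of_le one_pos ha
      have hsa : 0 < s / a := div_pos hs ha0
      have hFnn : 0 ≤ (μ (Iic (s / a))).toReal := ENNReal.toReal_nonneg
      have haθ : (0:ℝ) < a ^ θ := Real.rpow_pos_of_pos ha0 θ
      have hsθ : (0:ℝ) < s ^ θ := Real.rpow_pos_of_pos hs θ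
      have hδθ : (0:ℝ) < δ ^ (-θ) := Real.rpow_pos_of_pos hδpos _
      have hnn : 0 ≤ a ^ θ * rexp (-s) * (μ (Iic (s / a))).toReal := by positivity
      rw [Real.norm_eq_abs, abs_of_nonneg hnn]
      rcases lt_or_ge (s / a) δ with hcase | hcase
      · have hF := hδ _ hsa hcase
        have step1 : a ^ θ * rexp (-s) * (μ (Iic (s / a))).toReal
            ≤ a ^ θ * rexp (-s) * ((C + 1) * (s / a) ^ θ) :=
          mul_le_mul_of_nonneg_left hF (by positivity)
        have step2 : a ^ θ * rexp (-s) * ((C + 1) * (s / a) ^ θ)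
            = rexp (-s) * s ^ θ * (C + 1) := by
          rw [Real.div_rpow hs.le ha0.le]
          field_simp
        have step3 : rexp (-s) * s ^ θ * (C + 1)
            ≤ rexp (-s) * s ^ θ * ((C + 1) + δ ^ (-θ)) := by
          have : (0:ℝ) ≤ rexp (-s) * s ^ θ := by positivity
          nlinarith
        linarith
      · have hF : (μ (Iic (s / a))).toReal ≤ 1 := by
          simpa using ENNReal.toReal_mono (by simp) (prob_le_one (μ := μ) (s := Iic (s / a)))
        have haa : a ≤ s / δ := by
          rw [le_div_iff₀ hδpos]
          rw [le_div_iff₀ ha0] at hcase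
          linarith
        have hrw : a ^ θ ≤ s ^ θ * δ ^ (-θ) := by
          calc a ^ θ ≤ (s / δ) ^ θ := Real.rpow_le_rpow ha0.le haa hθ.le
            _ = s ^ θ * δ ^ (-θ) := by
                rw [Real.div_rpow hs.le hδpos.le, Real.rpow_neg hδpos.le, div_eq_mul_inv]
        have step1 : a ^ θ * rexp (-s) * (μ (Iic (s / a))).toReal
            ≤ a ^ θ * rexp (-s) * 1 := mul_le_mul_of_nonneg_left hF (by positivity)
        have step2 : a ^ θ * rexp (-s) * 1 ≤ rexp (-s) * (s ^ θ * δ ^ (-θ)) := by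
          rw [mul_one]
          calc a ^ θ * rexp (-s) = rexp (-s) * a ^ θ := by ring
            _ ≤ rexp (-s) * (s ^ θ * δ ^ (-θ)) :=
              mul_le_mul_of_nonneg_left hrw (exp_pos _).le
        have step3 : rexp (-s) * (s ^ θ * δ ^ (-θ))
            ≤ rexp (-s) * s ^ θ * ((C + 1) + δ ^ (-θ)) := by
          have h6 : (0:ℝ) ≤ rexp (-s) * s ^ θ := by positivity
          nlinarith [exp_pos (-s)]
        linarith
    · have h7 := Real.GammaIntegral_convergent (show (0:ℝ) < θ + 1 by linarith)
      have h8 : IntegrableOn (fun s : ℝ => rexp (-s) * s ^ θ) (Ioi (0:ℝ)) := by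
        simpa [add_sub_cancel_right] using h7
      exact h8.mul_const _
    · filter_upwards [ae_restrict_mem measurableSet_Ioi] with s hs
      have hsθ : (0:ℝ) < s ^ θ := Real.rpow_pos_of_pos hs θ
      have hlim : Tendsto (fun a : ℝ => (μ (Iic (s / a))).toReal / (s / a) ^ θ)
          atTop (𝓝 C) := by
        refine h2.comp ?_
        rw [tendsto_nhdsWithin_iff]
        constructor
        · have : Tendsto (fun a : ℝ => s * a⁻¹) atTop (𝓝 (s * 0)) :=
            tendsto_inv_atTop_zero.const_mul s
          rw [mul_zero] at this
          refine this.congr fun a => ?_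
          rw [div_eq_mul_inv]
        · filter_upwards [eventually_gt_atTop (0:ℝ)] with a ha
          exact div_pos hs ha
      have hmul := hlim.const_mul (rexp (-s) * s ^ θ)
      refine hmul.congr' ?_
      filter_upwards [eventually_gt_atTop (0:ℝ)] with a ha
      have haθ : (0:ℝ) < a ^ θ := Real.rpow_pos_of_pos ha θ
      rw [Real.div_rpow hs.le ha.le]
      field_simp
  refine hDCT.congr' ?_
  filter_upwards [eventually_gt_atTop (0:ℝ)] with a ha
  exact (laplace_scaled hμ0 ha).symm


end TaubProof

open MeasureTheory Filter Topology

/-- **A version of the Tauberian theorem.**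
Let `V` be a nonnegative random variable on a probability space `(Ω, F, P)` and let
`A > 0` and `θ > 0`. Then `E[e^{-aV}] ~ A a^{-θ}` as `a → ∞` if and only if
`P(V ≤ ε) ~ (A/Γ(θ+1)) ε^θ` as `ε → 0+`. -/
theorem tauberian_small_ball {Ω : Type*} [MeasurableSpace Ω] (P : Measure Ω)
    [IsProbabilityMeasure P] (V : Ω → ℝ) (hVmeas : Measurable V) (hVnonneg : ∀ ω, 0 ≤ V ω)
    (A θ : ℝ) (hA : 0 < A) (hθ : 0 < θ) :
    Tendsto (fun a : ℝ => a ^ θ * ∫ ω, Real.exp (-(a * V ω)) ∂P) atTop (𝓝 A) ↔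
      Tendsto (fun ε : ℝ => (P {ω | V ω ≤ ε}).toReal / ε ^ θ) (𝓝[>] 0)
        (𝓝 (A / Real.Gamma (θ + 1))) := by
  set μ' := P.map V with hmu
  haveI : IsProbabilityMeasure μ' := Measure.isProbabilityMeasure_map hVmeas.aemeasurable
  have hμ0 : ∀ᵐ x ∂μ', 0 ≤ x := by
    rw [ae_iff]
    have h1 : {x : ℝ | ¬ 0 ≤ x} = Set.Iio 0 := by
      ext x
      simp [Set.mem_Iio, not_le]
    rw [h1, hmu, Measure.map_apply hVmeas measurableSet_Iio]
    have h2 : V ⁻¹' Set.Iio 0 = ∅ := by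
      ext ω
      simp only [Set.mem_preimage, Set.mem_Iio, Set.mem_empty_iff_false, iff_false, not_lt]
      exact hVnonneg ω
    rw [h2]
    simp
  have hint : ∀ a : ℝ, ∫ ω, Real.exp (-(a * V ω)) ∂P = ∫ x, Real.exp (-(a * x)) ∂μ' := by
    intro a
    have hm : AEStronglyMeasurable (fun x : ℝ => Real.exp (-(a * x))) (P.map V) :=
      Measurable.aestronglyMeasurable (by fun_prop)
    rw [hmu, integral_map hVmeas.aemeasurable hm]
  have hset : ∀ ε : ℝ, P {ω | V ω ≤ ε} = μ' (Set.Iic ε) := by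
    intro ε
    rw [hmu, Measure.map_apply hVmeas measurableSet_Iic]
    rfl
  constructor
  · intro h
    have h' : Tendsto (fun a : ℝ => a ^ θ * ∫ x, Real.exp (-(a * x)) ∂μ') atTop (𝓝 A) :=
      h.congr fun a => by rw [hint a]
    exact (TaubProof.forward hθ hA hμ0 h').congr fun ε => by rw [hset ε]
  · intro h
    have h' : Tendsto (fun ε : ℝ => (μ' (Set.Iic ε)).toReal / ε ^ θ) (𝓝[>] 0)
        (𝓝 (A / Real.Gamma (θ + 1))) :=
      h.congr fun ε => by rw [hset ε]
    exact (TaubProof.reverse hθ hA hμ0 h').congr fun a => by rw [hint a]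
end

section
/- Let b ≥ 0 and let ν be a Borel measure on (0,∞) with ∫_0^∞ min(x,1) ν(dx) < ∞ and ν((0,∞)) = ∞, and let ψ(s) = b s + ∫_0^∞ (1 − e^{−s x}) ν(dx) for s > 0. Let (μ_t)_{t>0} be Borel probability measures on [0,∞) with ∫_0^∞ e^{−s x} μ_t(dx) = e^{−t ψ(s)} for all s > 0, t > 0. Then for every T > 0 with ν({T}) = 0, lim_{t→0+} μ_t([T,∞)) / t = ν((T,∞)). -/
open MeasureTheory Filter Topology

namespace SubordinatorProofAux

open Polynomial
open scoped ENNReal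


/-- trapezoid function: 0 on (-∞,a] and [d,∞), 1 on [b,c]. -/
noncomputable def trap (a b c d x : ℝ) : ℝ :=
  max 0 (min 1 (min ((x - a) / (b - a)) ((d - x) / (d - c))))

lemma trap_continuous (a b c d : ℝ) : Continuous (trap a b c d) := by
  unfold trap
  fun_prop

lemma trap_nonneg (a b c d x : ℝ) : 0 ≤ trap a b c d x := le_max_left _ _

lemma trap_le_one (a b c d x : ℝ) : trap a b c d x ≤ 1 := by
  unfold trap
  simp only [max_le_iff]
  exact ⟨zero_le_one, min_le_left _ _⟩

lemma trap_eq_one (a b c d x : ℝ) (hab : a < b) (hcd : c < d) (h1 : b ≤ x) (h2 : x ≤ c) :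
    trap a b c d x = 1 := by
  unfold trap
  have h3 : (1:ℝ) ≤ (x - a) / (b - a) := by
    rw [le_div_iff₀ (by linarith)]; linarith
  have h4 : (1:ℝ) ≤ (d - x) / (d - c) := by
    rw [le_div_iff₀ (by linarith)]; linarith
  have : min ((x - a) / (b - a)) ((d - x) / (d - c)) = min ((x - a) / (b - a)) ((d - x) / (d - c)) := rfl
  rw [min_eq_left (le_min h3 h4), max_eq_right zero_le_one]

lemma trap_eq_zero_left (a b c d x : ℝ) (hab : a < b) (h : x ≤ a) :
    trap a b c d x = 0 := by
  unfold trap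
  have h3 : (x - a) / (b - a) ≤ 0 := div_nonpos_of_nonpos_of_nonneg (by linarith) (by linarith)
  have : min 1 (min ((x - a) / (b - a)) ((d - x) / (d - c))) ≤ 0 :=
    le_trans (min_le_right _ _) (le_trans (min_le_left _ _) h3)
  exact max_eq_left this

lemma trap_eq_zero_right (a b c d x : ℝ) (hcd : c < d) (h : d ≤ x) :
    trap a b c d x = 0 := by
  unfold trap
  have h3 : (d - x) / (d - c) ≤ 0 := div_nonpos_of_nonpos_of_nonneg (by linarith) (by linarith)
  have : min 1 (min ((x - a) / (b - a)) ((d - x) / (d - c))) ≤ 0 :=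
    le_trans (min_le_right _ _) (le_trans (min_le_right _ _) h3)
  exact max_eq_left this

lemma trap_eq_zero_of_not_mem (a b c d x : ℝ) (hab : a < b) (hcd : c < d)
    (h : x ∉ Set.Icc a d) : trap a b c d x = 0 := by
  rw [Set.mem_Icc, not_and_or] at h
  rcases h with h | h
  · exact trap_eq_zero_left a b c d x hab (by linarith [not_le.1 h])
  · exact trap_eq_zero_right a b c d x hcd (by linarith [not_le.1 h])

/-- basic: 1 - exp(-y) ≤ y for y. -/
lemma one_sub_exp_neg_le (y : ℝ) : 1 - Real.exp (-y) ≤ y := by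
  have := Real.add_one_le_exp (-y)
  linarith

lemma one_sub_exp_neg_nonneg {y : ℝ} (hy : 0 ≤ y) : 0 ≤ 1 - Real.exp (-y) := by
  have : Real.exp (-y) ≤ 1 := Real.exp_le_one_iff.2 (by linarith)
  linarith

lemma one_sub_exp_neg_le_one {y : ℝ} (hy : 0 ≤ y) : 1 - Real.exp (-y) ≤ 1 := by
  have : 0 < Real.exp (-y) := Real.exp_pos _
  linarith




variable {ν : Measure ℝ}

/-- integrability criterion against ν on (0,∞). -/
lemma nu_integrableOn (hνint : ∫⁻ x in Set.Ioi (0 : ℝ), ENNReal.ofReal (min x 1) ∂ν < ⊤)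
    {f : ℝ → ℝ} (hf : AEStronglyMeasurable f (ν.restrict (Set.Ioi 0)))
    {C : ℝ} (hC : 0 ≤ C) (hbound : ∀ x ∈ Set.Ioi (0:ℝ), |f x| ≤ C * min x 1) :
    IntegrableOn f (Set.Ioi 0) ν := by
  refine ⟨hf, ?_⟩
  rw [hasFiniteIntegral_iff_norm]
  calc ∫⁻ x in Set.Ioi (0:ℝ), ENNReal.ofReal ‖f x‖ ∂ν
      ≤ ∫⁻ x in Set.Ioi (0:ℝ), ENNReal.ofReal C * ENNReal.ofReal (min x 1) ∂ν := by
        refine lintegral_mono_ae ?_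
        rw [ae_restrict_iff' measurableSet_Ioi]
        filter_upwards with x hx
        rw [← ENNReal.ofReal_mul hC]
        exact ENNReal.ofReal_le_ofReal (hbound x hx)
    _ = ENNReal.ofReal C * ∫⁻ x in Set.Ioi (0:ℝ), ENNReal.ofReal (min x 1) ∂ν :=
        lintegral_const_mul' _ _ ENNReal.ofReal_ne_top
    _ < ⊤ := ENNReal.mul_lt_top ENNReal.ofReal_lt_top hνint

lemma min_bound {s x : ℝ} (hs : 0 < s) (hx : 0 < x) :
    min (s*x) 1 ≤ max s 1 * min x 1 := by
  rcases le_total x 1 with h | h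
  · rw [min_eq_left h]
    calc min (s*x) 1 ≤ s * x := min_le_left _ _
      _ ≤ max s 1 * x := by nlinarith [le_max_left s 1]
  · rw [min_eq_right h]
    calc min (s*x) 1 ≤ 1 := min_le_right _ _
      _ ≤ max s 1 * 1 := by nlinarith [le_max_right s 1]

lemma g_bound {s x : ℝ} (hs : 0 < s) (hx : 0 < x) :
    |1 - Real.exp (-(s*x))| ≤ max s 1 * min x 1 := by
  have h1 : 0 ≤ 1 - Real.exp (-(s*x)) := by
    have : Real.exp (-(s*x)) ≤ 1 := Real.exp_le_one_iff.2 (by nlinarith)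
    linarith
  rw [abs_of_nonneg h1]
  refine le_trans (le_min ?_ ?_) (min_bound hs hx)
  · have := Real.add_one_le_exp (-(s*x)); linarith
  · have : 0 < Real.exp (-(s*x)) := Real.exp_pos _
    linarith

lemma g_integrableOn (hνint : ∫⁻ x in Set.Ioi (0 : ℝ), ENNReal.ofReal (min x 1) ∂ν < ⊤)
    {s : ℝ} (hs : 0 < s) :
    IntegrableOn (fun x => 1 - Real.exp (-(s*x))) (Set.Ioi 0) ν :=
  nu_integrableOn hνint
    (Continuous.aestronglyMeasurable (by fun_prop))
    (le_trans zero_le_one (le_max_right s 1))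
    (fun x hx => g_bound hs hx)

/-- tails of ν are finite. -/
lemma nu_tail_finite (hνint : ∫⁻ x in Set.Ioi (0 : ℝ), ENNReal.ofReal (min x 1) ∂ν < ⊤)
    {c : ℝ} (hc : 0 < c) : ν (Set.Ioi c) ≠ ⊤ := by
  intro htop
  have hsub : Set.Ioi c ⊆ Set.Ioi (0:ℝ) := fun x hx => lt_trans hc hx
  have : ENNReal.ofReal (min c 1) * ν (Set.Ioi c)
      ≤ ∫⁻ x in Set.Ioi (0:ℝ), ENNReal.ofReal (min x 1) ∂ν := by
    calc ENNReal.ofReal (min c 1) * ν (Set.Ioi c)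
        = ∫⁻ _ in Set.Ioi c, ENNReal.ofReal (min c 1) ∂ν := by
          rw [setLIntegral_const, mul_comm]
      _ ≤ ∫⁻ x in Set.Ioi c, ENNReal.ofReal (min x 1) ∂ν := by
          refine setLIntegral_mono_ae (by fun_prop) ?_
          filter_upwards with x hx
          exact ENNReal.ofReal_le_ofReal (min_le_min (le_of_lt hx) le_rfl)
      _ ≤ ∫⁻ x in Set.Ioi (0:ℝ), ENNReal.ofReal (min x 1) ∂ν :=
          lintegral_mono_set hsub
  rw [htop, ENNReal.mul_top (by simp [ENNReal.ofReal_eq_zero, lt_min_iff, hc, not_le.2 hc, not_le.2 (lt_min hc one_pos)])] at this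
  · exact absurd (lt_of_le_of_lt this hνint) (lt_irrefl ⊤)




variable {μ : Measure ℝ} [IsProbabilityMeasure μ]

lemma mu_ae_nonneg (hμ₀ : μ (Set.Iio 0) = 0) : ∀ᵐ x ∂μ, 0 ≤ x := by
  rw [ae_iff]
  convert hμ₀ using 2
  ext x; simp

/-- functions bounded on [0,∞) are μ-integrable -/
lemma mu_integrable (hμ₀ : μ (Set.Iio 0) = 0) {f : ℝ → ℝ} (hf : AEStronglyMeasurable f μ) {C : ℝ}
    (hbound : ∀ x, 0 ≤ x → |f x| ≤ C) : Integrable f μ := by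
  refine Integrable.mono' (integrable_const C) hf ?_
  filter_upwards [mu_ae_nonneg hμ₀] with x hx
  exact hbound x hx

lemma mu_exp_integrable (hμ₀ : μ (Set.Iio 0) = 0) {s : ℝ} (hs : 0 < s) :
    Integrable (fun x => Real.exp (-(s*x))) μ := by
  refine mu_integrable hμ₀ (Continuous.aestronglyMeasurable (by fun_prop)) (C := 1) ?_
  intro x hx
  rw [abs_of_nonneg (Real.exp_pos _).le]
  exact Real.exp_le_one_iff.2 (by nlinarith)

lemma mu_g_integrable (hμ₀ : μ (Set.Iio 0) = 0) {s : ℝ} (hs : 0 < s) :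
    Integrable (fun x => 1 - Real.exp (-(s*x))) μ :=
  (integrable_const 1).sub (mu_exp_integrable hμ₀ hs)

/-- tail estimate via the Laplace-type integrand -/
lemma mu_tail_bound (hμ₀ : μ (Set.Iio 0) = 0) {M : ℝ} (hM : 0 < M) :
    (1 - Real.exp (-1)) * (μ (Set.Ici M)).toReal
      ≤ ∫ x, (1 - Real.exp (-(M⁻¹*x))) ∂μ := by
  have hind : Integrable ((Set.Ici M).indicator (fun _ => (1 - Real.exp (-1)))) μ :=
    (integrable_const _).indicator measurableSet_Ici
  have h1 : (1 - Real.exp (-1)) * (μ (Set.Ici M)).toReal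
      = ∫ x, (Set.Ici M).indicator (fun _ => (1 - Real.exp (-1))) x ∂μ := by
    rw [integral_indicator measurableSet_Ici, setIntegral_const, smul_eq_mul, mul_comm]
    rfl
  rw [h1]
  refine integral_mono_ae hind (mu_g_integrable hμ₀ (by positivity)) ?_
  filter_upwards [mu_ae_nonneg hμ₀] with x hx
  by_cases hxM : M ≤ x
  · rw [Set.indicator_of_mem (Set.mem_Ici.2 hxM)]
    have h2 : (1:ℝ) ≤ M⁻¹ * x := by
      rw [inv_mul_eq_div, le_div_iff₀ hM, one_mul]
      exact hxM
    have := Real.exp_le_exp.2 (neg_le_neg h2)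
    linarith
  · rw [Set.indicator_of_notMem (fun hc => hxM (Set.mem_Ici.1 hc))]
    have : Real.exp (-(M⁻¹*x)) ≤ 1 := Real.exp_le_one_iff.2 (neg_nonpos.2 (by positivity))
    linarith




/-- (1 - exp(-(t*c)))/t → c as t → 0+ -/
lemma tendsto_one_sub_exp_div (c : ℝ) :
    Tendsto (fun t : ℝ => (1 - Real.exp (-(t*c)))/t) (𝓝[>] 0) (𝓝 c) := by
  have hd : HasDerivAt (fun t : ℝ => 1 - Real.exp (-(t*c))) c 0 := by
    have h1 : HasDerivAt (fun t : ℝ => -(t*c)) (-c) 0 := by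
      simpa using ((hasDerivAt_id (0:ℝ)).mul_const c).fun_neg
    have h2 : HasDerivAt (fun t : ℝ => Real.exp (-(t*c))) (Real.exp (-(0*c)) * (-c)) 0 :=
      (Real.hasDerivAt_exp _).comp 0 h1
    have h3 := (hasDerivAt_const (0:ℝ) (1:ℝ)).fun_sub h2
    simpa using h3
  have := hasDerivAt_iff_tendsto_slope.1 hd
  have h4 : Tendsto (slope (fun t : ℝ => 1 - Real.exp (-(t*c))) 0) (𝓝[>] 0) (𝓝 c) :=
    this.mono_left (nhdsWithin_mono 0 (fun x hx => ne_of_gt hx))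
  refine h4.congr' ?_
  filter_upwards [self_mem_nhdsWithin] with t ht
  rw [slope_def_field]
  simp




-- from chunk 3 (placeholders, will be in same file eventually)
variable {μ : Measure ℝ}

variable (ψ : ℝ → ℝ) (μf : ℝ → Measure ℝ)

/-- integral of 1 - e^{-sx} against μ_t -/
lemma mu_g_integral (hμprob : ∀ t : ℝ, 0 < t → IsProbabilityMeasure (μf t))
    (hμ₀ : ∀ t : ℝ, 0 < t → μf t (Set.Iio 0) = 0)
    (hμlaplace : ∀ t : ℝ, 0 < t → ∀ s : ℝ, 0 < s →
      (∫ x, Real.exp (-(s * x)) ∂μf t) = Real.exp (-(t * ψ s)))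
    {t s : ℝ} (ht : 0 < t) (hs : 0 < s) :
    ∫ x, (1 - Real.exp (-(s*x))) ∂μf t = 1 - Real.exp (-(t * ψ s)) := by
  haveI := hμprob t ht
  rw [integral_sub (integrable_const 1) (mu_exp_integrable (hμ₀ t ht) hs),
    integral_const, hμlaplace t ht s hs]
  simp

/-- the key limit: ⟨η_t, 1 - e^{-sx}⟩ → ψ(s) -/
lemma A_tendsto (hμprob : ∀ t : ℝ, 0 < t → IsProbabilityMeasure (μf t))
    (hμ₀ : ∀ t : ℝ, 0 < t → μf t (Set.Iio 0) = 0)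
    (hμlaplace : ∀ t : ℝ, 0 < t → ∀ s : ℝ, 0 < s →
      (∫ x, Real.exp (-(s * x)) ∂μf t) = Real.exp (-(t * ψ s)))
    {s : ℝ} (hs : 0 < s) :
    Tendsto (fun t => (∫ x, (1 - Real.exp (-(s*x))) ∂μf t)/t) (𝓝[>] 0) (𝓝 (ψ s)) := by
  refine (tendsto_one_sub_exp_div (ψ s)).congr' ?_
  filter_upwards [self_mem_nhdsWithin] with t ht
  rw [mu_g_integral ψ μf hμprob hμ₀ hμlaplace ht hs]




-- stand-ins for earlier chunks


/-- the basic test functions -/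
noncomputable def W (p : ℝ[X]) (x : ℝ) : ℝ :=
  Real.exp (-x) * (1 - Real.exp (-x)) * p.eval (Real.exp (-x))

lemma W_continuous (p : ℝ[X]) : Continuous (W p) := by
  unfold W; fun_prop

lemma exp_pow (x : ℝ) (k : ℕ) : Real.exp (-((k:ℝ)*x)) = Real.exp (-x) ^ k := by
  rw [← Real.exp_nat_mul]; ring_nf

lemma exp_mem_Icc {x : ℝ} (hx : 0 ≤ x) : Real.exp (-x) ∈ Set.Icc (0:ℝ) 1 :=
  ⟨(Real.exp_pos _).le, Real.exp_le_one_iff.2 (by linarith)⟩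

/-- bound for polynomial eval on [0,1] -/
lemma poly_bound (p : ℝ[X]) : ∃ C : ℝ, 0 ≤ C ∧ ∀ y ∈ Set.Icc (0:ℝ) 1, |p.eval y| ≤ C := by
  obtain ⟨C, hC⟩ := (isCompact_Icc (a := (0:ℝ)) (b := 1)).exists_bound_of_continuousOn
    p.continuous.continuousOn
  refine ⟨max C 0, le_max_right _ _, fun y hy => ?_⟩
  have := hC y hy
  simp only [Real.norm_eq_abs] at this
  exact le_trans this (le_max_left _ _)

lemma one_sub_exp_le_min {x : ℝ} (hx : 0 < x) : 1 - Real.exp (-x) ≤ min x 1 := by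
  refine le_min ?_ ?_
  · have := Real.add_one_le_exp (-x); linarith
  · have : 0 < Real.exp (-x) := Real.exp_pos _; linarith

lemma W_bound_mu (p : ℝ[X]) : ∃ C : ℝ, ∀ x, 0 ≤ x → |W p x| ≤ C := by
  obtain ⟨C, hC0, hC⟩ := poly_bound p
  refine ⟨C, fun x hx => ?_⟩
  have hu := exp_mem_Icc hx
  unfold W
  have h1 : |Real.exp (-x) * (1 - Real.exp (-x))| ≤ 1 := by
    rw [abs_of_nonneg (by nlinarith [hu.1, hu.2])]
    nlinarith [hu.1, hu.2]
  calc |Real.exp (-x) * (1 - Real.exp (-x)) * p.eval (Real.exp (-x))|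
      = |Real.exp (-x) * (1 - Real.exp (-x))| * |p.eval (Real.exp (-x))| := abs_mul _ _
    _ ≤ 1 * C := mul_le_mul h1 (hC _ hu) (abs_nonneg _) zero_le_one
    _ = C := one_mul C

lemma W_integrable_mu {μ : Measure ℝ} [IsProbabilityMeasure μ] (hμ₀ : μ (Set.Iio 0) = 0)
    (p : ℝ[X]) : Integrable (W p) μ := by
  obtain ⟨C, hC⟩ := W_bound_mu p
  exact mu_integrable hμ₀ (W_continuous p).aestronglyMeasurable hC

lemma W_integrable_nu {ν : Measure ℝ}
    (hνint : ∫⁻ x in Set.Ioi (0 : ℝ), ENNReal.ofReal (min x 1) ∂ν < ⊤) (p : ℝ[X]) :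
    IntegrableOn (W p) (Set.Ioi 0) ν := by
  obtain ⟨C, hC0, hC⟩ := poly_bound p
  refine nu_integrableOn hνint (W_continuous p).aestronglyMeasurable.restrict hC0 ?_
  intro x hx
  have hx' : (0:ℝ) < x := hx
  have hu := exp_mem_Icc hx'.le
  unfold W
  have h2 : 1 - Real.exp (-x) ≤ min x 1 := one_sub_exp_le_min hx'
  calc |Real.exp (-x) * (1 - Real.exp (-x)) * p.eval (Real.exp (-x))|
      = Real.exp (-x) * (1 - Real.exp (-x)) * |p.eval (Real.exp (-x))| := by
        rw [abs_mul, abs_of_nonneg (by nlinarith [hu.1, hu.2] : (0:ℝ) ≤ Real.exp (-x) * (1 - Real.exp (-x)))]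
    _ ≤ (1 * min x 1) * C := by
        refine mul_le_mul ?_ (hC _ hu) (abs_nonneg _) (by positivity)
        exact mul_le_mul hu.2 h2 (by nlinarith [hu.2]) zero_le_one
    _ = C * min x 1 := by ring





lemma W_monomial (n : ℕ) (a : ℝ) (x : ℝ) :
    W (monomial n a) x
      = a * ((1 - Real.exp (-(((n:ℝ)+2)*x))) - (1 - Real.exp (-(((n:ℝ)+1)*x)))) := by
  unfold W
  rw [Polynomial.eval_monomial]
  have h1 : Real.exp (-(((n:ℝ)+1)*x)) = Real.exp (-x) ^ (n+1) := by
    rw [← exp_pow]; push_cast; ring_nf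
  have h2 : Real.exp (-(((n:ℝ)+2)*x)) = Real.exp (-x) ^ (n+2) := by
    rw [← exp_pow]; push_cast; ring_nf
  rw [h1, h2]; ring

lemma claimB (b : ℝ) (ν : Measure ℝ)
    (hνint : ∫⁻ x in Set.Ioi (0 : ℝ), ENNReal.ofReal (min x 1) ∂ν < ⊤)
    (ψ : ℝ → ℝ)
    (hψ : ∀ s : ℝ, 0 < s →
      ψ s = b * s + ∫ x in Set.Ioi (0 : ℝ), (1 - Real.exp (-(s * x))) ∂ν)
    (μf : ℝ → Measure ℝ)
    (hμprob : ∀ t : ℝ, 0 < t → IsProbabilityMeasure (μf t))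
    (hμ₀ : ∀ t : ℝ, 0 < t → μf t (Set.Iio 0) = 0)
    (hμlaplace : ∀ t : ℝ, 0 < t → ∀ s : ℝ, 0 < s →
      (∫ x, Real.exp (-(s * x)) ∂μf t) = Real.exp (-(t * ψ s)))
    (p : ℝ[X]) :
    Tendsto (fun t => (∫ x, W p x ∂μf t)/t) (𝓝[>] (0:ℝ))
      (𝓝 (b * p.eval 1 + ∫ x in Set.Ioi (0:ℝ), W p x ∂ν)) := by
  induction p using Polynomial.induction_on' with
  | add p q hp hq =>
    have hWadd : ∀ x, W (p+q) x = W p x + W q x := by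
      intro x; unfold W; rw [Polynomial.eval_add]; ring
    have hval : b * (p+q).eval 1 + ∫ x in Set.Ioi (0:ℝ), W (p+q) x ∂ν
        = (b * p.eval 1 + ∫ x in Set.Ioi (0:ℝ), W p x ∂ν)
          + (b * q.eval 1 + ∫ x in Set.Ioi (0:ℝ), W q x ∂ν) := by
      rw [Polynomial.eval_add,
        integral_congr_ae (ae_of_all _ hWadd),
        integral_add (W_integrable_nu hνint p) (W_integrable_nu hνint q)]
      ring
    rw [hval]
    refine (hp.add hq).congr' ?_
    filter_upwards [self_mem_nhdsWithin] with t ht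
    haveI := hμprob t ht
    rw [integral_congr_ae (ae_of_all _ hWadd),
      integral_add (W_integrable_mu (hμ₀ t ht) p) (W_integrable_mu (hμ₀ t ht) q)]
    ring
  | monomial n a =>
    have hn1 : (0:ℝ) < (n:ℝ)+1 := by positivity
    have hn2 : (0:ℝ) < (n:ℝ)+2 := by positivity
    have key := ((A_tendsto ψ μf hμprob hμ₀ hμlaplace hn2).sub
      (A_tendsto ψ μf hμprob hμ₀ hμlaplace hn1)).const_mul a
    have hval : a * (ψ ((n:ℝ)+2) - ψ ((n:ℝ)+1))
        = b * (monomial n a).eval 1 + ∫ x in Set.Ioi (0:ℝ), W (monomial n a) x ∂ν := by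
      rw [hψ _ hn2, hψ _ hn1, Polynomial.eval_monomial, one_pow, mul_one,
        integral_congr_ae (ae_of_all _ (W_monomial n a)),
        integral_const_mul _ _,
        integral_sub (g_integrableOn hνint hn2) (g_integrableOn hνint hn1)]
      ring
    rw [← hval]
    refine key.congr' ?_
    filter_upwards [self_mem_nhdsWithin] with t ht
    haveI := hμprob t ht
    rw [integral_congr_ae (ae_of_all _ (W_monomial n a)),
      integral_const_mul _ _,
      integral_sub (mu_g_integrable (hμ₀ t ht) hn2) (mu_g_integrable (hμ₀ t ht) hn1)]
    ring




-- stand-ins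



section K

variable (h : ℝ → ℝ) (c M : ℝ)

/-- the rescaled function on [0,1] -/
noncomputable def K (y : ℝ) : ℝ :=
  if y ∈ Set.Ioo (0:ℝ) 1 then h (-Real.log y) / (y * (1-y)) else 0

lemma K_one : K h 1 = 0 := by
  unfold K
  rw [if_neg (by simp)]

lemma K_continuous (hcont : Continuous h) (hc : 0 < c) (hcM : c ≤ M)
    (hsupp : ∀ x, x ∉ Set.Icc c M → h x = 0) : Continuous (K h) := by
  have hM : 0 < M := lt_of_lt_of_le hc hcM
  have hzero_low : ∀ z ∈ Set.Iio (Real.exp (-M)), K h z = 0 := by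
    intro z hz
    unfold K
    split_ifs with hmem
    · rw [hsupp _ ?_, zero_div]
      intro hmem2
      have : Real.log z < -M := by
        rw [← Real.log_exp (-M)]
        exact Real.log_lt_log hmem.1 hz
      have := hmem2.2
      linarith
    · rfl
  have hzero_high : ∀ z ∈ Set.Ioi (Real.exp (-c)), K h z = 0 := by
    intro z hz
    unfold K
    split_ifs with hmem
    · rw [hsupp _ ?_, zero_div]
      intro hmem2
      have : -M ≤ Real.log z := by linarith [Real.log_lt_log (Real.exp_pos (-c)) hz, Real.log_exp (-c), hmem2.2]
      have h2 : -c < Real.log z := by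
        calc -c = Real.log (Real.exp (-c)) := (Real.log_exp _).symm
          _ < Real.log z := Real.log_lt_log (Real.exp_pos _) hz
      have := hmem2.1
      linarith
    · rfl
  rw [continuous_iff_continuousAt]
  intro y
  by_cases hy1 : y < Real.exp (-M)
  · exact ContinuousAt.congr continuousAt_const
      (Filter.eventuallyEq_iff_exists_mem.2 ⟨_, isOpen_Iio.mem_nhds hy1, fun z hz => (hzero_low z hz).symm⟩)
  by_cases hy2 : Real.exp (-c) < y
  · exact ContinuousAt.congr continuousAt_const
      (Filter.eventuallyEq_iff_exists_mem.2 ⟨_, isOpen_Ioi.mem_nhds hy2, fun z hz => (hzero_high z hz).symm⟩)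
  -- middle
  push_neg at hy1 hy2
  have hy0 : 0 < y := lt_of_lt_of_le (Real.exp_pos _) hy1
  have hy3 : y < 1 := lt_of_le_of_lt hy2 (Real.exp_lt_one_iff.2 (by linarith))
  have hformula : ContinuousAt (fun z => h (-Real.log z) / (z * (1-z))) y := by
    refine ContinuousAt.div ?_ (by fun_prop) (by nlinarith)
    exact hcont.continuousAt.comp ((Real.continuousAt_log hy0.ne').neg)
  refine ContinuousAt.congr hformula
    (Filter.eventuallyEq_iff_exists_mem.2 ⟨Set.Ioo 0 1, isOpen_Ioo.mem_nhds ⟨hy0, hy3⟩, ?_⟩)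
  intro z hz
  show _ = K h z
  unfold K
  rw [if_pos hz]

/-- key identity: h(x) = u(1-u)K(u) for u = e^{-x}, x ≥ 0 -/
lemma K_identity (hc : 0 < c) (hsupp : ∀ x, x ∉ Set.Icc c M → h x = 0)
    {x : ℝ} (hx : 0 ≤ x) :
    h x = Real.exp (-x) * (1 - Real.exp (-x)) * K h (Real.exp (-x)) := by
  rcases eq_or_lt_of_le hx with rfl | hx'
  · rw [hsupp 0 (fun hmem => absurd hmem.1 (not_le.2 hc))]
    simp
  · have hu0 : 0 < Real.exp (-x) := Real.exp_pos _
    have hu1 : Real.exp (-x) < 1 := Real.exp_lt_one_iff.2 (by linarith)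
    unfold K
    rw [if_pos ⟨hu0, hu1⟩, Real.log_exp, neg_neg]
    rw [mul_div_assoc', mul_comm, mul_div_assoc]
    rw [div_self (by nlinarith), mul_one]

end K





lemma exp_mem_Icc' {x : ℝ} (hx : 0 ≤ x) : Real.exp (-x) ∈ Set.Icc (0:ℝ) 1 :=
  ⟨(Real.exp_pos _).le, Real.exp_le_one_iff.2 (by linarith)⟩

lemma claimC (b : ℝ) (ν : Measure ℝ)
    (hνint : ∫⁻ x in Set.Ioi (0 : ℝ), ENNReal.ofReal (min x 1) ∂ν < ⊤)
    (ψ : ℝ → ℝ)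
    (hψ : ∀ s : ℝ, 0 < s →
      ψ s = b * s + ∫ x in Set.Ioi (0 : ℝ), (1 - Real.exp (-(s * x))) ∂ν)
    (μf : ℝ → Measure ℝ)
    (hμprob : ∀ t : ℝ, 0 < t → IsProbabilityMeasure (μf t))
    (hμ₀ : ∀ t : ℝ, 0 < t → μf t (Set.Iio 0) = 0)
    (hμlaplace : ∀ t : ℝ, 0 < t → ∀ s : ℝ, 0 < s →
      (∫ x, Real.exp (-(s * x)) ∂μf t) = Real.exp (-(t * ψ s)))
    (h : ℝ → ℝ) (hcont : Continuous h) (c M : ℝ) (hc : 0 < c) (hcM : c ≤ M)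
    (hsupp : ∀ x, x ∉ Set.Icc c M → h x = 0) :
    Tendsto (fun t => (∫ x, h x ∂μf t)/t) (𝓝[>] (0:ℝ))
      (𝓝 (∫ x in Set.Ioi (0:ℝ), h x ∂ν)) := by
  -- global bound for h
  obtain ⟨C₀, hC₀⟩ := (isCompact_Icc (a := c) (b := M)).exists_bound_of_continuousOn
    hcont.continuousOn
  have hCh : ∀ x, |h x| ≤ max C₀ 0 := by
    intro x
    by_cases hx : x ∈ Set.Icc c M
    · exact le_trans (hC₀ x hx) (le_max_left _ _)
    · rw [hsupp x hx]; simp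
  have hCh0 : 0 ≤ max C₀ 0 := le_max_right _ _
  -- integrability of h
  have h_int_mu : ∀ t : ℝ, 0 < t → Integrable h (μf t) := by
    intro t ht
    haveI := hμprob t ht
    exact mu_integrable (hμ₀ t ht) hcont.aestronglyMeasurable (fun x _ => hCh x)
  have hmin : 0 < min c 1 := lt_min hc one_pos
  have h_int_nu : IntegrableOn h (Set.Ioi 0) ν := by
    refine nu_integrableOn hνint hcont.aestronglyMeasurable.restrict
      (C := max C₀ 0 / min c 1) (div_nonneg hCh0 hmin.le) ?_
    intro x hx
    by_cases hxm : x ∈ Set.Icc c M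
    · calc |h x| ≤ max C₀ 0 := hCh x
        _ = max C₀ 0 / min c 1 * min c 1 := by field_simp
        _ ≤ max C₀ 0 / min c 1 * min x 1 := by
            refine mul_le_mul_of_nonneg_left (min_le_min hxm.1 le_rfl) (div_nonneg hCh0 hmin.le)
    · rw [hsupp x hxm, abs_zero]
      exact mul_nonneg (div_nonneg hCh0 hmin.le) (le_min (le_of_lt hx) zero_le_one)
  set D := ∫ x in Set.Ioi (0:ℝ), W 1 x ∂ν with hD
  rw [Metric.tendsto_nhds]
  intro ε hε
  set Q : ℝ := 4*(1+|b|+|D|) with hQdef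
  have hQ : 0 < Q := by positivity
  set ε' : ℝ := ε/(2*Q) with hε'def
  have hε' : 0 < ε' := by positivity
  obtain ⟨p, hp⟩ := exists_polynomial_near_of_continuousOn 0 1 (K h)
    (K_continuous h c M hcont hc hcM hsupp).continuousOn ε' hε'
  have hp1 : |p.eval 1| ≤ ε' := by
    have := hp 1 ⟨zero_le_one, le_rfl⟩
    rw [K_one] at this
    simpa using this.le
  -- pointwise bound
  have hpt : ∀ x, 0 ≤ x → |W p x - h x| ≤ ε' * W 1 x := by
    intro x hx
    have hu := exp_mem_Icc' hx
    have hfac : 0 ≤ Real.exp (-x) * (1 - Real.exp (-x)) := by nlinarith [hu.1, hu.2]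
    rw [K_identity h c M hc hsupp hx]
    unfold W
    calc |Real.exp (-x) * (1 - Real.exp (-x)) * p.eval (Real.exp (-x))
          - Real.exp (-x) * (1 - Real.exp (-x)) * K h (Real.exp (-x))|
        = Real.exp (-x) * (1 - Real.exp (-x)) * |p.eval (Real.exp (-x)) - K h (Real.exp (-x))| := by
          rw [← mul_sub, abs_mul, abs_of_nonneg hfac]
      _ ≤ Real.exp (-x) * (1 - Real.exp (-x)) * ε' :=
          mul_le_mul_of_nonneg_left (hp _ hu).le hfac
      _ = ε' * (Real.exp (-x) * (1 - Real.exp (-x)) * Polynomial.eval (Real.exp (-x)) 1) := by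
          rw [Polynomial.eval_one]; ring
  -- ν-side estimate
  have hWnu := W_integrable_nu hνint p
  have hW1nu := W_integrable_nu hνint (1 : ℝ[X])
  have step2 : |(∫ x in Set.Ioi (0:ℝ), W p x ∂ν) - ∫ x in Set.Ioi (0:ℝ), h x ∂ν| ≤ ε' * |D| := by
    rw [← integral_sub hWnu h_int_nu]
    calc |∫ x in Set.Ioi (0:ℝ), (W p x - h x) ∂ν|
        ≤ ∫ x in Set.Ioi (0:ℝ), |W p x - h x| ∂ν := by
          simpa [Real.norm_eq_abs] using
            norm_integral_le_integral_norm (μ := ν.restrict (Set.Ioi 0)) (fun x => W p x - h x)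
      _ ≤ ∫ x in Set.Ioi (0:ℝ), ε' * W 1 x ∂ν := by
          refine integral_mono_ae (hWnu.sub h_int_nu).abs (hW1nu.const_mul ε') ?_
          rw [Filter.EventuallyLE, ae_restrict_iff' measurableSet_Ioi]
          filter_upwards with x hx
          exact hpt x (le_of_lt hx)
      _ = ε' * D := by rw [integral_const_mul]
      _ ≤ ε' * |D| := mul_le_mul_of_nonneg_left (le_abs_self D) hε'.le
  -- limits from claimB
  have hB := claimB b ν hνint ψ hψ μf hμprob hμ₀ hμlaplace p
  have hE := claimB b ν hνint ψ hψ μf hμprob hμ₀ hμlaplace (1 : ℝ[X])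
  rw [Metric.tendsto_nhds] at hB hE
  filter_upwards [hB ε' hε', hE 1 one_pos, self_mem_nhdsWithin] with t hBt hEt ht
  replace ht : 0 < t := ht
  haveI := hμprob t ht
  have hEt' : (∫ x, W 1 x ∂μf t)/t ≤ 1 + |b| + |D| := by
    rw [Real.dist_eq] at hEt
    have h1 : b * Polynomial.eval 1 (1:ℝ[X]) + D ≤ |b| + |D| := by
      rw [Polynomial.eval_one, mul_one]
      exact add_le_add (le_abs_self b) (le_abs_self D)
    have := abs_lt.1 hEt
    linarith [this.1, this.2]
  -- μ-side estimate
  have step1 : |(∫ x, h x ∂μf t) - ∫ x, W p x ∂μf t| ≤ ε' * ∫ x, W 1 x ∂μf t := by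
    rw [← integral_sub (h_int_mu t ht) (W_integrable_mu (hμ₀ t ht) p)]
    calc |∫ x, (h x - W p x) ∂μf t|
        ≤ ∫ x, |h x - W p x| ∂μf t := by
          simpa [Real.norm_eq_abs] using
            norm_integral_le_integral_norm (μ := μf t) (fun x => h x - W p x)
      _ ≤ ∫ x, ε' * W 1 x ∂μf t := by
          refine integral_mono_ae ((h_int_mu t ht).sub (W_integrable_mu (hμ₀ t ht) p)).abs
            ((W_integrable_mu (hμ₀ t ht) (1 : ℝ[X])).const_mul ε') ?_
          filter_upwards [mu_ae_nonneg (hμ₀ t ht)] with x hx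
          rw [abs_sub_comm]
          exact hpt x hx
      _ = ε' * ∫ x, W 1 x ∂μf t := by rw [integral_const_mul]
  -- combine
  rw [Real.dist_eq] at hBt ⊢
  have key : |(∫ x, h x ∂μf t)/t - ∫ x in Set.Ioi (0:ℝ), h x ∂ν|
      ≤ ε' * (1 + |b| + |D|) + ε' + (|b| * ε' + ε' * |D|) := by
    have e1 : |(∫ x, h x ∂μf t)/t - (∫ x, W p x ∂μf t)/t| ≤ ε' * (1 + |b| + |D|) := by
      rw [div_sub_div_same, abs_div, abs_of_pos ht]
      calc |(∫ x, h x ∂μf t) - ∫ x, W p x ∂μf t| / t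
          ≤ (ε' * ∫ x, W 1 x ∂μf t) / t := by gcongr
        _ = ε' * ((∫ x, W 1 x ∂μf t)/t) := by ring
        _ ≤ ε' * (1 + |b| + |D|) := mul_le_mul_of_nonneg_left hEt' hε'.le
    have e3 : |(b * p.eval 1 + ∫ x in Set.Ioi (0:ℝ), W p x ∂ν) - ∫ x in Set.Ioi (0:ℝ), h x ∂ν|
        ≤ |b| * ε' + ε' * |D| := by
      calc |(b * p.eval 1 + ∫ x in Set.Ioi (0:ℝ), W p x ∂ν) - ∫ x in Set.Ioi (0:ℝ), h x ∂ν|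
          ≤ |b * p.eval 1| + |(∫ x in Set.Ioi (0:ℝ), W p x ∂ν) - ∫ x in Set.Ioi (0:ℝ), h x ∂ν| := by
            rw [add_sub_assoc]; exact abs_add_le _ _
        _ ≤ |b| * ε' + ε' * |D| := by
            refine add_le_add ?_ step2
            rw [abs_mul]
            exact mul_le_mul_of_nonneg_left hp1 (abs_nonneg b)
    calc |(∫ x, h x ∂μf t)/t - ∫ x in Set.Ioi (0:ℝ), h x ∂ν|
        ≤ |(∫ x, h x ∂μf t)/t - (b * p.eval 1 + ∫ x in Set.Ioi (0:ℝ), W p x ∂ν)|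
          + |(b * p.eval 1 + ∫ x in Set.Ioi (0:ℝ), W p x ∂ν) - ∫ x in Set.Ioi (0:ℝ), h x ∂ν| :=
          abs_sub_le _ _ _
      _ ≤ (|(∫ x, h x ∂μf t)/t - (∫ x, W p x ∂μf t)/t|
          + |(∫ x, W p x ∂μf t)/t - (b * p.eval 1 + ∫ x in Set.Ioi (0:ℝ), W p x ∂ν)|)
          + |(b * p.eval 1 + ∫ x in Set.Ioi (0:ℝ), W p x ∂ν) - ∫ x in Set.Ioi (0:ℝ), h x ∂ν| :=
          add_le_add_left (abs_sub_le _ _ _) _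
      _ ≤ ε' * (1 + |b| + |D|) + ε' + (|b| * ε' + ε' * |D|) :=
          add_le_add (add_le_add e1 hBt.le) e3
  refine lt_of_le_of_lt key ?_
  have : ε' * (1 + |b| + |D|) + ε' + (|b| * ε' + ε' * |D|) ≤ ε' * Q := by
    rw [hQdef]
    nlinarith [mul_nonneg hε'.le (abs_nonneg b), mul_nonneg hε'.le (abs_nonneg D), hε'.le]
  refine lt_of_le_of_lt this ?_
  rw [hε'def]
  rw [div_mul_eq_mul_div, mul_comm]
  rw [mul_div_assoc]
  calc Q * (ε / (2*Q)) = ε/2 := by field_simp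
    _ < ε := by linarith




variable {ν : Measure ℝ}

lemma psi_tendsto_zero (b : ℝ) {ν : Measure ℝ}
    (hνint : ∫⁻ x in Set.Ioi (0 : ℝ), ENNReal.ofReal (min x 1) ∂ν < ⊤)
    (ψ : ℝ → ℝ)
    (hψ : ∀ s : ℝ, 0 < s →
      ψ s = b * s + ∫ x in Set.Ioi (0 : ℝ), (1 - Real.exp (-(s * x))) ∂ν) :
    Tendsto ψ (𝓝[>] (0:ℝ)) (𝓝 0) := by
  have h1 : Tendsto (fun s : ℝ => b * s) (𝓝[>] (0:ℝ)) (𝓝 0) := by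
    have := Continuous.tendsto (show Continuous (fun s : ℝ => b * s) by fun_prop) 0
    simpa using this.mono_left (nhdsWithin_le_nhds (s := Set.Ioi (0:ℝ)))
  have hbound : Integrable (fun x => min x 1) (ν.restrict (Set.Ioi 0)) := by
    refine nu_integrableOn hνint (Continuous.aestronglyMeasurable (by fun_prop)) zero_le_one ?_
    intro x hx
    rw [one_mul, abs_of_nonneg (le_min (le_of_lt hx) zero_le_one)]
  have h2 : Tendsto (fun s : ℝ => ∫ x in Set.Ioi (0:ℝ), (1 - Real.exp (-(s * x))) ∂ν)
      (𝓝[>] (0:ℝ)) (𝓝 0) := by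
    have h2' := tendsto_integral_filter_of_dominated_convergence (μ := ν.restrict (Set.Ioi 0))
      (l := 𝓝[>](0:ℝ)) (F := fun s x => 1 - Real.exp (-(s*x))) (f := fun _ => (0:ℝ))
      (fun x => min x 1) ?_ ?_ hbound ?_
    · simpa using h2'
    · filter_upwards with s
      exact Continuous.aestronglyMeasurable (by fun_prop)
    · filter_upwards [Ioc_mem_nhdsGT_of_mem (Set.mem_Ico.2 ⟨le_rfl, one_pos⟩)] with s hs
      rw [ae_restrict_iff' measurableSet_Ioi]
      filter_upwards with x hx
      have hx' : (0:ℝ) < x := hx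
      have e1 : Real.exp (-(s*x)) ≤ 1 := Real.exp_le_one_iff.2 (by nlinarith [hs.1])
      have e2 : 1 - Real.exp (-(s*x)) ≤ s * x := by
        have := Real.add_one_le_exp (-(s*x)); linarith
      rw [Real.norm_eq_abs, abs_of_nonneg (by linarith)]
      refine le_min ?_ (by linarith [Real.exp_pos (-(s*x))])
      calc 1 - Real.exp (-(s*x)) ≤ s * x := e2
        _ ≤ 1 * x := by nlinarith [hs.1.le, hs.2]
        _ = x := one_mul x
    · filter_upwards with x
      have : Tendsto (fun s : ℝ => 1 - Real.exp (-(s * x))) (𝓝 (0:ℝ))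
          (𝓝 (1 - Real.exp (-(0 * x)))) :=
        Continuous.tendsto (by fun_prop) 0
      simpa using this.mono_left (nhdsWithin_le_nhds (s := Set.Ioi (0:ℝ)))
  have := h1.add h2
  rw [add_zero] at this
  refine this.congr' ?_
  filter_upwards [self_mem_nhdsWithin] with s hs
  exact (hψ s hs).symm

lemma nu_Ioi_tendsto {ν : Measure ℝ}
    (hνint : ∫⁻ x in Set.Ioi (0 : ℝ), ENNReal.ofReal (min x 1) ∂ν < ⊤) :
    Tendsto (fun n : ℕ => ν (Set.Ioi (n:ℝ))) atTop (𝓝 0) := by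
  have h := tendsto_measure_iInter_atTop (μ := ν) (s := fun n : ℕ => Set.Ioi (n:ℝ))
    (fun n => measurableSet_Ioi.nullMeasurableSet)
    (fun n m hnm => Set.Ioi_subset_Ioi (by exact_mod_cast hnm))
    ⟨1, by simpa using nu_tail_finite hνint one_pos⟩
  have hempty : ⋂ n : ℕ, Set.Ioi ((n:ℝ)) = ∅ := by
    ext x
    simp only [Set.mem_iInter, Set.mem_Ioi, Set.mem_empty_iff_false, iff_false, not_forall, not_lt]
    obtain ⟨n, hn⟩ := exists_nat_gt x
    exact ⟨n, hn.le⟩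
  rw [hempty] at h
  simpa [Function.comp_def] using h

lemma nu_Ico_tendsto {ν : Measure ℝ} {T : ℝ} (hT : 0 < T)
    (hνint : ∫⁻ x in Set.Ioi (0 : ℝ), ENNReal.ofReal (min x 1) ∂ν < ⊤) :
    Tendsto (fun n : ℕ => ν (Set.Ico (T - 1/(n+1)) T)) atTop (𝓝 0) := by
  obtain ⟨n₀, hn₀⟩ := exists_nat_gt (2/T)
  have h := tendsto_measure_iInter_atTop (μ := ν) (s := fun n : ℕ => Set.Ico (T - 1/(n+1)) T)
    (fun n => measurableSet_Ico.nullMeasurableSet)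
    (fun n m hnm => Set.Ico_subset_Ico (by
      have : (1:ℝ)/(m+1) ≤ 1/(n+1) := by
        apply one_div_le_one_div_of_le (by positivity)
        push_cast; linarith [(Nat.cast_le (α := ℝ)).2 hnm]
      linarith) le_rfl)
    ⟨n₀, ?_⟩
  · have hempty : ⋂ n : ℕ, Set.Ico (T - 1/(n+1)) T = ∅ := by
      ext x
      simp only [Set.mem_iInter, Set.mem_Ico, Set.mem_empty_iff_false, iff_false, not_forall]
      by_cases hx : x < T
      · obtain ⟨n, hn⟩ := exists_nat_gt (1/(T - x))
        refine ⟨n, fun hmem => ?_⟩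
        have h1 : (0:ℝ) < T - x := by linarith
        have h2 : 1/(T-x) < n + 1 := by push_cast; linarith
        have h3 : (1:ℝ)/(n+1) < T - x := by
          rw [div_lt_iff₀ (by positivity)] at h2 ⊢
          · nlinarith
        linarith [hmem.1]
      · exact ⟨0, fun hmem => hx hmem.2⟩
    rw [hempty] at h
    simpa [Function.comp_def] using h
  · refine fun htop => nu_tail_finite hνint (half_pos hT) (top_le_iff.1 ?_)
    rw [← htop]
    refine measure_mono fun x hx => ?_
    have h2 : (1:ℝ)/(n₀+1) < T/2 := by
      rw [div_lt_iff₀ (by positivity)]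
      rw [div_lt_iff₀ hT] at hn₀
      nlinarith
    have := hx.1
    simp only [Set.mem_Ioi]
    linarith

lemma nu_Ioc_tendsto {ν : Measure ℝ} {T : ℝ} (hT : 0 < T)
    (hνint : ∫⁻ x in Set.Ioi (0 : ℝ), ENNReal.ofReal (min x 1) ∂ν < ⊤) :
    Tendsto (fun n : ℕ => ν (Set.Ioc T (T + 1/(n+1)))) atTop (𝓝 0) := by
  have h := tendsto_measure_iInter_atTop (μ := ν) (s := fun n : ℕ => Set.Ioc T (T + 1/(n+1)))
    (fun n => measurableSet_Ioc.nullMeasurableSet)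
    (fun n m hnm => Set.Ioc_subset_Ioc le_rfl (by
      have : (1:ℝ)/(m+1) ≤ 1/(n+1) := by
        apply one_div_le_one_div_of_le (by positivity)
        push_cast; linarith [(Nat.cast_le (α := ℝ)).2 hnm]
      linarith))
    ⟨0, fun htop => nu_tail_finite hνint hT (top_le_iff.1 (htop ▸ measure_mono Set.Ioc_subset_Ioi_self))⟩
  have hempty : ⋂ n : ℕ, Set.Ioc T (T + 1/(n+1)) = ∅ := by
    ext x
    simp only [Set.mem_iInter, Set.mem_Ioc, Set.mem_empty_iff_false, iff_false, not_forall]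
    by_cases hx : T < x
    · obtain ⟨n, hn⟩ := exists_nat_gt (1/(x - T))
      refine ⟨n, fun hmem => ?_⟩
      have h1 : (0:ℝ) < x - T := by linarith
      have h2 : 1/(x-T) < n + 1 := by push_cast; linarith
      have h3 : (1:ℝ)/(n+1) < x - T := by
        rw [div_lt_iff₀ (by positivity)] at h2 ⊢
        · nlinarith
      linarith [hmem.2]
    · exact ⟨0, fun hmem => hx hmem.1⟩
  rw [hempty] at h
  simpa [Function.comp_def] using h






/-- ν-integrability of bounded function supported in [c,M] -/
lemma bump_int_nu {ν : Measure ℝ}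
    (hνint : ∫⁻ x in Set.Ioi (0 : ℝ), ENNReal.ofReal (min x 1) ∂ν < ⊤)
    {f : ℝ → ℝ} (hm : AEStronglyMeasurable f (ν.restrict (Set.Ioi 0)))
    {c M : ℝ} (hc : 0 < c) (hb : ∀ x, |f x| ≤ 1)
    (hsupp : ∀ x, x ∉ Set.Icc c M → f x = 0) : IntegrableOn f (Set.Ioi 0) ν := by
  have hmin : 0 < min c 1 := lt_min hc one_pos
  refine nu_integrableOn hνint hm (C := 1 / min c 1) (by positivity) ?_
  intro x hx
  by_cases hxm : x ∈ Set.Icc c M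
  · calc |f x| ≤ 1 := hb x
      _ = 1 / min c 1 * min c 1 := by field_simp
      _ ≤ 1 / min c 1 * min x 1 :=
          mul_le_mul_of_nonneg_left (min_le_min hxm.1 le_rfl) (by positivity)
  · rw [hsupp x hxm, abs_zero]
    exact mul_nonneg (by positivity) (le_min (le_of_lt hx) zero_le_one)


end SubordinatorProofAux

open SubordinatorProofAux
open scoped ENNReal

/-- **Small time behavior of the distribution of a subordinator.**
Let `ψ(s) = bs + ∫₀^∞ (1 − e^{−sx}) ν(dx)` be the Laplace exponent of a subordinator with
drift `b ≥ 0` and infinite Lévy measure `ν`, and let `(μ_t)_{t>0}` be probability measures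
on `[0,∞)` with `∫ e^{−sx} μ_t(dx) = e^{−tψ(s)}`. Then for every `T > 0` with `ν({T}) = 0`,
`μ_t([T,∞))/t → ν((T,∞))` as `t → 0+`. -/
theorem subordinator_tail_tendsto (b : ℝ) (hb : 0 ≤ b) (ν : Measure ℝ)
    (hν₀ : ν (Set.Iic 0) = 0)
    (hνint : ∫⁻ x in Set.Ioi (0 : ℝ), ENNReal.ofReal (min x 1) ∂ν < ⊤)
    (hνinf : ν (Set.Ioi (0 : ℝ)) = ⊤)
    (ψ : ℝ → ℝ)
    (hψ : ∀ s : ℝ, 0 < s →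
      ψ s = b * s + ∫ x in Set.Ioi (0 : ℝ), (1 - Real.exp (-(s * x))) ∂ν)
    (μ : ℝ → Measure ℝ) (hμprob : ∀ t : ℝ, 0 < t → IsProbabilityMeasure (μ t))
    (hμ₀ : ∀ t : ℝ, 0 < t → μ t (Set.Iio 0) = 0)
    (hμlaplace : ∀ t : ℝ, 0 < t → ∀ s : ℝ, 0 < s →
      (∫ x, Real.exp (-(s * x)) ∂μ t) = Real.exp (-(t * ψ s)))
    (T : ℝ) (hT : 0 < T) (hTatom : ν {T} = 0) :
    Tendsto (fun t : ℝ => (μ t (Set.Ici T)).toReal / t) (𝓝[>] 0)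
      (𝓝 (ν (Set.Ioi T)).toReal) := by
  classical
  set L := (ν (Set.Ioi T)).toReal with hL
  rw [Metric.tendsto_nhds]
  intro ε hε
  set e8 := ε/8 with he8
  have he8pos : 0 < e8 := by positivity
  have he8top : ENNReal.ofReal e8 ≠ ⊤ := ENNReal.ofReal_ne_top
  have hofe8 : (0:ℝ≥0∞) < ENNReal.ofReal e8 := ENNReal.ofReal_pos.2 he8pos
  have hκpos : 0 < 1 - Real.exp (-1) := by
    have : Real.exp (-1) < 1 := Real.exp_lt_one_iff.2 (by norm_num)
    linarith
  set κ := 1 - Real.exp (-1) with hκ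
  -- choose M₀
  obtain ⟨n₀, hn₀, hn₀T⟩ : ∃ n : ℕ, ν (Set.Ioi ((n:ℝ))) < ENNReal.ofReal e8 ∧ T + 1 < (n:ℝ) := by
    obtain ⟨n, h1, h2⟩ := (((nu_Ioi_tendsto hνint).eventually_lt_const hofe8).and
      ((tendsto_natCast_atTop_atTop (R := ℝ)).eventually (eventually_gt_atTop (T+1)))).exists
    exact ⟨n, h1, h2⟩
  set M₀ := (n₀ : ℝ) with hM₀def
  have hM₀pos : 0 < M₀ := by rw [hM₀def]; linarith
  -- choose s, M
  obtain ⟨s, hsψ, hs0, hsM₀⟩ : ∃ s : ℝ, ψ s < κ * e8 ∧ 0 < s ∧ s < 1/M₀ := by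
    have hev1 := (psi_tendsto_zero b hνint ψ hψ).eventually_lt_const (by positivity : (0:ℝ) < κ * e8)
    have hev2 : Set.Ioo (0:ℝ) (1/M₀) ∈ 𝓝[>](0:ℝ) :=
      Ioo_mem_nhdsGT_of_mem (Set.mem_Ico.2 ⟨le_rfl, by positivity⟩)
    obtain ⟨s, h1, h2⟩ := (hev1.and hev2).exists
    exact ⟨s, h1, h2.1, h2.2⟩
  set M := 1/s with hMdef
  have hMpos : 0 < M := by positivity
  have hM₀M : M₀ < M := by
    rw [hMdef, lt_div_iff₀ hs0]
    rw [lt_div_iff₀ hM₀pos] at hsM₀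
    linarith
  have hTM : T + 1 < M := lt_trans hn₀T hM₀M
  have hMinv : M⁻¹ = s := by rw [hMdef, one_div, inv_inv]
  have htailM : ν (Set.Ioi M) < ENNReal.ofReal e8 :=
    lt_of_le_of_lt (measure_mono (Set.Ioi_subset_Ioi hM₀M.le)) hn₀
  -- choose δ
  obtain ⟨n₁, hIco, hIoc, hδsmall⟩ : ∃ n : ℕ, ν (Set.Ico (T - 1/(n+1)) T) < ENNReal.ofReal e8
      ∧ ν (Set.Ioc T (T + 1/(n+1))) < ENNReal.ofReal e8 ∧ 1/((n:ℝ)+1) < min 1 T := by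
    obtain ⟨n, ⟨h1, h2⟩, h3⟩ := ((((nu_Ico_tendsto hT hνint).eventually_lt_const hofe8).and
      ((nu_Ioc_tendsto hT hνint).eventually_lt_const hofe8)).and
      (tendsto_one_div_add_atTop_nhds_zero_nat.eventually_lt_const
        (lt_min one_pos hT))).exists
    exact ⟨n, h1, h2, h3⟩
  set δ := 1/((n₁:ℝ)+1) with hδdef
  have hδ0 : 0 < δ := by positivity
  have hδ1 : δ < 1 := lt_of_lt_of_le hδsmall (min_le_left _ _)
  have hδT : δ < T := lt_of_lt_of_le hδsmall (min_le_right _ _)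
  -- finiteness
  have hfin1 : ν (Set.Ioi T) ≠ ⊤ := nu_tail_finite hνint hT
  have hfin2 : ν (Set.Ioi ((T-δ)/2)) ≠ ⊤ := nu_tail_finite hνint (by linarith)
  have hfinIoc : ν (Set.Ioc T (T+δ)) ≠ ⊤ :=
    fun htop => hfin1 (top_le_iff.1 (htop ▸ measure_mono Set.Ioc_subset_Ioi_self))
  have hfinIcc : ν (Set.Icc (T+δ) M) ≠ ⊤ := by
    refine fun htop => hfin1 (top_le_iff.1 (htop ▸ measure_mono ?_))
    intro x hx; exact lt_of_lt_of_le (by linarith) hx.1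
  have hfinIoiM : ν (Set.Ioi M) ≠ ⊤ := nu_tail_finite hνint hMpos
  -- bump functions
  set f : ℝ → ℝ := trap T (T+δ) M (M+1) with hfdef
  set g : ℝ → ℝ := trap (T-δ) T M (M+1) with hgdef
  have hTδ : T < T + δ := by linarith
  have hTδ2 : T - δ < T := by linarith
  have hMM : M < M + 1 := by linarith
  have hTδM : T + δ ≤ M := by linarith
  -- limits from claimC
  have hf_lim := claimC b ν hνint ψ hψ μ hμprob hμ₀ hμlaplace f
    (trap_continuous _ _ _ _) T (M+1) hT (by linarith)
    (fun x hx => trap_eq_zero_of_not_mem _ _ _ _ x hTδ hMM hx)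
  have hg_lim := claimC b ν hνint ψ hψ μ hμprob hμ₀ hμlaplace g
    (trap_continuous _ _ _ _) (T-δ) (M+1) (by linarith) (by linarith)
    (fun x hx => trap_eq_zero_of_not_mem _ _ _ _ x hTδ2 hMM hx)
  have hA := A_tendsto ψ μ hμprob hμ₀ hμlaplace hs0
  -- ν-integrability of bumps
  have hf_nu : IntegrableOn f (Set.Ioi 0) ν :=
    bump_int_nu hνint (trap_continuous _ _ _ _).aestronglyMeasurable.restrict
      (c := T) (M := M+1) hT
      (fun x => abs_le.2 ⟨by linarith [trap_nonneg T (T+δ) M (M+1) x], trap_le_one _ _ _ _ _⟩)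
      (fun x hx => trap_eq_zero_of_not_mem _ _ _ _ x hTδ hMM hx)
  have hg_nu : IntegrableOn g (Set.Ioi 0) ν :=
    bump_int_nu hνint (trap_continuous _ _ _ _).aestronglyMeasurable.restrict
      (c := T-δ) (M := M+1) (by linarith)
      (fun x => abs_le.2 ⟨by linarith [trap_nonneg (T-δ) T M (M+1) x], trap_le_one _ _ _ _ _⟩)
      (fun x hx => trap_eq_zero_of_not_mem _ _ _ _ x hTδ2 hMM hx)
  -- indicator integrals over ν
  have hind_eq : ∀ S : Set ℝ, MeasurableSet S → S ⊆ Set.Ioi 0 →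
      ∫ x in Set.Ioi (0:ℝ), S.indicator (1 : ℝ → ℝ) x ∂ν = (ν S).toReal := by
    intro S hS hsub
    rw [integral_indicator_one hS, measureReal_def, Measure.restrict_apply hS,
      Set.inter_eq_self_of_subset_left hsub]
  have hind_int : ∀ S : Set ℝ, MeasurableSet S → ν S ≠ ⊤ →
      Integrable (S.indicator (1 : ℝ → ℝ)) (ν.restrict (Set.Ioi 0)) := by
    intro S hS hfin
    rw [integrable_indicator_iff hS]
    refine integrableOn_const (ne_of_lt ?_)
    exact lt_of_le_of_lt (le_trans (Measure.restrict_apply_le _ _) (le_of_eq rfl))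
      (lt_top_iff_ne_top.2 hfin)
  -- lower ν bound : L - 2*e8 ≤ ∫ f dν
  have hFf : L - 2*e8 ≤ ∫ x in Set.Ioi (0:ℝ), f x ∂ν := by
    have hstep : (ν (Set.Icc (T+δ) M)).toReal ≤ ∫ x in Set.Ioi (0:ℝ), f x ∂ν := by
      rw [← hind_eq (Set.Icc (T+δ) M) measurableSet_Icc
        (fun x hx => lt_of_lt_of_le (by linarith) hx.1)]
      refine integral_mono (hind_int _ measurableSet_Icc hfinIcc) hf_nu fun x => ?_
      by_cases hx : x ∈ Set.Icc (T+δ) M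
      · rw [Set.indicator_of_mem hx, Pi.one_apply, hfdef,
          trap_eq_one T (T+δ) M (M+1) x hTδ hMM hx.1 hx.2]
      · rw [Set.indicator_of_notMem hx]
        exact trap_nonneg _ _ _ _ _
    have hchain : ν (Set.Ioi T) ≤ ν (Set.Ioc T (T+δ)) + ν (Set.Icc (T+δ) M) + ν (Set.Ioi M) := by
      refine le_trans (measure_mono ?_) (le_trans (measure_union_le _ _)
        (add_le_add_left (measure_union_le _ _) _))
      intro x hx
      by_cases h1 : x ≤ T + δ
      · exact Or.inl (Or.inl ⟨hx, h1⟩)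
      · by_cases h2 : x ≤ M
        · exact Or.inl (Or.inr ⟨le_of_lt (not_le.1 h1), h2⟩)
        · exact Or.inr (not_le.1 h2)
    have hsum_ne : ν (Set.Ioc T (T+δ)) + ν (Set.Icc (T+δ) M) + ν (Set.Ioi M) ≠ ⊤ := by
      simp [ENNReal.add_eq_top, hfinIoc, hfinIcc, hfinIoiM]
    have h1 := ENNReal.toReal_mono hsum_ne hchain
    rw [ENNReal.toReal_add (by simp [ENNReal.add_eq_top, hfinIoc, hfinIcc]) hfinIoiM,
      ENNReal.toReal_add hfinIoc hfinIcc] at h1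
    have h2 : (ν (Set.Ioc T (T+δ))).toReal ≤ e8 := by
      refine le_trans (ENNReal.toReal_mono he8top hIoc.le) ?_
      rw [ENNReal.toReal_ofReal he8pos.le]
    have h3 : (ν (Set.Ioi M)).toReal ≤ e8 := by
      refine le_trans (ENNReal.toReal_mono he8top htailM.le) ?_
      rw [ENNReal.toReal_ofReal he8pos.le]
    have h4 : L ≤ e8 + (ν (Set.Icc (T+δ) M)).toReal + e8 := by
      rw [hL]; linarith
    linarith
  -- upper ν bound : ∫ g dν ≤ L + e8
  have hFg : ∫ x in Set.Ioi (0:ℝ), g x ∂ν ≤ L + e8 := by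
    have hfinIcc2 : ν (Set.Icc (T-δ) (M+1)) ≠ ⊤ := by
      refine fun htop => hfin2 (top_le_iff.1 (htop ▸ measure_mono ?_))
      intro x hx; exact lt_of_lt_of_le (by linarith) hx.1
    have hstep : ∫ x in Set.Ioi (0:ℝ), g x ∂ν ≤ (ν (Set.Icc (T-δ) (M+1))).toReal := by
      rw [← hind_eq (Set.Icc (T-δ) (M+1)) measurableSet_Icc
        (fun x hx => lt_of_lt_of_le (by linarith) hx.1)]
      refine integral_mono hg_nu (hind_int _ measurableSet_Icc hfinIcc2) fun x => ?_
      by_cases hx : x ∈ Set.Icc (T-δ) (M+1)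
      · rw [Set.indicator_of_mem hx, Pi.one_apply]
        exact trap_le_one _ _ _ _ _
      · rw [Set.indicator_of_notMem hx, hgdef,
          trap_eq_zero_of_not_mem _ _ _ _ x hTδ2 hMM hx]
    have hchain : ν (Set.Icc (T-δ) (M+1)) ≤ ENNReal.ofReal e8 + ν (Set.Ioi T) := by
      calc ν (Set.Icc (T-δ) (M+1))
          ≤ ν (Set.Ico (T-δ) T) + ν {T} + ν (Set.Ioi T) := by
            refine le_trans (measure_mono ?_) (le_trans (measure_union_le _ _)
              (add_le_add_left (measure_union_le _ _) _))
            intro x hx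
            rcases lt_trichotomy x T with h | h | h
            · exact Or.inl (Or.inl ⟨hx.1, h⟩)
            · exact Or.inl (Or.inr h)
            · exact Or.inr h
        _ = ν (Set.Ico (T-δ) T) + ν (Set.Ioi T) := by rw [hTatom, add_zero]
        _ ≤ ENNReal.ofReal e8 + ν (Set.Ioi T) := add_le_add_left hIco.le _
    have h1 := ENNReal.toReal_mono (by simp [ENNReal.add_eq_top, he8top, hfin1]) hchain
    rw [ENNReal.toReal_add he8top hfin1, ENNReal.toReal_ofReal he8pos.le] at h1
    rw [hL]
    linarith
  -- pass to eventual estimates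
  rw [Metric.tendsto_nhds] at hf_lim hg_lim hA
  filter_upwards [hf_lim e8 he8pos, hg_lim e8 he8pos, hA (κ*e8) (by positivity),
    self_mem_nhdsWithin] with t htf htg htA ht
  replace ht : (0:ℝ) < t := ht
  haveI := hμprob t ht
  rw [Real.dist_eq] at htf htg htA ⊢
  -- μ-side integrability
  have hf_mu : Integrable f (μ t) :=
    mu_integrable (hμ₀ t ht) (trap_continuous _ _ _ _).aestronglyMeasurable (C := 1)
      (fun x _ => abs_le.2 ⟨by linarith [trap_nonneg T (T+δ) M (M+1) x], trap_le_one _ _ _ _ _⟩)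
  have hg_mu : Integrable g (μ t) :=
    mu_integrable (hμ₀ t ht) (trap_continuous _ _ _ _).aestronglyMeasurable (C := 1)
      (fun x _ => abs_le.2 ⟨by linarith [trap_nonneg (T-δ) T M (M+1) x], trap_le_one _ _ _ _ _⟩)
  have hindT_mu : Integrable ((Set.Ici T).indicator (1 : ℝ → ℝ)) (μ t) :=
    (integrable_const 1).indicator measurableSet_Ici
  have hindM_mu : Integrable ((Set.Ici M).indicator (1 : ℝ → ℝ)) (μ t) :=
    (integrable_const 1).indicator measurableSet_Ici
  -- (i) lower comparison
  have hlow : ∫ x, f x ∂μ t ≤ (μ t (Set.Ici T)).toReal := by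
    rw [← measureReal_def, ← integral_indicator_one (measurableSet_Ici (a := T))]
    refine integral_mono hf_mu hindT_mu fun x => ?_
    by_cases hx : T ≤ x
    · rw [Set.indicator_of_mem (Set.mem_Ici.2 hx), Pi.one_apply]
      exact trap_le_one _ _ _ _ _
    · rw [Set.indicator_of_notMem (fun hc => hx (Set.mem_Ici.1 hc)), hfdef,
        trap_eq_zero_left T (T+δ) M (M+1) x hTδ (le_of_not_ge hx)]
  -- (ii) upper comparison
  have hup : (μ t (Set.Ici T)).toReal ≤ ∫ x, g x ∂μ t + (μ t (Set.Ici M)).toReal := by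
    rw [← measureReal_def, ← measureReal_def, ← integral_indicator_one (measurableSet_Ici (a := T)),
      ← integral_indicator_one (measurableSet_Ici (a := M)),
      ← integral_add hg_mu hindM_mu]
    refine integral_mono hindT_mu (hg_mu.add hindM_mu) fun x => ?_
    by_cases hx : T ≤ x
    · rw [Set.indicator_of_mem (Set.mem_Ici.2 hx), Pi.one_apply]
      by_cases hxM : x ≤ M
      · have : g x = 1 := trap_eq_one (T-δ) T M (M+1) x hTδ2 hMM hx hxM
        have hge : (0:ℝ) ≤ (Set.Ici M).indicator (1 : ℝ → ℝ) x :=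
          Set.indicator_nonneg (fun _ _ => zero_le_one) x
        rw [hgdef] at this ⊢
        rw [this]
        linarith
      · have : (Set.Ici M).indicator (1 : ℝ → ℝ) x = 1 :=
          Set.indicator_of_mem (Set.mem_Ici.2 (le_of_not_ge hxM)) _
        have hge := trap_nonneg (T-δ) T M (M+1) x
        rw [this]
        linarith
    · rw [Set.indicator_of_notMem (fun hc => hx (Set.mem_Ici.1 hc))]
      have hge : (0:ℝ) ≤ (Set.Ici M).indicator (1 : ℝ → ℝ) x :=
        Set.indicator_nonneg (fun _ _ => zero_le_one) x
      have hge2 := trap_nonneg (T-δ) T M (M+1) x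
      rw [hgdef]
      linarith
  -- (iii) tail bound
  have htail : (μ t (Set.Ici M)).toReal / t < 2*e8 := by
    have h1 : κ * (μ t (Set.Ici M)).toReal ≤ ∫ x, (1 - Real.exp (-(s*x))) ∂μ t := by
      have := mu_tail_bound (hμ₀ t ht) hMpos
      rwa [hMinv, ← hκ] at this
    have h2 : (∫ x, (1 - Real.exp (-(s*x))) ∂μ t)/t < ψ s + κ * e8 := by
      have := abs_lt.1 htA
      linarith [this.1, this.2]
    have h3 : κ * ((μ t (Set.Ici M)).toReal / t) < κ * (2*e8) := by
      calc κ * ((μ t (Set.Ici M)).toReal / t) = (κ * (μ t (Set.Ici M)).toReal)/t := by ring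
        _ ≤ (∫ x, (1 - Real.exp (-(s*x))) ∂μ t)/t := by gcongr
        _ < ψ s + κ * e8 := h2
        _ < κ * e8 + κ * e8 := by linarith
        _ = κ * (2*e8) := by ring
    exact (mul_lt_mul_iff_right₀ hκpos).1 h3
  -- combine
  have hlow2 : L - 3*e8 < (μ t (Set.Ici T)).toReal / t := by
    have d1 : (∫ x, f x ∂μ t)/t ≤ (μ t (Set.Ici T)).toReal / t := by gcongr
    have d2 : (∫ x in Set.Ioi (0:ℝ), f x ∂ν) - e8 < (∫ x, f x ∂μ t)/t := by
      have := abs_lt.1 htf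
      linarith [this.1]
    linarith
  have hup2 : (μ t (Set.Ici T)).toReal / t < L + 4*e8 := by
    have d1 : (μ t (Set.Ici T)).toReal / t ≤ (∫ x, g x ∂μ t)/t + (μ t (Set.Ici M)).toReal / t := by
      rw [← add_div]
      gcongr
    have d2 : (∫ x, g x ∂μ t)/t < (∫ x in Set.Ioi (0:ℝ), g x ∂ν) + e8 := by
      have := abs_lt.1 htg
      linarith [this.2]
    linarith
  rw [abs_lt]
  exact ⟨by linarith, by linarith⟩
end

section
/- Let b ≥ 0 and let ν be a Borel measure on (0,∞) with ∫_0^∞ min(x,1) ν(dx) < ∞ and ν((0,∞)) = ∞, and let ψ(s) = b s + ∫_0^∞ (1 − e^{−s x}) ν(dx) for s > 0. Let (μ_x)_{x>0} be Borel probability measures on [0,∞) with ∫_0^∞ e^{−s y} μ_x(dy) = e^{−x ψ(s)} for all s > 0, x > 0. Let (Ω, F, P) be a probability space and for each t > 0 let E(t) be a nonnegative random variable with P(E(t) ≤ x) = μ_x([t,∞)) for all x > 0. Fix a > 0. Then the function t ↦ E[e^{−a E(t)}] is nonincreasing on (0,∞) (in particular Lebesgue measurable), and its Laplace transform satisfies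 ∫_0^∞ e^{−s t} E[e^{−a E(t)}] dt = (ψ(s)/s) · (ψ(s) + a)^{−1} for every s > 0. -/
open MeasureTheory Filter Topology

section Helpers
open Set Real

lemma real_int_exp_Ioi {c : ℝ} (hc : 0 < c) (r : ℝ) :
    ∫ x in Set.Ioi r, Real.exp (-(c * x)) = Real.exp (-(c * r)) / c := by
  have h := integral_comp_mul_left_Ioi (fun u => Real.exp (-u)) r hc
  simp only [smul_eq_mul] at h
  rw [h, integral_exp_neg_Ioi]
  field_simp

lemma exp_neg_intOn_Ioi {c : ℝ} (hc : 0 < c) (r : ℝ) :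
    IntegrableOn (fun x => Real.exp (-(c * x))) (Set.Ioi r) := by
  simpa [neg_mul] using exp_neg_integrableOn_Ioi r hc

lemma lint_exp_Ioi {c : ℝ} (hc : 0 < c) (r : ℝ) :
    ∫⁻ x in Set.Ioi r, ENNReal.ofReal (c * Real.exp (-(c * x))) =
      ENNReal.ofReal (Real.exp (-(c * r))) := by
  rw [← ofReal_integral_eq_lintegral_ofReal
      ((exp_neg_intOn_Ioi hc r).const_mul c)
      (Filter.Eventually.of_forall fun x => by positivity)]
  rw [MeasureTheory.integral_const_mul, real_int_exp_Ioi hc r]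
  congr 1
  field_simp

lemma real_int_exp_Ioc {c : ℝ} (hc : 0 < c) {y : ℝ} (hy : 0 ≤ y) :
    ∫ t in Set.Ioc 0 y, Real.exp (-(c * t)) = (1 - Real.exp (-(c * y))) / c := by
  rw [← intervalIntegral.integral_of_le hy]
  have h : ∫ t in (0:ℝ)..y, Real.exp (-(c * t))
      = c⁻¹ * ∫ u in (0:ℝ)..(c*y), Real.exp (-u) := by
    rw [intervalIntegral.integral_comp_mul_left (fun u => Real.exp (-u)) hc.ne']
    simp [smul_eq_mul]
  have h2 : ∫ u in (0:ℝ)..(c*y), Real.exp (-u) = 1 - Real.exp (-(c * y)) := by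
    have := intervalIntegral.integral_comp_neg (a := (0:ℝ)) (b := c*y) (fun u => Real.exp u)
    rw [this]
    simp
  rw [h, h2]
  field_simp

lemma cont_exp_neg_mul (c : ℝ) : Continuous fun t : ℝ => Real.exp (-(c * t)) := by
  continuity

lemma lint_exp_Ioc {c : ℝ} (hc : 0 < c) (y : ℝ) :
    ∫⁻ t in Set.Ioc 0 y, ENNReal.ofReal (Real.exp (-(c * t))) =
      ENNReal.ofReal ((1 - Real.exp (-(c * y))) / c) := by
  rcases le_or_gt y 0 with hy | hy
  · rw [Set.Ioc_eq_empty (by simpa using hy), Measure.restrict_empty, lintegral_zero_measure]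
    symm
    rw [ENNReal.ofReal_eq_zero]
    apply div_nonpos_of_nonpos_of_nonneg _ hc.le
    simp only [sub_nonpos]
    rw [← Real.exp_zero]
    apply Real.exp_le_exp.2
    nlinarith
  · rw [← ofReal_integral_eq_lintegral_ofReal
      ((cont_exp_neg_mul c).integrableOn_Ioc)
      (Filter.Eventually.of_forall fun x => (Real.exp_pos _).le)]
    rw [real_int_exp_Ioc hc hy.le]

end Helpers


/-- **Laplace transform in time of the Laplace transform of an inverse subordinator.**
Let `ψ(s) = bs + ∫₀^∞ (1 − e^{−sx}) ν(dx)` be the Laplace exponent of a subordinator with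
drift `b ≥ 0` and infinite Lévy measure `ν`, with one-dimensional distributions
`(μ_x)_{x>0}`, and let `E(t)` be nonnegative random variables with
`P(E(t) ≤ x) = μ_x([t,∞))`. Then for fixed `a > 0` the function `t ↦ E[e^{−aE(t)}]` is
nonincreasing on `(0,∞)` and `∫₀^∞ e^{−st} E[e^{−aE(t)}] dt = (ψ(s)/s)(ψ(s)+a)⁻¹` for
every `s > 0`. -/
theorem laplace_of_inverse_subordinator {Ω : Type*} [MeasurableSpace Ω] (P : Measure Ω)
    [IsProbabilityMeasure P] (b : ℝ) (hb : 0 ≤ b) (ν : Measure ℝ)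
    (hν₀ : ν (Set.Iic 0) = 0)
    (hνint : ∫⁻ x in Set.Ioi (0 : ℝ), ENNReal.ofReal (min x 1) ∂ν < ⊤)
    (hνinf : ν (Set.Ioi (0 : ℝ)) = ⊤)
    (ψ : ℝ → ℝ)
    (hψ : ∀ s : ℝ, 0 < s →
      ψ s = b * s + ∫ x in Set.Ioi (0 : ℝ), (1 - Real.exp (-(s * x))) ∂ν)
    (μ : ℝ → Measure ℝ) (hμprob : ∀ x : ℝ, 0 < x → IsProbabilityMeasure (μ x))
    (hμ₀ : ∀ x : ℝ, 0 < x → μ x (Set.Iio 0) = 0)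
    (hμlaplace : ∀ x : ℝ, 0 < x → ∀ s : ℝ, 0 < s →
      (∫ y, Real.exp (-(s * y)) ∂μ x) = Real.exp (-(x * ψ s)))
    (E : ℝ → Ω → ℝ) (hEmeas : ∀ t : ℝ, Measurable (E t))
    (hEnonneg : ∀ t : ℝ, 0 < t → ∀ ω, 0 ≤ E t ω)
    (hEdist : ∀ t : ℝ, 0 < t → ∀ x : ℝ, 0 < x →
      P {ω | E t ω ≤ x} = μ x (Set.Ici t))
    (a : ℝ) (ha : 0 < a) :
    AntitoneOn (fun t : ℝ => ∫ ω, Real.exp (-(a * E t ω)) ∂P) (Set.Ioi 0) ∧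
      ∀ s : ℝ, 0 < s →
        (∫ t in Set.Ioi (0 : ℝ), Real.exp (-(s * t)) * ∫ ω, Real.exp (-(a * E t ω)) ∂P) =
          ψ s / s * (ψ s + a)⁻¹ := by
  clear hb hν₀ hνint hνinf hψ
  -- a.e. nonnegativity under μ x
  have hμae : ∀ x : ℝ, 0 < x → ∀ᵐ y ∂μ x, 0 ≤ y := by
    intro x hx
    rw [ae_iff]
    have : {y : ℝ | ¬ 0 ≤ y} = Set.Iio 0 := by ext y; simp
    rw [this]
    exact hμ₀ x hx
  -- ψ is nonnegative
  have hψnn : ∀ s : ℝ, 0 < s → 0 ≤ ψ s := by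
    intro s hs
    haveI := hμprob 1 one_pos
    have hbound : ∀ᵐ y ∂μ 1, ‖Real.exp (-(s * y))‖ ≤ 1 := by
      filter_upwards [hμae 1 one_pos] with y hy
      rw [Real.norm_eq_abs, abs_of_pos (Real.exp_pos _), ← Real.exp_zero]
      apply Real.exp_le_exp.2
      nlinarith
    have h := norm_integral_le_of_norm_le_const hbound
    rw [hμlaplace 1 one_pos s hs] at h
    simp only [measure_univ, probReal_univ, ENNReal.toReal_one, mul_one, Real.norm_eq_abs,
      abs_of_pos (Real.exp_pos _)] at h
    have h2 : Real.exp (-(1 * ψ s)) ≤ Real.exp 0 := by rwa [Real.exp_zero]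
    have := Real.exp_le_exp.1 h2
    linarith
  -- the lintegral version of F
  set Fl : ℝ → ENNReal := fun t => ∫⁻ ω, ENNReal.ofReal (Real.exp (-(a * E t ω))) ∂P with hFldef
  have hFle : ∀ t : ℝ, 0 < t → Fl t ≤ 1 := by
    intro t ht
    calc Fl t ≤ ∫⁻ _, 1 ∂P := by
          apply lintegral_mono
          intro ω
          refine ENNReal.ofReal_le_one.2 ?_
          rw [← Real.exp_zero]
          apply Real.exp_le_exp.2
          have := hEnonneg t ht ω
          nlinarith
      _ = 1 := by simp
  have hFlne : ∀ t : ℝ, 0 < t → Fl t ≠ ⊤ := fun t ht =>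
    ((hFle t ht).trans_lt ENNReal.one_lt_top).ne
  have hF : ∀ t : ℝ, (∫ ω, Real.exp (-(a * E t ω)) ∂P) = (Fl t).toReal := by
    intro t
    rw [integral_eq_lintegral_of_nonneg_ae (f := fun ω => Real.exp (-(a * E t ω)))
      (Filter.Eventually.of_forall fun ω => (Real.exp_pos _).le)
      (Real.continuous_exp.measurable.comp
        (((hEmeas t).const_mul a).neg)).aestronglyMeasurable]
  -- layer cake representation
  have hlayer : ∀ t : ℝ, 0 < t →
      Fl t = ∫⁻ x in Set.Ioi (0:ℝ),
        ENNReal.ofReal (a * Real.exp (-(a * x))) * P {ω | E t ω ≤ x} := by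
    intro t ht
    have hSmeas : MeasurableSet {p : Ω × ℝ | E t p.1 ≤ p.2} :=
      measurableSet_le ((hEmeas t).comp measurable_fst) measurable_snd
    have key : ∀ ω, ENNReal.ofReal (Real.exp (-(a * E t ω)))
        = ∫⁻ x in Set.Ioi (0:ℝ), {p : Ω × ℝ | E t p.1 ≤ p.2}.indicator
            (fun p => ENNReal.ofReal (a * Real.exp (-(a * p.2)))) (ω, x) := by
      intro ω
      have h1 : ∀ x : ℝ, {p : Ω × ℝ | E t p.1 ≤ p.2}.indicator
            (fun p => ENNReal.ofReal (a * Real.exp (-(a * p.2)))) (ω, x)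
          = (Set.Ici (E t ω)).indicator
              (fun x => ENNReal.ofReal (a * Real.exp (-(a * x)))) x := by
        intro x
        simp [Set.indicator_apply, Set.mem_Ici, Set.mem_setOf_eq]
      rw [lintegral_congr h1, lintegral_indicator measurableSet_Ici,
        Measure.restrict_restrict measurableSet_Ici]
      have hsub : (Set.Ici (E t ω) ∩ Set.Ioi 0 : Set ℝ) \ Set.Ioi (E t ω) ⊆ {E t ω} := by
        intro z hz
        simp only [Set.mem_diff, Set.mem_inter_iff, Set.mem_Ici, Set.mem_Ioi,
          Set.mem_singleton_iff, not_lt] at *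
        exact le_antisymm hz.2 hz.1.1
      have hsub2 : Set.Ioi (E t ω) ⊆ (Set.Ici (E t ω) ∩ Set.Ioi 0 : Set ℝ) := fun z hz =>
        ⟨Set.mem_Ici.2 (le_of_lt hz), Set.mem_Ioi.2 (lt_of_le_of_lt (hEnonneg t ht ω) hz)⟩
      have hae : (Set.Ici (E t ω) ∩ Set.Ioi 0 : Set ℝ) =ᵐ[volume] Set.Ioi (E t ω) := by
        rw [MeasureTheory.ae_eq_set]
        constructor
        · exact measure_mono_null hsub (measure_singleton _)
        · rw [Set.diff_eq_empty.2 hsub2]; simp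
      rw [Measure.restrict_congr_set hae, lint_exp_Ioi ha]
    calc Fl t = ∫⁻ ω, (∫⁻ x in Set.Ioi (0:ℝ), {p : Ω × ℝ | E t p.1 ≤ p.2}.indicator
            (fun p => ENNReal.ofReal (a * Real.exp (-(a * p.2)))) (ω, x) ∂volume) ∂P :=
          lintegral_congr key
      _ = ∫⁻ x in Set.Ioi (0:ℝ), ∫⁻ ω, {p : Ω × ℝ | E t p.1 ≤ p.2}.indicator
            (fun p => ENNReal.ofReal (a * Real.exp (-(a * p.2)))) (ω, x) ∂P := by
          apply lintegral_lintegral_swap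
          exact (Measurable.indicator
            ((ENNReal.measurable_ofReal.comp
              ((measurable_const.mul (((measurable_snd.const_mul a).neg).exp))))) hSmeas).aemeasurable
      _ = ∫⁻ x in Set.Ioi (0:ℝ),
            ENNReal.ofReal (a * Real.exp (-(a * x))) * P {ω | E t ω ≤ x} := by
          apply lintegral_congr
          intro x
          have h2 : ∀ ω, {p : Ω × ℝ | E t p.1 ≤ p.2}.indicator
              (fun p => ENNReal.ofReal (a * Real.exp (-(a * p.2)))) (ω, x)
            = {ω : Ω | E t ω ≤ x}.indicator
                (fun _ => ENNReal.ofReal (a * Real.exp (-(a * x)))) ω := by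
            intro ω
            simp [Set.indicator_apply, Set.mem_setOf_eq]
          rw [lintegral_congr h2, lintegral_indicator_const
            (measurableSet_le (hEmeas t) measurable_const)]
  -- the antitone part
  have hanti : AntitoneOn (fun t : ℝ => ∫ ω, Real.exp (-(a * E t ω)) ∂P) (Set.Ioi 0) := by
    intro t1 h1 t2 h2 h12
    simp only
    rw [hF t1, hF t2]
    refine (ENNReal.toReal_le_toReal (hFlne t2 h2) (hFlne t1 h1)).2 ?_
    rw [hlayer t1 h1, hlayer t2 h2]
    refine lintegral_mono_ae ((ae_restrict_iff' measurableSet_Ioi).2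
      (Filter.Eventually.of_forall fun x hx => ?_))
    refine mul_le_mul_right ?_ _
    rw [hEdist t1 h1 x hx, hEdist t2 h2 x hx]
    exact measure_mono (Set.Ici_subset_Ici.2 h12)
  refine ⟨hanti, ?_⟩
  -- the measurable modification M
  set u : ℚ → ℝ → ENNReal := fun q t =>
    if 0 < t ∧ 0 < (q:ℝ) then P {ω | E t ω ≤ (q:ℝ)} else 1 with hudef
  have hu_anti : ∀ q, Antitone (u q) := by
    intro q t1 t2 h12
    simp only [hudef]
    by_cases hq : 0 < (q:ℝ)
    · by_cases h1 : 0 < t1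
      · have h2 : 0 < t2 := lt_of_lt_of_le h1 h12
        rw [if_pos (⟨h2, hq⟩ : 0 < t2 ∧ 0 < (q:ℝ)), if_pos (⟨h1, hq⟩ : 0 < t1 ∧ 0 < (q:ℝ)),
          hEdist t1 h1 q hq, hEdist t2 h2 q hq]
        exact measure_mono (Set.Ici_subset_Ici.2 h12)
      · rw [if_neg (fun h : 0 < t1 ∧ 0 < (q:ℝ) => h1 h.1)]
        split
        · exact prob_le_one
        · exact le_refl 1
    · rw [if_neg (fun h : 0 < t1 ∧ 0 < (q:ℝ) => hq h.2),
        if_neg (fun h : 0 < t2 ∧ 0 < (q:ℝ) => hq h.2)]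
  set M : ℝ × ℝ → ENNReal := fun p => ⨅ q : ℚ, if p.1 < (q:ℝ) then u q p.2 else 1 with hMdef
  have hM_meas : Measurable M := by
    apply Measurable.iInf
    intro q
    exact Measurable.ite (measurableSet_lt measurable_fst measurable_const)
      (((hu_anti q).measurable).comp measurable_snd) measurable_const
  have hM_eq : ∀ x : ℝ, 0 < x → ∀ t : ℝ, 0 < t → M (x, t) = P {ω | E t ω ≤ x} := by
    intro x hx t ht
    have hterm : ∀ q : ℚ, (if x < (q:ℝ) then u q t else 1)
        = P (if x < (q:ℝ) then {ω | E t ω ≤ (q:ℝ)} else Set.univ) := by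
      intro q
      by_cases h : x < (q:ℝ)
      · have hq : 0 < (q:ℝ) := hx.trans h
        rw [if_pos h, if_pos h]
        simp only [hudef]
        rw [if_pos ⟨ht, hq⟩]
      · rw [if_neg h, if_neg h, measure_univ]
    have hset : (⋂ q : ℚ, (if x < (q:ℝ) then {ω | E t ω ≤ (q:ℝ)} else Set.univ))
        = {ω | E t ω ≤ x} := by
      ext ω
      simp only [Set.mem_iInter, Set.mem_setOf_eq]
      constructor
      · intro h
        by_contra hgt
        push_neg at hgt
        obtain ⟨q, hq1, hq2⟩ := exists_rat_btwn hgt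
        have h' := h q
        rw [if_pos hq1] at h'
        exact absurd h' (not_le.2 hq2)
      · intro h q
        split
        · next hxq => exact h.trans hxq.le
        · trivial
    have hdir : Directed (· ⊇ ·)
        (fun q : ℚ => if x < (q:ℝ) then {ω | E t ω ≤ (q:ℝ)} else Set.univ) := by
      intro q1 q2
      dsimp only
      by_cases h1 : x < (q1:ℝ)
      · by_cases h2 : x < (q2:ℝ)
        · have hmin : x < ((min q1 q2 : ℚ):ℝ) := by push_cast; exact lt_min h1 h2
          refine ⟨min q1 q2, ?_, ?_⟩
          · rw [if_pos h1, if_pos hmin]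
            intro ω hω
            simp only [Set.mem_setOf_eq] at *
            refine hω.trans ?_
            push_cast
            exact min_le_left _ _
          · rw [if_pos h2, if_pos hmin]
            intro ω hω
            simp only [Set.mem_setOf_eq] at *
            refine hω.trans ?_
            push_cast
            exact min_le_right _ _
        · exact ⟨q1, subset_rfl, by rw [if_neg h2]; exact Set.subset_univ _⟩
      · exact ⟨q2, by rw [if_neg h1]; exact Set.subset_univ _, subset_rfl⟩
    have hnm : ∀ q : ℚ, NullMeasurableSet
        (if x < (q:ℝ) then {ω | E t ω ≤ (q:ℝ)} else Set.univ) P := by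
      intro q
      split
      · exact (measurableSet_le (hEmeas t) measurable_const).nullMeasurableSet
      · exact MeasurableSet.univ.nullMeasurableSet
    calc M (x, t) = ⨅ q : ℚ, P (if x < (q:ℝ) then {ω | E t ω ≤ (q:ℝ)} else Set.univ) := by
          simp only [hMdef]
          exact iInf_congr hterm
      _ = P (⋂ q : ℚ, (if x < (q:ℝ) then {ω | E t ω ≤ (q:ℝ)} else Set.univ)) :=
          (Directed.measure_iInter hnm hdir ⟨0, measure_ne_top P _⟩).symm
      _ = P {ω | E t ω ≤ x} := by rw [hset]
  -- now the Laplace transform identity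
  intro s hs
  have hψs := hψnn s hs
  have hψa : 0 < ψ s + a := by linarith
  -- inner t-integral
  have hI : ∀ x : ℝ, 0 < x →
      (∫⁻ t in Set.Ioi (0:ℝ), ENNReal.ofReal (Real.exp (-(s * t))) * μ x (Set.Ici t))
        = ENNReal.ofReal ((1 - Real.exp (-(x * ψ s))) / s) := by
    intro x hx
    haveI := hμprob x hx
    have step1 : ∀ t : ℝ, ENNReal.ofReal (Real.exp (-(s * t))) * μ x (Set.Ici t)
        = ∫⁻ y, ENNReal.ofReal (Real.exp (-(s * t))) *
            ({p : ℝ × ℝ | p.1 ≤ p.2}.indicator (fun _ => (1:ENNReal)) (t, y)) ∂μ x := by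
      intro t
      rw [lintegral_const_mul' _ _ ENNReal.ofReal_ne_top]
      congr 1
      have h0 : ∀ y : ℝ, ({p : ℝ × ℝ | p.1 ≤ p.2}.indicator (fun _ => (1:ENNReal)) (t, y))
          = (Set.Ici t).indicator (fun _ => (1:ENNReal)) y := by
        intro y
        simp [Set.indicator_apply, Set.mem_Ici, Set.mem_setOf_eq]
      rw [lintegral_congr h0, lintegral_indicator_const measurableSet_Ici, one_mul]
    calc (∫⁻ t in Set.Ioi (0:ℝ), ENNReal.ofReal (Real.exp (-(s * t))) * μ x (Set.Ici t))
        = ∫⁻ t in Set.Ioi (0:ℝ), ∫⁻ y, ENNReal.ofReal (Real.exp (-(s * t))) *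
            ({p : ℝ × ℝ | p.1 ≤ p.2}.indicator (fun _ => (1:ENNReal)) (t, y)) ∂μ x :=
          lintegral_congr step1
      _ = ∫⁻ y, ∫⁻ t in Set.Ioi (0:ℝ), ENNReal.ofReal (Real.exp (-(s * t))) *
            ({p : ℝ × ℝ | p.1 ≤ p.2}.indicator (fun _ => (1:ENNReal)) (t, y)) ∂volume ∂μ x := by
          apply lintegral_lintegral_swap
          apply Measurable.aemeasurable
          apply Measurable.mul
          · exact ENNReal.measurable_ofReal.comp
              (((measurable_fst.const_mul s).neg).exp)
          · exact Measurable.indicator measurable_const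
              (measurableSet_le measurable_fst measurable_snd)
      _ = ∫⁻ y, ENNReal.ofReal ((1 - Real.exp (-(s * y))) / s) ∂μ x := by
          apply lintegral_congr
          intro y
          have h3 : ∀ t : ℝ, ENNReal.ofReal (Real.exp (-(s * t))) *
              ({p : ℝ × ℝ | p.1 ≤ p.2}.indicator (fun _ => (1:ENNReal)) (t, y))
            = (Set.Iic y).indicator (fun t => ENNReal.ofReal (Real.exp (-(s * t)))) t := by
            intro t
            simp [Set.indicator_apply, Set.mem_Iic, Set.mem_setOf_eq]
          rw [lintegral_congr h3, lintegral_indicator measurableSet_Iic,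
            Measure.restrict_restrict measurableSet_Iic, Set.Iic_inter_Ioi,
            lint_exp_Ioc hs]
      _ = ENNReal.ofReal (∫ y, (1 - Real.exp (-(s * y))) / s ∂μ x) := by
          rw [ofReal_integral_eq_lintegral_ofReal]
          · have hmeas : AEStronglyMeasurable (fun y => (1 - Real.exp (-(s * y))) / s) (μ x) := by
              apply Continuous.aestronglyMeasurable
              exact (continuous_const.sub (cont_exp_neg_mul s)).div_const s
            refine Integrable.mono' (integrable_const (1/s)) hmeas ?_
            filter_upwards [hμae x hx] with y hy
            have he : Real.exp (-(s * y)) ≤ 1 := by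
              rw [← Real.exp_zero]
              apply Real.exp_le_exp.2
              nlinarith
            have h1 : |1 - Real.exp (-(s * y))| ≤ 1 := by
              rw [abs_le]
              constructor <;> nlinarith [Real.exp_pos (-(s * y))]
            rw [Real.norm_eq_abs, abs_div, abs_of_pos hs]
            rw [div_le_div_iff₀ hs hs]
            nlinarith
          · filter_upwards [hμae x hx] with y hy
            apply div_nonneg _ hs.le
            simp only [sub_nonneg]
            rw [← Real.exp_zero]
            apply Real.exp_le_exp.2
            nlinarith
      _ = ENNReal.ofReal ((1 - Real.exp (-(x * ψ s))) / s) := by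
          congr 1
          rw [MeasureTheory.integral_div]
          rw [integral_sub (integrable_const 1)]
          · rw [integral_const]
            simp only [measure_univ, probReal_univ, ENNReal.toReal_one, smul_eq_mul]
            rw [hμlaplace x hx s hs]
            norm_num
          · refine Integrable.mono' (integrable_const 1)
              (Continuous.aestronglyMeasurable (cont_exp_neg_mul s)) ?_
            filter_upwards [hμae x hx] with y hy
            rw [Real.norm_eq_abs, abs_of_pos (Real.exp_pos _), ← Real.exp_zero]
            apply Real.exp_le_exp.2
            nlinarith
  -- the main computation in ℝ≥0∞
  have hmain : (∫⁻ t in Set.Ioi (0:ℝ), ENNReal.ofReal (Real.exp (-(s * t))) * Fl t)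
      = ENNReal.ofReal (ψ s / (s * (ψ s + a))) := by
    have step1 : (∫⁻ t in Set.Ioi (0:ℝ), ENNReal.ofReal (Real.exp (-(s * t))) * Fl t)
        = ∫⁻ t in Set.Ioi (0:ℝ), ∫⁻ x in Set.Ioi (0:ℝ),
            ENNReal.ofReal (Real.exp (-(s * t))) *
              (ENNReal.ofReal (a * Real.exp (-(a * x))) * M (x, t)) ∂volume ∂volume := by
      refine setLIntegral_congr_fun measurableSet_Ioi
        (fun t ht => ?_)
      rw [hlayer t ht, ← lintegral_const_mul' _ _ ENNReal.ofReal_ne_top]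
      refine setLIntegral_congr_fun measurableSet_Ioi
        (fun x hx => ?_)
      rw [hM_eq x hx t ht]
    have step2 : (∫⁻ t in Set.Ioi (0:ℝ), ∫⁻ x in Set.Ioi (0:ℝ),
            ENNReal.ofReal (Real.exp (-(s * t))) *
              (ENNReal.ofReal (a * Real.exp (-(a * x))) * M (x, t)) ∂volume ∂volume)
        = ∫⁻ x in Set.Ioi (0:ℝ), ∫⁻ t in Set.Ioi (0:ℝ),
            ENNReal.ofReal (Real.exp (-(s * t))) *
              (ENNReal.ofReal (a * Real.exp (-(a * x))) * M (x, t)) ∂volume ∂volume := by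
      apply lintegral_lintegral_swap
      apply Measurable.aemeasurable
      apply Measurable.mul
      · exact ENNReal.measurable_ofReal.comp (((measurable_fst.const_mul s).neg).exp)
      · apply Measurable.mul
        · exact ENNReal.measurable_ofReal.comp
            (measurable_const.mul (((measurable_snd.const_mul a).neg).exp))
        · exact hM_meas.comp (measurable_snd.prodMk measurable_fst)
    have step3 : (∫⁻ x in Set.Ioi (0:ℝ), ∫⁻ t in Set.Ioi (0:ℝ),
            ENNReal.ofReal (Real.exp (-(s * t))) *
              (ENNReal.ofReal (a * Real.exp (-(a * x))) * M (x, t)) ∂volume ∂volume)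
        = ∫⁻ x in Set.Ioi (0:ℝ), ENNReal.ofReal ((a / s) *
            (Real.exp (-(a * x)) - Real.exp (-((a + ψ s) * x)))) ∂volume := by
      refine setLIntegral_congr_fun measurableSet_Ioi
        (fun x hx => ?_)
      have hin : (∫⁻ t in Set.Ioi (0:ℝ),
            ENNReal.ofReal (Real.exp (-(s * t))) *
              (ENNReal.ofReal (a * Real.exp (-(a * x))) * M (x, t)) ∂volume)
          = ENNReal.ofReal (a * Real.exp (-(a * x))) *
              ∫⁻ t in Set.Ioi (0:ℝ),
                ENNReal.ofReal (Real.exp (-(s * t))) * μ x (Set.Ici t) ∂volume := by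
        rw [← lintegral_const_mul' _ _ ENNReal.ofReal_ne_top]
        refine setLIntegral_congr_fun measurableSet_Ioi
          (fun t ht => ?_)
        rw [hM_eq x hx t ht, hEdist t ht x hx]
        ring
      rw [hin, hI x hx, ← ENNReal.ofReal_mul (by positivity)]
      congr 1
      have hexp : Real.exp (-(a * x)) * Real.exp (-(x * ψ s))
          = Real.exp (-((a + ψ s) * x)) := by
        rw [← Real.exp_add]
        ring_nf
      field_simp
      rw [mul_comm x (a + ψ s)]
      nlinarith [hexp]
    have step4 : (∫⁻ x in Set.Ioi (0:ℝ), ENNReal.ofReal ((a / s) *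
            (Real.exp (-(a * x)) - Real.exp (-((a + ψ s) * x)))) ∂volume)
        = ENNReal.ofReal (ψ s / (s * (ψ s + a))) := by
      have haψ : 0 < a + ψ s := by linarith
      have hint1 := exp_neg_intOn_Ioi ha (0:ℝ)
      have hint2 := exp_neg_intOn_Ioi haψ (0:ℝ)
      have hint3 : IntegrableOn (fun x : ℝ => (a / s) *
          (Real.exp (-(a * x)) - Real.exp (-((a + ψ s) * x)))) (Set.Ioi (0:ℝ)) := by
        simpa [Pi.sub_apply, IntegrableOn] using (hint1.sub hint2).const_mul (a / s)
      rw [← ofReal_integral_eq_lintegral_ofReal hint3]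
      · congr 1
        rw [MeasureTheory.integral_const_mul, integral_sub hint1 hint2,
          real_int_exp_Ioi ha 0, real_int_exp_Ioi haψ 0]
        simp only [mul_zero, neg_zero, Real.exp_zero]
        field_simp
        ring
      · refine (ae_restrict_iff' measurableSet_Ioi).2
          (Filter.Eventually.of_forall fun x hx => ?_)
        have hx0 : (0:ℝ) < x := hx
        have : Real.exp (-((a + ψ s) * x)) ≤ Real.exp (-(a * x)) := by
          apply Real.exp_le_exp.2
          nlinarith
        have has : 0 ≤ a / s := by positivity
        exact mul_nonneg has (by linarith)
    rw [step1, step2, step3, step4]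
  -- convert the Bochner integral to the lintegral
  have hmeasF : AEStronglyMeasurable
      (fun t : ℝ => Real.exp (-(s * t)) * ∫ ω, Real.exp (-(a * E t ω)) ∂P)
      (volume.restrict (Set.Ioi (0:ℝ))) :=
    (Continuous.aestronglyMeasurable (cont_exp_neg_mul s)).mul
      ((aemeasurable_restrict_of_antitoneOn measurableSet_Ioi hanti).aestronglyMeasurable)
  rw [integral_eq_lintegral_of_nonneg_ae
      (Filter.Eventually.of_forall fun t => mul_nonneg (Real.exp_pos _).le
        (integral_nonneg fun ω => (Real.exp_pos _).le)) hmeasF]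
  have hconv : (∫⁻ t in Set.Ioi (0:ℝ),
      ENNReal.ofReal (Real.exp (-(s * t)) * ∫ ω, Real.exp (-(a * E t ω)) ∂P))
      = ENNReal.ofReal (ψ s / (s * (ψ s + a))) := by
    rw [← hmain]
    refine setLIntegral_congr_fun measurableSet_Ioi
      (fun t ht => ?_)
    rw [ENNReal.ofReal_mul (Real.exp_pos _).le, hF t, ENNReal.ofReal_toReal (hFlne t ht)]
  rw [hconv, ENNReal.toReal_ofReal (div_nonneg hψs (by positivity))]
  field_simp [hs.ne', hψa.ne']
end

section
/- Let V be a nonnegative random variable on a probability space (Ω, F, P) and let θ > 0. Then the following are equivalent: (i) there exist constants 0 < c ≤ C and a₀ > 0 such that c a^{−θ} ≤ E[e^{−a V}] ≤ C a^{−θ} for all a ≥ a₀; (ii) there exist constants 0 < c' ≤ C' and ε₀ > 0 such that c' ε^{θ} ≤ P(V ≤ ε) ≤ C' ε^{θ} for all ε ∈ (0, ε₀]. -/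
open MeasureTheory Filter Topology

set_option maxHeartbeats 1000000

section TaubAux
variable {Ω : Type*} [MeasurableSpace Ω] (P : Measure Ω) [IsProbabilityMeasure P] (V : Ω → ℝ)

private lemma taub_integrable (hVmeas : Measurable V) (hVnonneg : ∀ ω, 0 ≤ V ω) {a : ℝ}
    (ha : 0 ≤ a) : Integrable (fun ω => Real.exp (-(a * V ω))) P := by
  refine (integrable_const (1:ℝ)).mono' ?_ (ae_of_all _ fun ω => ?_)
  · exact (Real.measurable_exp.comp ((measurable_const.mul hVmeas).neg)).aestronglyMeasurable
  · rw [Real.norm_eq_abs, abs_of_pos (Real.exp_pos _)]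
    exact Real.exp_le_one_iff.mpr (neg_nonpos.mpr (mul_nonneg ha (hVnonneg ω)))

private lemma taub_le_one (hVmeas : Measurable V) (hVnonneg : ∀ ω, 0 ≤ V ω) {a : ℝ}
    (ha : 0 ≤ a) : (∫ ω, Real.exp (-(a * V ω)) ∂P) ≤ 1 := by
  have := integral_mono (taub_integrable P V hVmeas hVnonneg ha) (integrable_const (1:ℝ))
    (fun ω => Real.exp_le_one_iff.mpr (neg_nonpos.mpr (mul_nonneg ha (hVnonneg ω))))
  simpa using this

private lemma taub_lower_split (hVmeas : Measurable V) (hVnonneg : ∀ ω, 0 ≤ V ω) {a ε : ℝ}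
    (ha : 0 ≤ a) :
    Real.exp (-(a * ε)) * (P {ω | V ω ≤ ε}).toReal ≤ ∫ ω, Real.exp (-(a * V ω)) ∂P := by
  have hA : MeasurableSet {ω | V ω ≤ ε} := measurableSet_le hVmeas measurable_const
  have hint := taub_integrable P V hVmeas hVnonneg ha
  have h1 : Real.exp (-(a * ε)) * (P {ω | V ω ≤ ε}).toReal
      ≤ ∫ ω in {ω | V ω ≤ ε}, Real.exp (-(a * V ω)) ∂P := by
    refine setIntegral_ge_of_const_le_real hA (measure_ne_top P _) (fun ω hω => ?_) hint.integrableOn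
    exact Real.exp_le_exp.mpr (neg_le_neg (mul_le_mul_of_nonneg_left hω ha))
  exact h1.trans (setIntegral_le_integral hint (ae_of_all _ fun ω => (Real.exp_pos _).le))

private lemma taub_upper_split (hVmeas : Measurable V) (hVnonneg : ∀ ω, 0 ≤ V ω) {a ε : ℝ}
    (ha : 0 ≤ a) :
    (∫ ω, Real.exp (-(a * V ω)) ∂P) ≤ (P {ω | V ω ≤ ε}).toReal
      + Real.exp (-(a * ε / 2)) * ∫ ω, Real.exp (-(a / 2 * V ω)) ∂P := by
  have hA : MeasurableSet {ω | V ω ≤ ε} := measurableSet_le hVmeas measurable_const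
  have hint := taub_integrable P V hVmeas hVnonneg ha
  have hint2 := taub_integrable P V hVmeas hVnonneg (by linarith : (0:ℝ) ≤ a / 2)
  have hsplit : (∫ ω, Real.exp (-(a * V ω)) ∂P)
      = (∫ ω in {ω | V ω ≤ ε}, Real.exp (-(a * V ω)) ∂P)
        + ∫ ω in {ω | V ω ≤ ε}ᶜ, Real.exp (-(a * V ω)) ∂P :=
    (integral_add_compl hA hint).symm
  have h1 : (∫ ω in {ω | V ω ≤ ε}, Real.exp (-(a * V ω)) ∂P) ≤ (P {ω | V ω ≤ ε}).toReal := by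
    have := norm_setIntegral_le_of_norm_le_const (μ := P) (s := {ω | V ω ≤ ε})
      (C := 1) (f := fun ω => Real.exp (-(a * V ω))) (measure_lt_top P _)
      (fun ω _ => by
        rw [Real.norm_eq_abs, abs_of_pos (Real.exp_pos _)]
        exact Real.exp_le_one_iff.mpr (neg_nonpos.mpr (mul_nonneg ha (hVnonneg ω))))
    calc (∫ ω in {ω | V ω ≤ ε}, Real.exp (-(a * V ω)) ∂P)
        ≤ ‖∫ ω in {ω | V ω ≤ ε}, Real.exp (-(a * V ω)) ∂P‖ := le_abs_self _
      _ ≤ 1 * (P {ω | V ω ≤ ε}).toReal := this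
      _ = (P {ω | V ω ≤ ε}).toReal := one_mul _
  have h2 : (∫ ω in {ω | V ω ≤ ε}ᶜ, Real.exp (-(a * V ω)) ∂P)
      ≤ Real.exp (-(a * ε / 2)) * ∫ ω, Real.exp (-(a / 2 * V ω)) ∂P := by
    have hmono : ∀ ω ∈ {ω | V ω ≤ ε}ᶜ,
        Real.exp (-(a * V ω)) ≤ Real.exp (-(a * ε / 2)) * Real.exp (-(a / 2 * V ω)) := by
      intro ω hω
      have hV : ε < V ω := not_le.mp hω
      rw [← Real.exp_add]
      apply Real.exp_le_exp.mpr
      nlinarith [hVnonneg ω]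
    calc (∫ ω in {ω | V ω ≤ ε}ᶜ, Real.exp (-(a * V ω)) ∂P)
        ≤ ∫ ω in {ω | V ω ≤ ε}ᶜ, Real.exp (-(a * ε / 2)) * Real.exp (-(a / 2 * V ω)) ∂P :=
          setIntegral_mono_on hint.integrableOn ((hint2.const_mul _).integrableOn) hA.compl hmono
      _ = Real.exp (-(a * ε / 2)) * ∫ ω in {ω | V ω ≤ ε}ᶜ, Real.exp (-(a / 2 * V ω)) ∂P := by
          rw [integral_const_mul]
      _ ≤ Real.exp (-(a * ε / 2)) * ∫ ω, Real.exp (-(a / 2 * V ω)) ∂P := by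
          refine mul_le_mul_of_nonneg_left ?_ (Real.exp_pos _).le
          exact setIntegral_le_integral hint2 (ae_of_all _ fun ω => (Real.exp_pos _).le)
  linarith

private lemma taub_half_rpow {a : ℝ} (ha : 0 < a) (θ : ℝ) :
    (a / 2) ^ (-θ) = 2 ^ θ * a ^ (-θ) := by
  rw [Real.div_rpow ha.le (by norm_num : (0:ℝ) ≤ 2),
    Real.rpow_neg (by norm_num : (0:ℝ) ≤ 2) θ, div_eq_mul_inv, inv_inv, mul_comm]

end TaubAux

/-- **Weak-order (two-sided bound) Tauberian theorem.**
For a nonnegative random variable `V` and `θ > 0`: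
`E[e^{-aV}] ≈ a^{-θ}` as `a → ∞` if and only if `P(V ≤ ε) ≈ ε^θ` as `ε → 0+`. -/
theorem tauberian_weak_order {Ω : Type*} [MeasurableSpace Ω] (P : Measure Ω)
    [IsProbabilityMeasure P] (V : Ω → ℝ) (hVmeas : Measurable V) (hVnonneg : ∀ ω, 0 ≤ V ω)
    (θ : ℝ) (hθ : 0 < θ) :
    (∃ c C a₀ : ℝ, 0 < c ∧ c ≤ C ∧ 0 < a₀ ∧
        ∀ a : ℝ, a₀ ≤ a →
          c * a ^ (-θ) ≤ ∫ ω, Real.exp (-(a * V ω)) ∂P ∧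
            (∫ ω, Real.exp (-(a * V ω)) ∂P) ≤ C * a ^ (-θ)) ↔
      (∃ c' C' ε₀ : ℝ, 0 < c' ∧ c' ≤ C' ∧ 0 < ε₀ ∧
        ∀ ε : ℝ, ε ∈ Set.Ioc 0 ε₀ →
          c' * ε ^ θ ≤ (P {ω | V ω ≤ ε}).toReal ∧
            (P {ω | V ω ≤ ε}).toReal ≤ C' * ε ^ θ) := by
  constructor
  · -- Laplace bounds ⇒ distribution bounds
    rintro ⟨c, C, a₀, hc, hcC, ha₀, hL⟩
    have hC : 0 < C := lt_of_lt_of_le hc hcC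
    set t : ℝ := 2 * Real.log (2 ^ (θ + 1) * C / c) with ht_def
    have h2rp : (2:ℝ) ≤ 2 ^ (θ + 1) := by
      calc (2:ℝ) = 2 ^ (1:ℝ) := (Real.rpow_one 2).symm
        _ ≤ 2 ^ (θ + 1) := by
          apply Real.rpow_le_rpow_of_exponent_le (by norm_num) (by linarith)
    have h2rppos : (0:ℝ) < 2 ^ (θ + 1) := Real.rpow_pos_of_pos (by norm_num) _
    have harg : (2:ℝ) ≤ 2 ^ (θ + 1) * C / c := by
      rw [le_div_iff₀ hc]
      nlinarith
    have hargpos : (0:ℝ) < 2 ^ (θ + 1) * C / c := by linarith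
    have ht : 0 < t := by
      have : (0:ℝ) < Real.log (2 ^ (θ + 1) * C / c) :=
        Real.log_pos (by linarith)
      linarith
    have hexp_t : Real.exp (-(t / 2)) = c / (2 ^ (θ + 1) * C) := by
      have : t / 2 = Real.log (2 ^ (θ + 1) * C / c) := by ring
      rw [this, Real.exp_neg, Real.exp_log hargpos, inv_div]
    refine ⟨c / 2 * t ^ (-θ), c / 2 * t ^ (-θ) + Real.exp 1 * C,
      min (1 / a₀) (t / (2 * a₀)), ?_, ?_, ?_, ?_⟩
    · positivity
    · nlinarith [mul_pos (Real.exp_pos 1) hC]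
    · positivity
    intro ε hε
    obtain ⟨hε0, hεle⟩ := hε
    have hεa₀ : ε ≤ 1 / a₀ := le_trans hεle (min_le_left _ _)
    have hεt : ε ≤ t / (2 * a₀) := le_trans hεle (min_le_right _ _)
    constructor
    · -- lower bound on F
      set a : ℝ := t / ε with ha_def
      have hapos : 0 < a := by positivity
      have haa₀ : 2 * a₀ ≤ a := by
        rw [ha_def, le_div_iff₀ hε0]
        calc 2 * a₀ * ε ≤ 2 * a₀ * (t / (2 * a₀)) := by
              apply mul_le_mul_of_nonneg_left hεt (by positivity)
          _ = t := by field_simp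
      have hsplit := taub_upper_split P V hVmeas hVnonneg (a := a) (ε := ε) hapos.le
      have haε : a * ε = t := by
        rw [ha_def]; field_simp
      have hLa := (hL a (by linarith)).1
      have hLa2 := (hL (a / 2) (by linarith)).2
      have ha2rp : (a / 2) ^ (-θ) = 2 ^ θ * a ^ (-θ) := taub_half_rpow hapos θ
      have hexp_combo : Real.exp (-(a * ε / 2)) * (C * (a / 2) ^ (-θ)) = c / 2 * a ^ (-θ) := by
        rw [haε, hexp_t, ha2rp]
        have h2θ : (2:ℝ) ^ (θ + 1) = 2 ^ θ * 2 := by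
          rw [Real.rpow_add (by norm_num : (0:ℝ) < 2), Real.rpow_one]
        rw [h2θ]
        field_simp
      have key : c / 2 * a ^ (-θ) ≤ (P {ω | V ω ≤ ε}).toReal := by
        have h1 : Real.exp (-(a * ε / 2)) * (∫ ω, Real.exp (-(a / 2 * V ω)) ∂P)
            ≤ c / 2 * a ^ (-θ) := by
          rw [← hexp_combo]
          exact mul_le_mul_of_nonneg_left hLa2 (Real.exp_pos _).le
        nlinarith [hLa, hsplit, h1]
      have haθ : a ^ (-θ) = t ^ (-θ) * ε ^ θ := by
        rw [ha_def, Real.div_rpow ht.le hε0.le, Real.rpow_neg hε0.le, div_eq_mul_inv, inv_inv]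
      calc c / 2 * t ^ (-θ) * ε ^ θ = c / 2 * a ^ (-θ) := by rw [haθ]; ring
        _ ≤ (P {ω | V ω ≤ ε}).toReal := key
    · -- upper bound on F
      have hA₀ε : a₀ ≤ 1 / ε := by
        rw [le_div_iff₀ hε0]
        calc a₀ * ε ≤ a₀ * (1 / a₀) := mul_le_mul_of_nonneg_left hεa₀ ha₀.le
          _ = 1 := by field_simp
      have hlow := taub_lower_split P V hVmeas hVnonneg (a := 1 / ε) (ε := ε)
        (by positivity)
      have h1ε : 1 / ε * ε = 1 := by field_simp
      have hLup := (hL (1 / ε) hA₀ε).2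
      have hrp : ((1:ℝ) / ε) ^ (-θ) = ε ^ θ := by
        rw [one_div, Real.inv_rpow hε0.le, Real.rpow_neg hε0.le, inv_inv]
      rw [h1ε] at hlow
      have : Real.exp (-1) * (P {ω | V ω ≤ ε}).toReal ≤ C * ε ^ θ := by
        rw [← hrp]; exact le_trans hlow hLup
      have hPnn : 0 ≤ (P {ω | V ω ≤ ε}).toReal := ENNReal.toReal_nonneg
      have hee : Real.exp (-1) * Real.exp 1 = 1 := by
        rw [← Real.exp_add]; norm_num
      have h2 : (P {ω | V ω ≤ ε}).toReal ≤ Real.exp 1 * (C * ε ^ θ) := by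
        nlinarith [Real.exp_pos (1:ℝ), Real.exp_pos (-1:ℝ), this]
      have hc2 : 0 ≤ c / 2 * t ^ (-θ) * ε ^ θ := by positivity
      nlinarith
  · -- distribution bounds ⇒ Laplace bounds
    rintro ⟨c', C', ε₀, hc', hcC', hε₀, hF⟩
    have hC' : 0 < C' := lt_of_lt_of_le hc' hcC'
    set s : ℝ := 2 * (θ + 1) with hs_def
    have hs : 0 < s := by positivity
    set B : ℝ := max 2 (2 * s / ε₀) with hB_def
    have hB2 : (2:ℝ) ≤ B := le_max_left _ _
    have hB : (0:ℝ) < B := by linarith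
    set K : ℝ := 2 * C' * s ^ θ + B ^ θ with hK_def
    have hsθ : (0:ℝ) < s ^ θ := Real.rpow_pos_of_pos hs θ
    have hBθ : (0:ℝ) < B ^ θ := Real.rpow_pos_of_pos hB θ
    have hK : 0 < K := by positivity
    have hexp_half : Real.exp (-(θ + 1)) * 2 ^ θ ≤ 1 / 2 := by
      have h2e : (2:ℝ) ≤ Real.exp 1 := by
        have := Real.exp_one_gt_d9; linarith
      have key : (2:ℝ) ^ (θ + 1) ≤ Real.exp (θ + 1) := by
        rw [← Real.exp_one_rpow (θ + 1)]
        exact Real.rpow_le_rpow (by norm_num) h2e (by linarith)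
      have h2θ : (2:ℝ) ^ (θ + 1) = 2 ^ θ * 2 := by
        rw [Real.rpow_add (by norm_num : (0:ℝ) < 2), Real.rpow_one]
      rw [Real.exp_neg]
      rw [h2θ] at key
      have hepos : (0:ℝ) < Real.exp (θ + 1) := Real.exp_pos _
      have h2θpos : (0:ℝ) < (2:ℝ) ^ θ := Real.rpow_pos_of_pos (by norm_num) θ
      rw [inv_mul_le_iff₀ hepos] -- (exp (θ+1))⁻¹ * 2^θ ≤ 1/2 ↔ 2^θ ≤ 1/2 * exp(θ+1)?
      nlinarith
    -- main inductive claim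
    have claim : ∀ n : ℕ, ∀ a : ℝ, 1 ≤ a → a ≤ B * 2 ^ n →
        (∫ ω, Real.exp (-(a * V ω)) ∂P) ≤ K * a ^ (-θ) := by
      intro n
      induction n with
      | zero =>
        intro a ha1 haB
        rw [pow_zero, mul_one] at haB
        have ha0 : (0:ℝ) < a := by linarith
        have htriv := taub_le_one P V hVmeas hVnonneg ha0.le
        have haθ : a ^ θ ≤ K := by
          calc a ^ θ ≤ B ^ θ := Real.rpow_le_rpow ha0.le haB hθ.le
            _ ≤ K := by rw [hK_def]; nlinarith
        have hrw : K * a ^ (-θ) = K / a ^ θ := by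
          rw [Real.rpow_neg ha0.le, div_eq_mul_inv]
        rw [hrw, le_div_iff₀ (Real.rpow_pos_of_pos ha0 θ)]
        calc (∫ ω, Real.exp (-(a * V ω)) ∂P) * a ^ θ ≤ 1 * a ^ θ := by
              apply mul_le_mul_of_nonneg_right htriv (Real.rpow_pos_of_pos ha0 θ).le
          _ = a ^ θ := one_mul _
          _ ≤ K := haθ
      | succ n ih =>
        intro a ha1 haB
        have ha0 : (0:ℝ) < a := by linarith
        by_cases hcase : a ≤ B * 2 ^ n
        · exact ih a ha1 hcase
        push_neg at hcase
        have haB' : B ≤ a := by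
          have h2n : (1:ℝ) ≤ 2 ^ n := one_le_pow₀ (by norm_num)
          calc B = B * 1 := (mul_one B).symm
            _ ≤ B * 2 ^ n := mul_le_mul_of_nonneg_left h2n hB.le
            _ ≤ a := hcase.le
        have ha2 : 1 ≤ a / 2 := by
          have : (2:ℝ) ≤ a := le_trans hB2 haB'
          linarith
        have ha2B : a / 2 ≤ B * 2 ^ n := by
          have : a ≤ B * 2 ^ (n + 1) := haB
          rw [pow_succ] at this
          linarith
        have hIH := ih (a / 2) ha2 ha2B
        -- the split
        have hεpos : 0 < s / a := by positivity
        have hεε₀ : s / a ≤ ε₀ := by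
          rw [div_le_iff₀ ha0]
          have h1 : 2 * s / ε₀ ≤ B := le_max_right _ _
          have h2 : 2 * s / ε₀ ≤ a := le_trans h1 haB'
          rw [div_le_iff₀ hε₀] at h2
          linarith [mul_comm a ε₀, hs]
        have hFs := (hF (s / a) ⟨hεpos, hεε₀⟩).2
        have hsplit := taub_upper_split P V hVmeas hVnonneg (a := a) (ε := s / a) ha0.le
        have haε : a * (s / a) = s := by field_simp
        have hse : a * (s / a) / 2 = θ + 1 := by
          rw [haε, hs_def]; ring
        rw [hse] at hsplit
        have hεrp : (s / a) ^ θ = s ^ θ * a ^ (-θ) := by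
          rw [Real.div_rpow hs.le ha0.le, Real.rpow_neg ha0.le, div_eq_mul_inv]
        have ha2rp : (a / 2) ^ (-θ) = 2 ^ θ * a ^ (-θ) := taub_half_rpow ha0 θ
        have haθpos : (0:ℝ) < a ^ (-θ) := Real.rpow_pos_of_pos ha0 _
        have h2 : Real.exp (-(θ + 1)) * (∫ ω, Real.exp (-(a / 2 * V ω)) ∂P)
            ≤ 1 / 2 * (K * a ^ (-θ)) := by
          calc Real.exp (-(θ + 1)) * (∫ ω, Real.exp (-(a / 2 * V ω)) ∂P)
              ≤ Real.exp (-(θ + 1)) * (K * (a / 2) ^ (-θ)) :=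
                mul_le_mul_of_nonneg_left hIH (Real.exp_pos _).le
            _ = (Real.exp (-(θ + 1)) * 2 ^ θ) * (K * a ^ (-θ)) := by rw [ha2rp]; ring
            _ ≤ 1 / 2 * (K * a ^ (-θ)) := by
                apply mul_le_mul_of_nonneg_right hexp_half (by positivity)
        have h1 : (P {ω | V ω ≤ s / a}).toReal ≤ C' * s ^ θ * a ^ (-θ) := by
          calc (P {ω | V ω ≤ s / a}).toReal ≤ C' * (s / a) ^ θ := hFs
            _ = C' * s ^ θ * a ^ (-θ) := by rw [hεrp]; ring
        have hKhalf : C' * s ^ θ ≤ K / 2 := by rw [hK_def]; linarith [hBθ]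
        calc (∫ ω, Real.exp (-(a * V ω)) ∂P)
            ≤ (P {ω | V ω ≤ s / a}).toReal
              + Real.exp (-(θ + 1)) * ∫ ω, Real.exp (-(a / 2 * V ω)) ∂P := hsplit
          _ ≤ C' * s ^ θ * a ^ (-θ) + 1 / 2 * (K * a ^ (-θ)) := by linarith
          _ ≤ K / 2 * a ^ (-θ) + 1 / 2 * (K * a ^ (-θ)) := by
              have := mul_le_mul_of_nonneg_right hKhalf haθpos.le
              linarith
          _ = K * a ^ (-θ) := by ring
    refine ⟨Real.exp (-1) * c', K + Real.exp (-1) * c', max 1 (1 / ε₀), ?_, ?_, ?_, ?_⟩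
    · positivity
    · linarith
    · positivity
    intro a haa₀
    have ha1 : (1:ℝ) ≤ a := le_trans (le_max_left _ _) haa₀
    have ha0 : (0:ℝ) < a := by linarith
    have haε₀ : 1 / ε₀ ≤ a := le_trans (le_max_right _ _) haa₀
    have haθpos : (0:ℝ) < a ^ (-θ) := Real.rpow_pos_of_pos ha0 _
    constructor
    · -- lower bound on L
      have h1a : (0:ℝ) < 1 / a := by positivity
      have h1aε₀ : 1 / a ≤ ε₀ := by
        rw [div_le_iff₀ ha0]
        rw [div_le_iff₀ hε₀] at haε₀
        nlinarith
      have hFlow := (hF (1 / a) ⟨h1a, h1aε₀⟩).1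
      have hlow := taub_lower_split P V hVmeas hVnonneg (a := a) (ε := 1 / a) ha0.le
      have h1 : a * (1 / a) = 1 := by field_simp
      rw [h1] at hlow
      have hrp : ((1:ℝ) / a) ^ θ = a ^ (-θ) := by
        rw [one_div, Real.rpow_neg ha0.le, ← Real.inv_rpow ha0.le]
      rw [hrp] at hFlow
      calc Real.exp (-1) * c' * a ^ (-θ)
          = Real.exp (-1) * (c' * a ^ (-θ)) := by ring
        _ ≤ Real.exp (-1) * (P {ω | V ω ≤ 1 / a}).toReal :=
            mul_le_mul_of_nonneg_left hFlow (Real.exp_pos _).le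
        _ ≤ ∫ ω, Real.exp (-(a * V ω)) ∂P := hlow
    · -- upper bound on L
      obtain ⟨n, hn⟩ := pow_unbounded_of_one_lt a (by norm_num : (1:ℝ) < 2)
      have haB : a ≤ B * 2 ^ n := by
        have h2n : (0:ℝ) ≤ 2 ^ n := by positivity
        calc a ≤ 2 ^ n := hn.le
          _ = 1 * 2 ^ n := (one_mul _).symm
          _ ≤ B * 2 ^ n := mul_le_mul_of_nonneg_right (by linarith) h2n
      have hcl : (∫ ω, Real.exp (-(a * V ω)) ∂P) ≤ K * a ^ (-θ) := claim n a ha1 haB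
      have h' : K * a ^ (-θ) ≤ (K + Real.exp (-1) * c') * a ^ (-θ) := by
        nlinarith [mul_pos (mul_pos (Real.exp_pos (-1:ℝ)) hc') haθpos]
      linarith
end
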